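/- arXiv:1305.3716 — 6 statements merged into one kernel-verified Lean document; each statement's English description precedes it below -/
import Mathlib

section
/- In the ring ℚ⟦X⟧ of formal power series over ℚ, let Z be the series whose coefficient of X^{2(k+1)} is b_k/((k+1)!·2^{k+1})^2 for each k ≥ 0 and whose other coefficients are 0, and let J₀ be the series whose coefficient of X^{2k} is (−1)^k/((k!)^2·4^k) for each k ≥ 0 and whose other coefficients are 0 (the Bessel function of order 0). Then (dZ/dX)·J₀ = −dJ₀/dX, where d/dX is the formal derivative. (Since Z has constant term 0 and J₀ has constant term 1, this identity expresses that Z = −log J₀.) -/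
/-- A non-ambiguous tree: a finite set of points of `ℕ × ℕ`. -/
def IsNAT (A : Finset (ℕ × ℕ)) : Prop :=
  (0, 0) ∈ A ∧
  (∀ p ∈ A, p ≠ (0, 0) →
    Xor' (∃ q ∈ A, q.1 = p.1 ∧ q.2 < p.2) (∃ r ∈ A, r.2 = p.2 ∧ r.1 < p.1)) ∧
  (∀ p ∈ A, (∀ x' < p.1, ∃ q ∈ A, q.1 = x') ∧ (∀ y' < p.2, ∃ q ∈ A, q.2 = y'))

/-- `q` has a left child in `A`. -/
def HasLeftChild (A : Finset (ℕ × ℕ)) (q : ℕ × ℕ) : Prop :=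
  ∃ p ∈ A, p.2 = q.2 ∧ q.1 < p.1

/-- `q` has a right child in `A`. -/
def HasRightChild (A : Finset (ℕ × ℕ)) (q : ℕ × ℕ) : Prop :=
  ∃ p ∈ A, p.1 = q.1 ∧ q.2 < p.2

/-- A non-ambiguous tree is complete when every point has either both a left and a
right child, or neither. -/
def IsCompleteNAT (A : Finset (ℕ × ℕ)) : Prop :=
  ∀ q ∈ A, (HasLeftChild A q ↔ HasRightChild A q)

/-- The number of internal vertices (points with two children). -/
noncomputable def numInternal (A : Finset (ℕ × ℕ)) : ℕ :=
  Set.ncard {q : ℕ × ℕ | q ∈ A ∧ HasLeftChild A q ∧ HasRightChild A q}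

/-- `b n` : the number of complete non-ambiguous trees with `n` internal vertices. -/
noncomputable def b (n : ℕ) : ℕ :=
  Set.ncard {A : Finset (ℕ × ℕ) | IsNAT A ∧ IsCompleteNAT A ∧ numInternal A = n}


open Finset

section PartA

open scoped Classical

lemma downclosed_eq_range (s : Finset ℕ) (h : ∀ y ∈ s, ∀ x, x < y → x ∈ s) :
    s = range s.card := by
  ext y
  simp only [mem_range]
  constructor
  · intro hy
    have hsub : range (y+1) ⊆ s := by
      intro x hx
      have hx' := mem_range.mp hx
      rcases Nat.lt_or_ge x y with h1 | h1
      · exact h y hy x h1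
      · have hxy : x = y := by omega
        rwa [hxy]
    have := card_le_card hsub
    rwa [card_range, Nat.succ_le_iff] at this
  · intro hy
    by_contra hns
    have hsub : s ⊆ range y := by
      intro z hz
      rcases Nat.lt_trichotomy z y with h1 | h1 | h1
      · exact mem_range.mpr h1
      · exact absurd (h1 ▸ hz) hns
      · exact absurd (h z hz y h1) hns
    have := card_le_card hsub
    rw [card_range] at this
    omega

/-- `p` is a left-type point: something to its left in its row. -/
def LTp (A : Finset (ℕ × ℕ)) (p : ℕ × ℕ) : Prop := ∃ r ∈ A, r.2 = p.2 ∧ r.1 < p.1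
/-- `p` is a right-type point: something above it in its column. -/
def RTp (A : Finset (ℕ × ℕ)) (p : ℕ × ℕ) : Prop := ∃ q ∈ A, q.1 = p.1 ∧ q.2 < p.2

lemma isnat_xor {A} (hA : IsNAT A) {p} (hp : p ∈ A) (hne : p ≠ (0,0)) :
    Xor' (RTp A p) (LTp A p) := hA.2.1 p hp hne

lemma lt_or_rt {A} (hA : IsNAT A) {p} (hp : p ∈ A) (hne : p ≠ (0,0)) :
    LTp A p ∨ RTp A p := by
  rcases isnat_xor hA hp hne with ⟨h, _⟩ | ⟨h, _⟩
  · exact Or.inr h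
  · exact Or.inl h

lemma lt_not_rt {A} (hA : IsNAT A) {p} (hp : p ∈ A) (hne : p ≠ (0,0)) (h : LTp A p) :
    ¬ RTp A p := by
  rcases isnat_xor hA hp hne with ⟨h1, h2⟩ | ⟨h1, h2⟩
  · exact absurd h h2
  · exact h2

lemma rt_not_lt {A} (hA : IsNAT A) {p} (hp : p ∈ A) (hne : p ≠ (0,0)) (h : RTp A p) :
    ¬ LTp A p := by
  rcases isnat_xor hA hp hne with ⟨h1, h2⟩ | ⟨h1, h2⟩
  · exact h2
  · exact absurd h h2

lemma ltp_x_pos {A : Finset (ℕ×ℕ)} {p} (h : LTp A p) : 0 < p.1 := by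
  obtain ⟨r, _, _, hr⟩ := h; omega

lemma rtp_y_pos {A : Finset (ℕ×ℕ)} {p} (h : RTp A p) : 0 < p.2 := by
  obtain ⟨q, _, _, hq⟩ := h; omega

lemma ne_root_of_x_pos {p : ℕ×ℕ} (h : 0 < p.1) : p ≠ (0,0) := by
  intro he; rw [he] at h; exact absurd h (by norm_num)

lemma ne_root_of_y_pos {p : ℕ×ℕ} (h : 0 < p.2) : p ≠ (0,0) := by
  intro he; rw [he] at h; exact absurd h (by norm_num)

lemma col0_rtp {A} (hA : IsNAT A) {p : ℕ×ℕ} (hx : p.1 = 0) (hne : p ≠ (0,0)) : RTp A p := by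
  refine ⟨(0,0), hA.1, by simp [hx], ?_⟩
  have h2 : p.2 ≠ 0 := fun h2 => hne (Prod.ext hx h2)
  exact Nat.pos_of_ne_zero h2

lemma row0_ltp {A} (hA : IsNAT A) {p : ℕ×ℕ} (hy : p.2 = 0) (hne : p ≠ (0,0)) : LTp A p := by
  refine ⟨(0,0), hA.1, by simp [hy], ?_⟩
  have h1 : p.1 ≠ 0 := fun h1 => hne (Prod.ext h1 hy)
  exact Nat.pos_of_ne_zero h1

lemma cols_eq_range {A} (hA : IsNAT A) :
    A.image Prod.fst = range (A.image Prod.fst).card := by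
  apply downclosed_eq_range
  intro y hy x hx
  obtain ⟨p, hp, hpy⟩ := mem_image.mp hy
  obtain ⟨q, hq, hqx⟩ := (hA.2.2 p hp).1 x (by omega)
  exact mem_image.mpr ⟨q, hq, hqx⟩

lemma rows_eq_range {A} (hA : IsNAT A) :
    A.image Prod.snd = range (A.image Prod.snd).card := by
  apply downclosed_eq_range
  intro y hy x hx
  obtain ⟨p, hp, hpy⟩ := mem_image.mp hy
  obtain ⟨q, hq, hqx⟩ := (hA.2.2 p hp).2 x (by omega)
  exact mem_image.mpr ⟨q, hq, hqx⟩

lemma card_filter_not_left {A : Finset (ℕ×ℕ)} :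
    (A.filter (fun q => ¬ HasLeftChild A q)).card = (A.image Prod.snd).card := by
  apply card_bij (fun q _ => q.2)
  · intro q hq
    simp only [mem_filter] at hq
    exact mem_image_of_mem _ hq.1
  · intro q hq q' hq' hqq
    simp only [mem_filter] at hq hq'
    by_contra hne
    rcases Nat.lt_trichotomy q.1 q'.1 with h | h | h
    · exact hq.2 ⟨q', hq'.1, hqq.symm, h⟩
    · exact hne (Prod.ext h hqq)
    · exact hq'.2 ⟨q, hq.1, hqq, h⟩
  · intro y hy
    obtain ⟨p, hp, hpy⟩ := mem_image.mp hy
    obtain ⟨m, hm, hmax⟩ := exists_max_image (A.filter fun q => q.2 = y) Prod.fst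
      ⟨p, mem_filter.mpr ⟨hp, hpy⟩⟩
    simp only [mem_filter] at hm
    refine ⟨m, mem_filter.mpr ⟨hm.1, ?_⟩, hm.2⟩
    rintro ⟨w, hw, hw2, hw1⟩
    exact absurd (hmax w (mem_filter.mpr ⟨hw, by rw [hw2, hm.2]⟩)) (by omega)

lemma card_filter_not_right {A : Finset (ℕ×ℕ)} :
    (A.filter (fun q => ¬ HasRightChild A q)).card = (A.image Prod.fst).card := by
  apply card_bij (fun q _ => q.1)
  · intro q hq
    simp only [mem_filter] at hq
    exact mem_image_of_mem _ hq.1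
  · intro q hq q' hq' hqq
    simp only [mem_filter] at hq hq'
    by_contra hne
    rcases Nat.lt_trichotomy q.2 q'.2 with h | h | h
    · exact hq.2 ⟨q', hq'.1, hqq.symm, h⟩
    · exact hne (Prod.ext hqq h)
    · exact hq'.2 ⟨q, hq.1, hqq, h⟩
  · intro x hx
    obtain ⟨p, hp, hpx⟩ := mem_image.mp hx
    obtain ⟨m, hm, hmax⟩ := exists_max_image (A.filter fun q => q.1 = x) Prod.snd
      ⟨p, mem_filter.mpr ⟨hp, hpx⟩⟩
    simp only [mem_filter] at hm
    refine ⟨m, mem_filter.mpr ⟨hm.1, ?_⟩, hm.2⟩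
    rintro ⟨w, hw, hw1, hw2⟩
    exact absurd (hmax w (mem_filter.mpr ⟨hw, by rw [hw1, hm.2]⟩)) (by omega)

lemma card_left_add {A : Finset (ℕ×ℕ)} :
    (A.filter (fun q => HasLeftChild A q)).card + (A.image Prod.snd).card = A.card := by
  rw [← card_filter_not_left]
  exact card_filter_add_card_filter_not _

lemma card_right_add {A : Finset (ℕ×ℕ)} :
    (A.filter (fun q => HasRightChild A q)).card + (A.image Prod.fst).card = A.card := by
  rw [← card_filter_not_right]
  exact card_filter_add_card_filter_not _

lemma numInternal_eq_card (A : Finset (ℕ×ℕ)) :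
    numInternal A = (A.filter (fun q => HasLeftChild A q ∧ HasRightChild A q)).card := by
  rw [numInternal, ← Set.ncard_coe_finset]
  congr 1
  ext q
  simp [Set.mem_setOf_eq]

lemma internal_filter_left {A} (hC : IsCompleteNAT A) :
    A.filter (fun q => HasLeftChild A q ∧ HasRightChild A q)
      = A.filter (fun q => HasLeftChild A q) := by
  apply filter_congr
  intro q hq
  exact ⟨fun h => h.1, fun h => ⟨h, (hC q hq).mp h⟩⟩

lemma internal_filter_right {A} (hC : IsCompleteNAT A) :
    A.filter (fun q => HasLeftChild A q ∧ HasRightChild A q)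
      = A.filter (fun q => HasRightChild A q) := by
  apply filter_congr
  intro q hq
  exact ⟨fun h => h.2, fun h => ⟨(hC q hq).mpr h, h⟩⟩

lemma card_filter_ltp {A} (hA : IsNAT A) :
    (A.filter (LTp A)).card = ((A.image Prod.fst).erase 0).card := by
  apply card_bij (fun p _ => p.1)
  · intro p hp
    simp only [mem_filter] at hp
    exact mem_erase.mpr ⟨(ltp_x_pos hp.2).ne', mem_image_of_mem _ hp.1⟩
  · intro p hp p' hp' hpp
    simp only [mem_filter] at hp hp'
    have hnr : ¬ RTp A p := fun hrt =>
      (rt_not_lt hA hp.1 (ne_root_of_x_pos (ltp_x_pos hp.2)) hrt) hp.2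
    have hnr' : ¬ RTp A p' := fun hrt =>
      (rt_not_lt hA hp'.1 (ne_root_of_x_pos (ltp_x_pos hp'.2)) hrt) hp'.2
    rcases Nat.lt_trichotomy p.2 p'.2 with h | h | h
    · exact absurd ⟨p, hp.1, hpp, h⟩ hnr'
    · exact Prod.ext hpp h
    · exact absurd ⟨p', hp'.1, hpp.symm, h⟩ hnr
  · intro x hx
    obtain ⟨hx0, hxim⟩ := mem_erase.mp hx
    obtain ⟨p, hp, hpx⟩ := mem_image.mp hxim
    obtain ⟨m, hm, hmin⟩ := exists_min_image (A.filter fun q => q.1 = x) Prod.snd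
      ⟨p, mem_filter.mpr ⟨hp, hpx⟩⟩
    simp only [mem_filter] at hm
    have hmne : m ≠ (0,0) := ne_root_of_x_pos (by rw [hm.2]; exact Nat.pos_of_ne_zero hx0)
    have hnr : ¬ RTp A m := by
      rintro ⟨q, hq, hq1, hq2⟩
      exact absurd (hmin q (mem_filter.mpr ⟨hq, by rw [hq1, hm.2]⟩)) (by omega)
    have hlt : LTp A m := (lt_or_rt hA hm.1 hmne).resolve_right hnr
    exact ⟨m, mem_filter.mpr ⟨hm.1, hlt⟩, hm.2⟩

lemma card_filter_rtp {A} (hA : IsNAT A) :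
    (A.filter (RTp A)).card = ((A.image Prod.snd).erase 0).card := by
  apply card_bij (fun p _ => p.2)
  · intro p hp
    simp only [mem_filter] at hp
    exact mem_erase.mpr ⟨(rtp_y_pos hp.2).ne', mem_image_of_mem _ hp.1⟩
  · intro p hp p' hp' hpp
    simp only [mem_filter] at hp hp'
    have hnr : ¬ LTp A p := fun hlt =>
      (lt_not_rt hA hp.1 (ne_root_of_y_pos (rtp_y_pos hp.2)) hlt) hp.2
    have hnr' : ¬ LTp A p' := fun hlt =>
      (lt_not_rt hA hp'.1 (ne_root_of_y_pos (rtp_y_pos hp'.2)) hlt) hp'.2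
    rcases Nat.lt_trichotomy p.1 p'.1 with h | h | h
    · exact absurd ⟨p, hp.1, hpp, h⟩ hnr'
    · exact Prod.ext h hpp
    · exact absurd ⟨p', hp'.1, hpp.symm, h⟩ hnr
  · intro y hy
    obtain ⟨hy0, hyim⟩ := mem_erase.mp hy
    obtain ⟨p, hp, hpy⟩ := mem_image.mp hyim
    obtain ⟨m, hm, hmin⟩ := exists_min_image (A.filter fun q => q.2 = y) Prod.fst
      ⟨p, mem_filter.mpr ⟨hp, hpy⟩⟩
    simp only [mem_filter] at hm
    have hmne : m ≠ (0,0) := ne_root_of_y_pos (by rw [hm.2]; exact Nat.pos_of_ne_zero hy0)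
    have hnl : ¬ LTp A m := by
      rintro ⟨q, hq, hq1, hq2⟩
      exact absurd (hmin q (mem_filter.mpr ⟨hq, by rw [hq1, hm.2]⟩)) (by omega)
    have hrt : RTp A m := (lt_or_rt hA hm.1 hmne).resolve_left hnl
    exact ⟨m, mem_filter.mpr ⟨hm.1, hrt⟩, hm.2⟩

lemma erase_root_eq {A} (hA : IsNAT A) :
    A.erase (0,0) = A.filter (LTp A) ∪ A.filter (RTp A) := by
  ext p
  simp only [mem_erase, mem_union, mem_filter]
  constructor
  · rintro ⟨hne, hp⟩
    rcases lt_or_rt hA hp hne with h | h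
    · exact Or.inl ⟨hp, h⟩
    · exact Or.inr ⟨hp, h⟩
  · rintro (⟨hp, h⟩ | ⟨hp, h⟩)
    · exact ⟨ne_root_of_x_pos (ltp_x_pos h), hp⟩
    · exact ⟨ne_root_of_y_pos (rtp_y_pos h), hp⟩

lemma disjoint_ltp_rtp {A} (hA : IsNAT A) :
    Disjoint (A.filter (LTp A)) (A.filter (RTp A)) := by
  rw [disjoint_left]
  intro p hp hp'
  simp only [mem_filter] at hp hp'
  exact (lt_not_rt hA hp.1 (ne_root_of_x_pos (ltp_x_pos hp.2)) hp.2) hp'.2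

lemma card_add_one {A} (hA : IsNAT A) :
    A.card + 1 = (A.image Prod.fst).card + (A.image Prod.snd).card := by
  have h1 : (A.erase (0,0)).card = A.card - 1 := card_erase_of_mem hA.1
  have h2 := erase_root_eq hA
  have h3 := card_union_of_disjoint (disjoint_ltp_rtp hA)
  rw [← h2, h1, card_filter_ltp hA, card_filter_rtp hA] at h3
  have hc1 : 1 ≤ A.card := card_pos.mpr ⟨_, hA.1⟩
  have hc2 : (0:ℕ) ∈ A.image Prod.fst := mem_image_of_mem _ hA.1
  have hc3 : (0:ℕ) ∈ A.image Prod.snd := mem_image_of_mem _ hA.1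
  have h4 : ((A.image Prod.fst).erase 0).card = (A.image Prod.fst).card - 1 :=
    card_erase_of_mem hc2
  have h5 : ((A.image Prod.snd).erase 0).card = (A.image Prod.snd).card - 1 :=
    card_erase_of_mem hc3
  have hc4 : 1 ≤ (A.image Prod.fst).card := card_pos.mpr ⟨_, hc2⟩
  have hc5 : 1 ≤ (A.image Prod.snd).card := card_pos.mpr ⟨_, hc3⟩
  omega

/-- The main structure theorem for complete NATs with `t` internal vertices. -/
lemma complete_struct {A : Finset (ℕ×ℕ)} {t : ℕ} (hA : IsNAT A) (hC : IsCompleteNAT A)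
    (ht : numInternal A = t) :
    A.card = 2*t+1 ∧ A.image Prod.fst = range (t+1) ∧ A.image Prod.snd = range (t+1) := by
  have h1 : numInternal A + (A.image Prod.snd).card = A.card := by
    rw [numInternal_eq_card, internal_filter_left hC]; exact card_left_add
  have h2 : numInternal A + (A.image Prod.fst).card = A.card := by
    rw [numInternal_eq_card, internal_filter_right hC]; exact card_right_add
  have h3 := card_add_one hA
  have hc2 : (0:ℕ) ∈ A.image Prod.fst := mem_image_of_mem _ hA.1
  have hc4 : 1 ≤ (A.image Prod.fst).card := card_pos.mpr ⟨_, hc2⟩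
  have hcard : A.card = 2*t+1 := by omega
  have hcc : (A.image Prod.fst).card = t+1 := by omega
  have hrc : (A.image Prod.snd).card = t+1 := by omega
  refine ⟨hcard, ?_, ?_⟩
  · rw [cols_eq_range hA, hcc]
  · rw [rows_eq_range hA, hrc]

end PartA
section Bzero
open Finset

lemma singleton_isNAT : IsNAT {((0:ℕ),(0:ℕ))} := by
  refine ⟨mem_singleton_self _, ?_, ?_⟩
  · intro p hp hne
    exact absurd (mem_singleton.mp hp) hne
  · intro p hp
    rw [mem_singleton.mp hp]
    exact ⟨fun x hx => by omega, fun y hy => by omega⟩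

lemma singleton_isComplete : IsCompleteNAT {((0:ℕ),(0:ℕ))} := by
  intro q hq
  rw [mem_singleton.mp hq]
  constructor
  · rintro ⟨p, hp, h1, h2⟩
    rw [mem_singleton.mp hp] at h2
    omega
  · rintro ⟨p, hp, h1, h2⟩
    rw [mem_singleton.mp hp] at h2
    omega

lemma singleton_numInternal : numInternal {((0:ℕ),(0:ℕ))} = 0 := by
  classical
  rw [numInternal_eq_card]
  rw [Finset.card_eq_zero]
  ext q
  simp only [mem_filter, mem_singleton, Finset.notMem_empty, iff_false]
  rintro ⟨rfl, ⟨p, hp, h1, h2⟩, -⟩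
  rw [mem_singleton.mp hp] at h2
  omega

lemma b_zero : b 0 = 1 := by
  have hset : {A : Finset (ℕ × ℕ) | IsNAT A ∧ IsCompleteNAT A ∧ numInternal A = 0}
      = {({((0:ℕ),(0:ℕ))} : Finset (ℕ×ℕ))} := by
    ext A
    simp only [Set.mem_setOf_eq, Set.mem_singleton_iff]
    constructor
    · rintro ⟨hA, hC, ht⟩
      have h1 := (complete_struct hA hC ht).1
      norm_num at h1
      obtain ⟨a, ha⟩ := Finset.card_eq_one.mp h1
      have : (0,0) ∈ A := hA.1
      rw [ha, mem_singleton] at this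
      rw [ha, this]
    · rintro rfl
      exact ⟨singleton_isNAT, singleton_isComplete, singleton_numInternal⟩
  rw [b, hset, Set.ncard_singleton]

end Bzero
section Branch
open Finset
open scoped Classical

noncomputable def rowMinX (A : Finset (ℕ×ℕ)) (y : ℕ) : ℕ := sInf {x | (x, y) ∈ A}
noncomputable def colMinY (A : Finset (ℕ×ℕ)) (x : ℕ) : ℕ := sInf {y | (x, y) ∈ A}

lemma rowMinX_mem {A : Finset (ℕ×ℕ)} {p : ℕ×ℕ} (hp : p ∈ A) :
    (rowMinX A p.2, p.2) ∈ A := by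
  have hne : {x | (x, p.2) ∈ A}.Nonempty := ⟨p.1, by show (p.1, p.2) ∈ A; rwa [Prod.mk.eta]⟩
  exact Nat.sInf_mem hne

lemma rowMinX_le {A : Finset (ℕ×ℕ)} {x y : ℕ} (h : (x, y) ∈ A) : rowMinX A y ≤ x :=
  Nat.sInf_le h

lemma colMinY_mem {A : Finset (ℕ×ℕ)} {p : ℕ×ℕ} (hp : p ∈ A) :
    (p.1, colMinY A p.1) ∈ A := by
  have hne : {y | (p.1, y) ∈ A}.Nonempty := ⟨p.2, by show (p.1, p.2) ∈ A; rwa [Prod.mk.eta]⟩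
  exact Nat.sInf_mem hne

lemma colMinY_le {A : Finset (ℕ×ℕ)} {x y : ℕ} (h : (x, y) ∈ A) : colMinY A x ≤ y :=
  Nat.sInf_le h

noncomputable def branchAux (A : Finset (ℕ×ℕ)) : ℕ → ℕ×ℕ → Bool
  | 0, _ => true
  | (n+1), p =>
    if p.2 = 0 then true
    else if p.1 = 0 then false
    else if LTp A p then branchAux A n (rowMinX A p.2, p.2)
    else branchAux A n (p.1, colMinY A p.1)

noncomputable def branch (A : Finset (ℕ×ℕ)) (p : ℕ×ℕ) : Bool := branchAux A (p.1+p.2) p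

lemma branchAux_y0 {A : Finset (ℕ×ℕ)} {p : ℕ×ℕ} (hy : p.2 = 0) (n : ℕ) :
    branchAux A n p = true := by
  cases n with
  | zero => rfl
  | succ n => rw [branchAux, if_pos hy]

lemma branchAux_fuel_eq {A} (hA : IsNAT A) :
    ∀ k p n m, p ∈ A → p.1+p.2 ≤ k → p.1+p.2 ≤ n → p.1+p.2 ≤ m →
      branchAux A n p = branchAux A m p := by
  intro k
  induction k with
  | zero =>
      intro p n m hp hk hn hm
      have hy : p.2 = 0 := by omega
      rw [branchAux_y0 hy, branchAux_y0 hy]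
  | succ k ih =>
      intro p n m hp hk hn hm
      by_cases hy : p.2 = 0
      · rw [branchAux_y0 hy, branchAux_y0 hy]
      · obtain ⟨n1, rfl⟩ : ∃ n1, n = n1 + 1 := ⟨n-1, by omega⟩
        obtain ⟨m1, rfl⟩ : ∃ m1, m = m1 + 1 := ⟨m-1, by omega⟩
        rw [branchAux, branchAux, if_neg hy, if_neg hy]
        by_cases hx : p.1 = 0
        · rw [if_pos hx, if_pos hx]
        · rw [if_neg hx, if_neg hx]
          by_cases hl : LTp A p
          · rw [if_pos hl, if_pos hl]
            obtain ⟨r, hr, hr2, hr1⟩ := hl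
            have hq : (rowMinX A p.2, p.2) ∈ A := rowMinX_mem hp
            have hqlt : rowMinX A p.2 < p.1 := by
              have := rowMinX_le (show (r.1, p.2) ∈ A by rw [← hr2, Prod.mk.eta]; exact hr)
              omega
            exact ih _ n1 m1 hq (by simp; omega) (by simp; omega) (by simp; omega)
          · rw [if_neg hl, if_neg hl]
            have hrt : RTp A p := (lt_or_rt hA hp (ne_root_of_y_pos (by omega))).resolve_left hl
            obtain ⟨r, hr, hr1, hr2⟩ := hrt
            have hq : (p.1, colMinY A p.1) ∈ A := colMinY_mem hp
            have hqlt : colMinY A p.1 < p.2 := by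
              have := colMinY_le (show (p.1, r.2) ∈ A by rw [← hr1, Prod.mk.eta]; exact hr)
              omega
            exact ih _ n1 m1 hq (by simp; omega) (by simp; omega) (by simp; omega)

lemma branchAux_eq_branch {A} (hA : IsNAT A) {p} (hp : p ∈ A) {n} (hn : p.1+p.2 ≤ n) :
    branchAux A n p = branch A p :=
  branchAux_fuel_eq hA n p n (p.1+p.2) hp hn hn le_rfl

lemma branch_y0 {A : Finset (ℕ×ℕ)} {p : ℕ×ℕ} (hy : p.2 = 0) : branch A p = true :=
  branchAux_y0 hy _

lemma branch_x0 {A : Finset (ℕ×ℕ)} {p : ℕ×ℕ} (hy : p.2 ≠ 0) (hx : p.1 = 0) :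
    branch A p = false := by
  rw [branch]
  obtain ⟨s, hs⟩ : ∃ s, p.1 + p.2 = s + 1 := ⟨p.1+p.2-1, by omega⟩
  rw [hs, branchAux, if_neg hy, if_pos hx]

lemma branch_lt {A} (hA : IsNAT A) {p} (hp : p ∈ A) (hy : p.2 ≠ 0) (hl : LTp A p) :
    branch A p = branch A (rowMinX A p.2, p.2) := by
  rw [branch]
  obtain ⟨s, hs⟩ : ∃ s, p.1 + p.2 = s + 1 := ⟨p.1+p.2-1, by omega⟩
  rw [hs, branchAux, if_neg hy, if_neg (ltp_x_pos hl).ne', if_pos hl]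
  apply branchAux_eq_branch hA (rowMinX_mem hp)
  obtain ⟨r, hr, hr2, hr1⟩ := hl
  have := rowMinX_le (show (r.1, p.2) ∈ A by rw [← hr2, Prod.mk.eta]; exact hr)
  simp
  omega

lemma branch_rt {A} (hA : IsNAT A) {p} (hp : p ∈ A) (hy : p.2 ≠ 0) (hx : p.1 ≠ 0)
    (hnl : ¬ LTp A p) :
    branch A p = branch A (p.1, colMinY A p.1) := by
  rw [branch]
  obtain ⟨s, hs⟩ : ∃ s, p.1 + p.2 = s + 1 := ⟨p.1+p.2-1, by omega⟩
  rw [hs, branchAux, if_neg hy, if_neg hx, if_neg hnl]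
  apply branchAux_eq_branch hA (colMinY_mem hp)
  have hrt : RTp A p := (lt_or_rt hA hp (ne_root_of_y_pos (by omega))).resolve_left hnl
  obtain ⟨r, hr, hr1, hr2⟩ := hrt
  have := colMinY_le (show (p.1, r.2) ∈ A by rw [← hr1, Prod.mk.eta]; exact hr)
  simp
  omega

/-- All points of a (nonzero) row have the same branch. -/
lemma branch_row_const {A} (hA : IsNAT A) {p q : ℕ×ℕ} (hp : p ∈ A) (hq : q ∈ A)
    (hy : p.2 = q.2) (hy0 : p.2 ≠ 0) : branch A p = branch A q := by
  have key : ∀ r : ℕ×ℕ, r ∈ A → r.2 = p.2 → branch A r = branch A (rowMinX A p.2, p.2) := by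
    intro r hr hr2
    by_cases he : r = (rowMinX A p.2, p.2)
    · rw [he]
    · have hle : rowMinX A p.2 ≤ r.1 := rowMinX_le (by rw [← hr2, Prod.mk.eta]; exact hr)
      have hlt : rowMinX A p.2 < r.1 := by
        rcases Nat.lt_or_ge (rowMinX A p.2) r.1 with h | h
        · exact h
        · exfalso; apply he
          have h2 : rowMinX A p.2 = r.1 := by omega
          rw [h2, ← hr2, Prod.mk.eta]
      have hm : (rowMinX A p.2, p.2) ∈ A := by rw [← hr2]; exact rowMinX_mem hr
      have hl : LTp A r := ⟨(rowMinX A p.2, p.2), hm, by simp [hr2], hlt⟩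
      rw [branch_lt hA hr (by omega) hl, hr2]
  rw [key p hp rfl, key q hq hy.symm, hy]

/-- All points of a (nonzero) column have the same branch. -/
lemma branch_col_const {A} (hA : IsNAT A) {p q : ℕ×ℕ} (hp : p ∈ A) (hq : q ∈ A)
    (hx : p.1 = q.1) (hx0 : p.1 ≠ 0) : branch A p = branch A q := by
  have key : ∀ r : ℕ×ℕ, r ∈ A → r.1 = p.1 → branch A r = branch A (p.1, colMinY A p.1) := by
    intro r hr hr1
    by_cases he : r = (p.1, colMinY A p.1)
    · rw [he]
    · have hle : colMinY A p.1 ≤ r.2 := colMinY_le (by rw [← hr1, Prod.mk.eta]; exact hr)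
      have hlt : colMinY A p.1 < r.2 := by
        rcases Nat.lt_or_ge (colMinY A p.1) r.2 with h | h
        · exact h
        · exfalso; apply he
          have h2 : colMinY A p.1 = r.2 := by omega
          rw [h2, ← hr1, Prod.mk.eta]
      have hm : (p.1, colMinY A p.1) ∈ A := by rw [← hr1]; exact colMinY_mem hr
      have hrt : RTp A r := ⟨(p.1, colMinY A p.1), hm, by simp [hr1], hlt⟩
      have hnl : ¬ LTp A r :=
        rt_not_lt hA hr (ne_root_of_y_pos (rtp_y_pos hrt)) hrt
      rw [branch_rt hA hr (by have := rtp_y_pos hrt; omega) (by omega) hnl, hr1]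
  rw [key p hp rfl, key q hq hx.symm]

/-- Closure lemma: a subset avoiding column 0 and closed under row/column sharing
is entirely on the `true` branch. -/
lemma branch_true_of_closed {A} (hA : IsNAT A) (P : Finset (ℕ×ℕ)) (hPA : P ⊆ A)
    (hx0 : ∀ p ∈ P, p.1 ≠ 0)
    (hclosed : ∀ p ∈ P, ∀ q ∈ A, q ≠ (0,0) → (q.2 = p.2 ∨ q.1 = p.1) → q ∈ P) :
    ∀ p ∈ P, branch A p = true := by
  have main : ∀ k, ∀ p ∈ P, p.1 + p.2 ≤ k → branch A p = true := by
    intro k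
    induction k with
    | zero =>
        intro p hp hk
        exact branch_y0 (by omega)
    | succ k ih =>
        intro p hp hk
        by_cases hy : p.2 = 0
        · exact branch_y0 hy
        · have hpA := hPA hp
          by_cases hl : LTp A p
          · rw [branch_lt hA hpA hy hl]
            have hq : (rowMinX A p.2, p.2) ∈ A := rowMinX_mem hpA
            have hqP : (rowMinX A p.2, p.2) ∈ P :=
              hclosed p hp _ hq (ne_root_of_y_pos (by simpa using Nat.pos_of_ne_zero hy))
                (Or.inl rfl)
            obtain ⟨r, hr, hr2, hr1⟩ := hl
            have := rowMinX_le (show (r.1, p.2) ∈ A by rw [← hr2, Prod.mk.eta]; exact hr)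
            exact ih _ hqP (by simp; omega)
          · rw [branch_rt hA hpA hy (hx0 p hp) hl]
            have hq : (p.1, colMinY A p.1) ∈ A := colMinY_mem hpA
            have hqP : (p.1, colMinY A p.1) ∈ P :=
              hclosed p hp _ hq (ne_root_of_x_pos (by simpa using Nat.pos_of_ne_zero (hx0 p hp)))
                (Or.inr rfl)
            have hrt : RTp A p := (lt_or_rt hA hpA (ne_root_of_y_pos (by omega))).resolve_left hl
            obtain ⟨r, hr, hr1, hr2⟩ := hrt
            have := colMinY_le (show (p.1, r.2) ∈ A by rw [← hr1, Prod.mk.eta]; exact hr)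
            exact ih _ hqP (by simp; omega)
  exact fun p hp => main (p.1+p.2) p hp le_rfl

/-- Closure lemma: a subset avoiding row 0 and closed under row/column sharing
is entirely on the `false` branch. -/
lemma branch_false_of_closed {A} (hA : IsNAT A) (P : Finset (ℕ×ℕ)) (hPA : P ⊆ A)
    (hy0 : ∀ p ∈ P, p.2 ≠ 0)
    (hclosed : ∀ p ∈ P, ∀ q ∈ A, q ≠ (0,0) → (q.2 = p.2 ∨ q.1 = p.1) → q ∈ P) :
    ∀ p ∈ P, branch A p = false := by
  have main : ∀ k, ∀ p ∈ P, p.1 + p.2 ≤ k → branch A p = false := by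
    intro k
    induction k with
    | zero =>
        intro p hp hk
        exact absurd (by omega : p.2 = 0) (hy0 p hp)
    | succ k ih =>
        intro p hp hk
        have hy := hy0 p hp
        have hpA := hPA hp
        by_cases hx : p.1 = 0
        · exact branch_x0 hy hx
        · by_cases hl : LTp A p
          · rw [branch_lt hA hpA hy hl]
            have hq : (rowMinX A p.2, p.2) ∈ A := rowMinX_mem hpA
            have hqP : (rowMinX A p.2, p.2) ∈ P :=
              hclosed p hp _ hq (ne_root_of_y_pos (by simpa using Nat.pos_of_ne_zero hy))
                (Or.inl rfl)
            obtain ⟨r, hr, hr2, hr1⟩ := hl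
            have := rowMinX_le (show (r.1, p.2) ∈ A by rw [← hr2, Prod.mk.eta]; exact hr)
            exact ih _ hqP (by simp; omega)
          · rw [branch_rt hA hpA hy hx hl]
            have hq : (p.1, colMinY A p.1) ∈ A := colMinY_mem hpA
            have hqP : (p.1, colMinY A p.1) ∈ P :=
              hclosed p hp _ hq (ne_root_of_x_pos (by simpa using Nat.pos_of_ne_zero hx))
                (Or.inr rfl)
            have hrt : RTp A p := (lt_or_rt hA hpA (ne_root_of_y_pos (by omega))).resolve_left hl
            obtain ⟨r, hr, hr1, hr2⟩ := hrt
            have := colMinY_le (show (p.1, r.2) ∈ A by rw [← hr1, Prod.mk.eta]; exact hr)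
            exact ih _ hqP (by simp; omega)
  exact fun p hp => main (p.1+p.2) p hp le_rfl

end Branch
section IdxNth
open Finset
open scoped Classical

/-- rank of `x` inside the finite set `s`. -/
noncomputable def idx (s : Finset ℕ) (x : ℕ) : ℕ := (s.filter (fun z => z < x)).card
/-- the `i`-th smallest element of `s`. -/
noncomputable def nth (s : Finset ℕ) (i : ℕ) : ℕ := sInf {x | x ∈ s ∧ idx s x = i}

lemma idx_strict (s : Finset ℕ) {x y : ℕ} (hx : x ∈ s) (h : x < y) : idx s x < idx s y := by
  apply card_lt_card
  have hsub : s.filter (fun z => z < x) ⊆ s.filter (fun z => z < y) := by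
    intro z hz
    simp only [mem_filter] at hz ⊢
    exact ⟨hz.1, by omega⟩
  rw [ssubset_iff_of_subset hsub]
  exact ⟨x, mem_filter.mpr ⟨hx, h⟩, fun hc => absurd (mem_filter.mp hc).2 (lt_irrefl x)⟩

lemma idx_lt_iff (s : Finset ℕ) {x y : ℕ} (hx : x ∈ s) (hy : y ∈ s) :
    idx s x < idx s y ↔ x < y := by
  constructor
  · intro h
    by_contra hc
    rcases Nat.lt_or_ge y x with h1 | h1
    · exact absurd (idx_strict s hy h1) (by omega)
    · have hxy : x = y := by omega
      rw [hxy] at h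
      exact lt_irrefl _ h
  · exact idx_strict s hx
lemma idx_eq_iff (s : Finset ℕ) {x y : ℕ} (hx : x ∈ s) (hy : y ∈ s) :
    idx s x = idx s y ↔ x = y := by
  constructor
  · intro h
    rcases Nat.lt_trichotomy x y with h1 | h1 | h1
    · exact absurd (idx_strict s hx h1) (by omega)
    · exact h1
    · exact absurd (idx_strict s hy h1) (by omega)
  · intro h; rw [h]

lemma idx_lt_card (s : Finset ℕ) {x : ℕ} (hx : x ∈ s) : idx s x < s.card := by
  apply card_lt_card
  rw [ssubset_iff_of_subset (filter_subset _ _)]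
  exact ⟨x, hx, fun hc => absurd (mem_filter.mp hc).2 (lt_irrefl x)⟩

lemma image_idx (s : Finset ℕ) : s.image (idx s) = range s.card := by
  apply eq_of_subset_of_card_le
  · intro i hi
    obtain ⟨x, hx, rfl⟩ := mem_image.mp hi
    exact mem_range.mpr (idx_lt_card s hx)
  · rw [card_range, card_image_of_injOn (fun x hx y hy h => (idx_eq_iff s hx hy).mp h)]

lemma exists_idx_eq (s : Finset ℕ) {i : ℕ} (hi : i < s.card) : ∃ x ∈ s, idx s x = i := by
  have : i ∈ s.image (idx s) := by rw [image_idx]; exact mem_range.mpr hi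
  exact mem_image.mp this

lemma nth_spec (s : Finset ℕ) {i : ℕ} (hi : i < s.card) :
    nth s i ∈ s ∧ idx s (nth s i) = i := by
  obtain ⟨x, hx, hxi⟩ := exists_idx_eq s hi
  exact Nat.sInf_mem (⟨x, hx, hxi⟩ : {x | x ∈ s ∧ idx s x = i}.Nonempty)

lemma nth_mem (s : Finset ℕ) {i : ℕ} (hi : i < s.card) : nth s i ∈ s := (nth_spec s hi).1
lemma idx_nth (s : Finset ℕ) {i : ℕ} (hi : i < s.card) : idx s (nth s i) = i := (nth_spec s hi).2

lemma nth_idx (s : Finset ℕ) {x : ℕ} (hx : x ∈ s) : nth s (idx s x) = x := by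
  have h1 := nth_spec s (idx_lt_card s hx)
  exact (idx_eq_iff s h1.1 hx).mp h1.2

lemma image_nth (s : Finset ℕ) : (range s.card).image (nth s) = s := by
  apply Finset.Subset.antisymm
  · intro x hx
    obtain ⟨i, hi, rfl⟩ := mem_image.mp hx
    exact nth_mem s (mem_range.mp hi)
  · intro x hx
    exact mem_image.mpr ⟨idx s x, mem_range.mpr (idx_lt_card s hx), nth_idx s hx⟩

lemma nth_lt_iff (s : Finset ℕ) {i j : ℕ} (hi : i < s.card) (hj : j < s.card) :
    nth s i < nth s j ↔ i < j := by
  rw [← idx_lt_iff s (nth_mem s hi) (nth_mem s hj), idx_nth s hi, idx_nth s hj]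

lemma nth_eq_iff (s : Finset ℕ) {i j : ℕ} (hi : i < s.card) (hj : j < s.card) :
    nth s i = nth s j ↔ i = j := by
  rw [← idx_eq_iff s (nth_mem s hi) (nth_mem s hj), idx_nth s hi, idx_nth s hj]

end IdxNth

section GridIso
open Finset
open scoped Classical

variable {D : Finset (ℕ×ℕ)} {f : ℕ×ℕ → ℕ×ℕ}

/-- `f` is a grid isomorphism on `D`. -/
def GridIso (D : Finset (ℕ×ℕ)) (f : ℕ×ℕ → ℕ×ℕ) : Prop :=
  (∀ p ∈ D, ∀ q ∈ D, ((f p).1 = (f q).1 ↔ p.1 = q.1)) ∧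
  (∀ p ∈ D, ∀ q ∈ D, ((f p).1 < (f q).1 ↔ p.1 < q.1)) ∧
  (∀ p ∈ D, ∀ q ∈ D, ((f p).2 = (f q).2 ↔ p.2 = q.2)) ∧
  (∀ p ∈ D, ∀ q ∈ D, ((f p).2 < (f q).2 ↔ p.2 < q.2))

lemma GridIso.injOn (h : GridIso D f) : ∀ p ∈ D, ∀ q ∈ D, f p = f q → p = q := by
  intro p hp q hq he
  exact Prod.ext ((h.1 p hp q hq).mp (by rw [he])) ((h.2.2.1 p hp q hq).mp (by rw [he]))

lemma GridIso.ltp_iff (h : GridIso D f) {p} (hp : p ∈ D) :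
    LTp (D.image f) (f p) ↔ LTp D p := by
  constructor
  · rintro ⟨r', hr', h2, h1⟩
    obtain ⟨r, hr, rfl⟩ := mem_image.mp hr'
    exact ⟨r, hr, (h.2.2.1 r hr p hp).mp h2, (h.2.1 r hr p hp).mp h1⟩
  · rintro ⟨r, hr, h2, h1⟩
    exact ⟨f r, mem_image_of_mem f hr, (h.2.2.1 r hr p hp).mpr h2, (h.2.1 r hr p hp).mpr h1⟩

lemma GridIso.rtp_iff (h : GridIso D f) {p} (hp : p ∈ D) :
    RTp (D.image f) (f p) ↔ RTp D p := by
  constructor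
  · rintro ⟨r', hr', h1, h2⟩
    obtain ⟨r, hr, rfl⟩ := mem_image.mp hr'
    exact ⟨r, hr, (h.1 r hr p hp).mp h1, (h.2.2.2 r hr p hp).mp h2⟩
  · rintro ⟨r, hr, h1, h2⟩
    exact ⟨f r, mem_image_of_mem f hr, (h.1 r hr p hp).mpr h1, (h.2.2.2 r hr p hp).mpr h2⟩

lemma GridIso.hasLeft_iff (h : GridIso D f) {p} (hp : p ∈ D) :
    HasLeftChild (D.image f) (f p) ↔ HasLeftChild D p := by
  constructor
  · rintro ⟨r', hr', h2, h1⟩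
    obtain ⟨r, hr, rfl⟩ := mem_image.mp hr'
    exact ⟨r, hr, (h.2.2.1 r hr p hp).mp h2, (h.2.1 p hp r hr).mp h1⟩
  · rintro ⟨r, hr, h2, h1⟩
    exact ⟨f r, mem_image_of_mem f hr, (h.2.2.1 r hr p hp).mpr h2, (h.2.1 p hp r hr).mpr h1⟩

lemma GridIso.hasRight_iff (h : GridIso D f) {p} (hp : p ∈ D) :
    HasRightChild (D.image f) (f p) ↔ HasRightChild D p := by
  constructor
  · rintro ⟨r', hr', h1, h2⟩
    obtain ⟨r, hr, rfl⟩ := mem_image.mp hr'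
    exact ⟨r, hr, (h.1 r hr p hp).mp h1, (h.2.2.2 p hp r hr).mp h2⟩
  · rintro ⟨r, hr, h1, h2⟩
    exact ⟨f r, mem_image_of_mem f hr, (h.1 r hr p hp).mpr h1, (h.2.2.2 p hp r hr).mpr h2⟩

/-- Relative conditions making a finite point set an NAT after renormalization. -/
def RelNAT (D : Finset (ℕ×ℕ)) : Prop :=
  (∃ c ∈ D, (∀ p ∈ D, c.1 ≤ p.1 ∧ c.2 ≤ p.2) ∧
    (∀ p ∈ D, p ≠ c → Xor' (RTp D p) (LTp D p)))

lemma GridIso.isNAT_image (h : GridIso D f) (hrel : RelNAT D)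
    {k₁ k₂ : ℕ}
    (hc1 : (D.image f).image Prod.fst = range k₁)
    (hc2 : (D.image f).image Prod.snd = range k₂) :
    IsNAT (D.image f) := by
  obtain ⟨c, hc, hmin, hxor⟩ := hrel
  -- the image of the corner is the origin
  have hfc : f c = (0, 0) := by
    have h0x : (0:ℕ) ∈ (D.image f).image Prod.fst := by
      rw [hc1]
      refine mem_range.mpr (Nat.pos_of_ne_zero ?_)
      intro hk
      rw [hk, range_zero, image_eq_empty, image_eq_empty] at hc1
      exact absurd hc (by rw [hc1]; exact notMem_empty c)
    have h0y : (0:ℕ) ∈ (D.image f).image Prod.snd := by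
      rw [hc2]
      refine mem_range.mpr (Nat.pos_of_ne_zero ?_)
      intro hk
      rw [hk, range_zero, image_eq_empty, image_eq_empty] at hc2
      exact absurd hc (by rw [hc2]; exact notMem_empty c)
    obtain ⟨p', hp', hp1⟩ := mem_image.mp h0x
    obtain ⟨p, hp, rfl⟩ := mem_image.mp hp'
    obtain ⟨q', hq', hq2⟩ := mem_image.mp h0y
    obtain ⟨q, hq, rfl⟩ := mem_image.mp hq'
    have hx : (f c).1 = 0 := by
      have : ¬ ((f p).1 < (f c).1) := by
        rw [h.2.1 p hp c hc]
        exact fun hlt => absurd (hmin p hp).1 (by omega)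
      omega
    have hy : (f c).2 = 0 := by
      have : ¬ ((f q).2 < (f c).2) := by
        rw [h.2.2.2 q hq c hc]
        exact fun hlt => absurd (hmin q hq).2 (by omega)
      omega
    exact Prod.ext hx hy
  refine ⟨by rw [← hfc]; exact mem_image_of_mem f hc, ?_, ?_⟩
  · intro p' hp' hne
    obtain ⟨p, hp, rfl⟩ := mem_image.mp hp'
    have hpc : p ≠ c := fun he => hne (by rw [he, hfc])
    rcases hxor p hp hpc with ⟨h1, h2⟩ | ⟨h1, h2⟩
    · exact Or.inl ⟨(h.rtp_iff hp).mpr h1, fun hl => h2 ((h.ltp_iff hp).mp hl)⟩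
    · exact Or.inr ⟨(h.ltp_iff hp).mpr h1, fun hr => h2 ((h.rtp_iff hp).mp hr)⟩
  · intro p' hp'
    constructor
    · intro x' hx'
      have : p'.1 ∈ range k₁ := by rw [← hc1]; exact mem_image_of_mem _ hp'
      have : x' ∈ (D.image f).image Prod.fst := by
        rw [hc1]; exact mem_range.mpr (by have := mem_range.mp this; omega)
      obtain ⟨q', hq', hq1⟩ := mem_image.mp this
      exact ⟨q', hq', hq1⟩
    · intro y' hy'
      have : p'.2 ∈ range k₂ := by rw [← hc2]; exact mem_image_of_mem _ hp'
      have : y' ∈ (D.image f).image Prod.snd := by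
        rw [hc2]; exact mem_range.mpr (by have := mem_range.mp this; omega)
      obtain ⟨q', hq', hq2⟩ := mem_image.mp this
      exact ⟨q', hq', hq2⟩

lemma GridIso.isComplete_image (h : GridIso D f)
    (hcom : ∀ p ∈ D, (HasLeftChild D p ↔ HasRightChild D p)) :
    IsCompleteNAT (D.image f) := by
  intro q' hq'
  obtain ⟨q, hq, rfl⟩ := mem_image.mp hq'
  rw [h.hasLeft_iff hq, h.hasRight_iff hq]
  exact hcom q hq

end GridIso
section Split
open Finset
open scoped Classical

noncomputable def Lset (A : Finset (ℕ×ℕ)) : Finset (ℕ×ℕ) :=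
  A.filter (fun p => p ≠ (0,0) ∧ branch A p = true)
noncomputable def Rset (A : Finset (ℕ×ℕ)) : Finset (ℕ×ℕ) :=
  A.filter (fun p => p ≠ (0,0) ∧ branch A p = false)

lemma lset_subset {A} : Lset A ⊆ A := filter_subset _ _
lemma rset_subset {A} : Rset A ⊆ A := filter_subset _ _

lemma lset_ne_root {A p} (hp : p ∈ Lset A) : p ≠ (0,0) := (mem_filter.mp hp).2.1
lemma rset_ne_root {A p} (hp : p ∈ Rset A) : p ≠ (0,0) := (mem_filter.mp hp).2.1

lemma mem_partition {A : Finset (ℕ×ℕ)} {p} (hp : p ∈ A) :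
    p = (0,0) ∨ p ∈ Lset A ∨ p ∈ Rset A := by
  by_cases hr : p = (0,0)
  · exact Or.inl hr
  · cases hb : branch A p
    · exact Or.inr (Or.inr (mem_filter.mpr ⟨hp, hr, hb⟩))
    · exact Or.inr (Or.inl (mem_filter.mpr ⟨hp, hr, hb⟩))

lemma lset_rset_disjoint {A : Finset (ℕ×ℕ)} {p} (hp : p ∈ Lset A) (hq : p ∈ Rset A) : False := by
  have h1 := (mem_filter.mp hp).2.2
  have h2 := (mem_filter.mp hq).2.2
  rw [h1] at h2
  simp at h2

lemma lset_x_ne {A p} (hp : p ∈ Lset A) : p.1 ≠ 0 := by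
  obtain ⟨hpA, hne, hb⟩ := mem_filter.mp hp
  intro hx
  have hy : p.2 ≠ 0 := fun hy => hne (Prod.ext hx hy)
  rw [branch_x0 hy hx] at hb
  simp at hb

lemma rset_y_ne {A p} (hp : p ∈ Rset A) : p.2 ≠ 0 := by
  obtain ⟨hpA, hne, hb⟩ := mem_filter.mp hp
  intro hy
  rw [branch_y0 hy] at hb
  simp at hb

lemma lset_closed {A} (hA : IsNAT A) :
    ∀ p ∈ Lset A, ∀ q ∈ A, q ≠ (0,0) → (q.2 = p.2 ∨ q.1 = p.1) → q ∈ Lset A := by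
  rintro p hp q hq hqr (h | h)
  · obtain ⟨hpA, hne, hb⟩ := mem_filter.mp hp
    by_cases hy : p.2 = 0
    · exact mem_filter.mpr ⟨hq, hqr, branch_y0 (by omega)⟩
    · refine mem_filter.mpr ⟨hq, hqr, ?_⟩
      rw [branch_row_const hA hq hpA (by omega) (by omega)]
      exact hb
  · obtain ⟨hpA, hne, hb⟩ := mem_filter.mp hp
    refine mem_filter.mpr ⟨hq, hqr, ?_⟩
    rw [branch_col_const hA hq hpA (by rw [h]) (by rw [h]; exact lset_x_ne hp)]
    exact hb

lemma rset_closed {A} (hA : IsNAT A) :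
    ∀ p ∈ Rset A, ∀ q ∈ A, q ≠ (0,0) → (q.2 = p.2 ∨ q.1 = p.1) → q ∈ Rset A := by
  rintro p hp q hq hqr (h | h)
  · obtain ⟨hpA, hne, hb⟩ := mem_filter.mp hp
    refine mem_filter.mpr ⟨hq, hqr, ?_⟩
    rw [branch_row_const hA hq hpA (by rw [h]) (by rw [h]; exact rset_y_ne hp)]
    exact hb
  · obtain ⟨hpA, hne, hb⟩ := mem_filter.mp hp
    by_cases hx : p.1 = 0
    · have hqx : q.1 = 0 := by omega
      have hqy : q.2 ≠ 0 := fun hy => hqr (Prod.ext hqx hy)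
      exact mem_filter.mpr ⟨hq, hqr, branch_x0 hqy hqx⟩
    · refine mem_filter.mpr ⟨hq, hqr, ?_⟩
      rw [branch_col_const hA hq hpA (by omega) (by omega)]
      exact hb

lemma lset_corner {A} (hA : IsNAT A) (hL : (Lset A).Nonempty) :
    ∃ c ∈ Lset A, c.2 = 0 ∧ ∀ p ∈ Lset A, c.1 ≤ p.1 := by
  have hCLne : ((Lset A).image Prod.fst).Nonempty := hL.image _
  obtain ⟨xs, hxs⟩ : ∃ xs, ((Lset A).image Prod.fst).min' hCLne = xs := ⟨_, rfl⟩
  have hxsmem : xs ∈ (Lset A).image Prod.fst := hxs ▸ Finset.min'_mem _ hCLne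
  have hxsle : ∀ p ∈ Lset A, xs ≤ p.1 := fun p hp =>
    hxs ▸ Finset.min'_le _ p.1 (mem_image_of_mem _ hp)
  obtain ⟨p₀, hp₀, hp₀x⟩ := mem_image.mp hxsmem
  have hp₀A : p₀ ∈ A := lset_subset hp₀
  have hxs0 : xs ≠ 0 := by rw [← hp₀x]; exact lset_x_ne hp₀
  have hcA : ((xs, colMinY A xs) : ℕ×ℕ) ∈ A := by
    have := colMinY_mem hp₀A
    rwa [hp₀x] at this
  have hcL : ((xs, colMinY A xs) : ℕ×ℕ) ∈ Lset A := by
    apply lset_closed hA p₀ hp₀ _ hcA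
      (ne_root_of_x_pos (show 0 < xs from Nat.pos_of_ne_zero hxs0))
    right
    show xs = p₀.1
    omega
  refine ⟨(xs, colMinY A xs), hcL, ?_, fun p hp => hxsle p hp⟩
  show colMinY A xs = 0
  by_contra hc2
  have hnrt : ¬ RTp A (xs, colMinY A xs) := by
    rintro ⟨q, hq, hq1, hq2⟩
    simp only at hq1 hq2
    have : colMinY A xs ≤ q.2 := colMinY_le (by rw [← hq1, Prod.mk.eta]; exact hq)
    omega
  have hlt : LTp A (xs, colMinY A xs) :=
    (lt_or_rt hA hcA (lset_ne_root hcL)).resolve_right hnrt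
  obtain ⟨r, hr, hr2, hr1⟩ := hlt
  simp only at hr1 hr2
  have hmA : ((rowMinX A (colMinY A xs), colMinY A xs) : ℕ×ℕ) ∈ A := by
    have := rowMinX_mem hcA
    simpa using this
  have hmL : ((rowMinX A (colMinY A xs), colMinY A xs) : ℕ×ℕ) ∈ Lset A := by
    apply lset_closed hA _ hcL _ hmA (ne_root_of_y_pos (show 0 < colMinY A xs by omega))
    left; rfl
  have h1 : rowMinX A (colMinY A xs) ≤ r.1 := rowMinX_le (by rw [← hr2, Prod.mk.eta]; exact hr)
  have h2 := hxsle _ hmL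
  simp only at h2
  omega

lemma rset_corner {A} (hA : IsNAT A) (hR : (Rset A).Nonempty) :
    ∃ c ∈ Rset A, c.1 = 0 ∧ ∀ p ∈ Rset A, c.2 ≤ p.2 := by
  have hRRne : ((Rset A).image Prod.snd).Nonempty := hR.image _
  obtain ⟨ys, hys⟩ : ∃ ys, ((Rset A).image Prod.snd).min' hRRne = ys := ⟨_, rfl⟩
  have hysmem : ys ∈ (Rset A).image Prod.snd := hys ▸ Finset.min'_mem _ hRRne
  have hysle : ∀ p ∈ Rset A, ys ≤ p.2 := fun p hp =>
    hys ▸ Finset.min'_le _ p.2 (mem_image_of_mem _ hp)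
  obtain ⟨p₀, hp₀, hp₀y⟩ := mem_image.mp hysmem
  have hp₀A : p₀ ∈ A := rset_subset hp₀
  have hys0 : ys ≠ 0 := by rw [← hp₀y]; exact rset_y_ne hp₀
  have hcA : ((rowMinX A ys, ys) : ℕ×ℕ) ∈ A := by
    have := rowMinX_mem hp₀A
    rwa [hp₀y] at this
  have hcR : ((rowMinX A ys, ys) : ℕ×ℕ) ∈ Rset A := by
    apply rset_closed hA p₀ hp₀ _ hcA
      (ne_root_of_y_pos (show 0 < ys from Nat.pos_of_ne_zero hys0))
    left
    show ys = p₀.2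
    omega
  refine ⟨(rowMinX A ys, ys), hcR, ?_, fun p hp => hysle p hp⟩
  show rowMinX A ys = 0
  by_contra hc1
  have hnlt : ¬ LTp A (rowMinX A ys, ys) := by
    rintro ⟨q, hq, hq2, hq1⟩
    simp only at hq1 hq2
    have : rowMinX A ys ≤ q.1 := rowMinX_le (by rw [← hq2, Prod.mk.eta]; exact hq)
    omega
  have hrt : RTp A (rowMinX A ys, ys) :=
    (lt_or_rt hA hcA (rset_ne_root hcR)).resolve_left hnlt
  obtain ⟨r, hr, hr1, hr2⟩ := hrt
  simp only at hr1 hr2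
  have hmA : ((rowMinX A ys, colMinY A (rowMinX A ys)) : ℕ×ℕ) ∈ A := by
    have := colMinY_mem hcA
    simpa using this
  have hmR : ((rowMinX A ys, colMinY A (rowMinX A ys)) : ℕ×ℕ) ∈ Rset A := by
    apply rset_closed hA _ hcR _ hmA (ne_root_of_x_pos (show 0 < rowMinX A ys by omega))
    right; rfl
  have h1 : colMinY A (rowMinX A ys) ≤ r.2 := colMinY_le (by rw [← hr1, Prod.mk.eta]; exact hr)
  have h2 := hysle _ hmR
  simp only at h2
  omega

lemma lset_relNAT {A} (hA : IsNAT A) (hL : (Lset A).Nonempty) : RelNAT (Lset A) := by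
  obtain ⟨c, hc, hc2, hmin⟩ := lset_corner hA hL
  refine ⟨c, hc, fun p hp => ⟨hmin p hp, by omega⟩, ?_⟩
  intro p hp hpc
  have hpA : p ∈ A := lset_subset hp
  by_cases hy : p.2 = 0
  · right
    constructor
    · refine ⟨c, hc, by omega, ?_⟩
      rcases Nat.lt_or_ge c.1 p.1 with h | h
      · exact h
      · exfalso
        have := hmin p hp
        exact hpc (Prod.ext (by omega) (by omega))
    · intro hrt
      obtain ⟨q, hq, hq1, hq2⟩ := hrt
      have : RTp A p := ⟨q, lset_subset hq, hq1, hq2⟩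
      exact (lt_not_rt hA hpA (lset_ne_root hp) (row0_ltp hA hy (lset_ne_root hp))) this
  · rcases lt_or_rt hA hpA (lset_ne_root hp) with h | h
    · right
      obtain ⟨r, hr, hr2, hr1⟩ := h
      have hrL : r ∈ Lset A :=
        lset_closed hA p hp r hr (ne_root_of_y_pos (by omega)) (Or.inl hr2)
      constructor
      · exact ⟨r, hrL, hr2, hr1⟩
      · rintro ⟨q, hq, hq1, hq2⟩
        exact (lt_not_rt hA hpA (lset_ne_root hp) ⟨r, hr, hr2, hr1⟩)
          ⟨q, lset_subset hq, hq1, hq2⟩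
    · left
      obtain ⟨q, hq, hq1, hq2⟩ := h
      have hqL : q ∈ Lset A :=
        lset_closed hA p hp q hq (ne_root_of_x_pos (by have := lset_x_ne hp; omega)) (Or.inr hq1)
      constructor
      · exact ⟨q, hqL, hq1, hq2⟩
      · rintro ⟨r, hr, hr2, hr1⟩
        exact (rt_not_lt hA hpA (lset_ne_root hp) ⟨q, hq, hq1, hq2⟩)
          ⟨r, lset_subset hr, hr2, hr1⟩

lemma rset_relNAT {A} (hA : IsNAT A) (hR : (Rset A).Nonempty) : RelNAT (Rset A) := by
  obtain ⟨c, hc, hc1, hmin⟩ := rset_corner hA hR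
  refine ⟨c, hc, fun p hp => ⟨by omega, hmin p hp⟩, ?_⟩
  intro p hp hpc
  have hpA : p ∈ A := rset_subset hp
  by_cases hx : p.1 = 0
  · left
    constructor
    · refine ⟨c, hc, by omega, ?_⟩
      rcases Nat.lt_or_ge c.2 p.2 with h | h
      · exact h
      · exfalso
        have := hmin p hp
        exact hpc (Prod.ext (by omega) (by omega))
    · intro hlt
      obtain ⟨r, hr, hr2, hr1⟩ := hlt
      have : LTp A p := ⟨r, rset_subset hr, hr2, hr1⟩
      exact (rt_not_lt hA hpA (rset_ne_root hp) (col0_rtp hA hx (rset_ne_root hp))) this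
  · rcases lt_or_rt hA hpA (rset_ne_root hp) with h | h
    · right
      obtain ⟨r, hr, hr2, hr1⟩ := h
      have hrR : r ∈ Rset A :=
        rset_closed hA p hp r hr (ne_root_of_y_pos (by have := rset_y_ne hp; omega)) (Or.inl hr2)
      constructor
      · exact ⟨r, hrR, hr2, hr1⟩
      · rintro ⟨q, hq, hq1, hq2⟩
        exact (lt_not_rt hA hpA (rset_ne_root hp) ⟨r, hr, hr2, hr1⟩)
          ⟨q, rset_subset hq, hq1, hq2⟩
    · left
      obtain ⟨q, hq, hq1, hq2⟩ := h
      have hqR : q ∈ Rset A :=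
        rset_closed hA p hp q hq (ne_root_of_x_pos (by omega)) (Or.inr hq1)
      constructor
      · exact ⟨q, hqR, hq1, hq2⟩
      · rintro ⟨r, hr, hr2, hr1⟩
        exact (rt_not_lt hA hpA (rset_ne_root hp) ⟨q, hq, hq1, hq2⟩)
          ⟨r, rset_subset hr, hr2, hr1⟩

lemma lset_hasLeft {A} (hA : IsNAT A) {p} (hp : p ∈ Lset A) :
    HasLeftChild (Lset A) p ↔ HasLeftChild A p := by
  constructor
  · rintro ⟨w, hw, h2, h1⟩
    exact ⟨w, lset_subset hw, h2, h1⟩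
  · rintro ⟨w, hw, h2, h1⟩
    have hx := lset_x_ne hp
    have hwL : w ∈ Lset A :=
      lset_closed hA p hp w hw (ne_root_of_x_pos (by omega)) (Or.inl h2)
    exact ⟨w, hwL, h2, h1⟩

lemma lset_hasRight {A} (hA : IsNAT A) {p} (hp : p ∈ Lset A) :
    HasRightChild (Lset A) p ↔ HasRightChild A p := by
  constructor
  · rintro ⟨w, hw, h1, h2⟩
    exact ⟨w, lset_subset hw, h1, h2⟩
  · rintro ⟨w, hw, h1, h2⟩
    have hx := lset_x_ne hp
    have hwL : w ∈ Lset A :=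
      lset_closed hA p hp w hw (ne_root_of_x_pos (by omega)) (Or.inr h1)
    exact ⟨w, hwL, h1, h2⟩

lemma rset_hasLeft {A} (hA : IsNAT A) {p} (hp : p ∈ Rset A) :
    HasLeftChild (Rset A) p ↔ HasLeftChild A p := by
  constructor
  · rintro ⟨w, hw, h2, h1⟩
    exact ⟨w, rset_subset hw, h2, h1⟩
  · rintro ⟨w, hw, h2, h1⟩
    have hy := rset_y_ne hp
    have hwR : w ∈ Rset A :=
      rset_closed hA p hp w hw (ne_root_of_y_pos (by omega)) (Or.inl h2)
    exact ⟨w, hwR, h2, h1⟩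

lemma rset_hasRight {A} (hA : IsNAT A) {p} (hp : p ∈ Rset A) :
    HasRightChild (Rset A) p ↔ HasRightChild A p := by
  constructor
  · rintro ⟨w, hw, h1, h2⟩
    exact ⟨w, rset_subset hw, h1, h2⟩
  · rintro ⟨w, hw, h1, h2⟩
    have hwR : w ∈ Rset A :=
      rset_closed hA p hp w hw (ne_root_of_y_pos (by omega)) (Or.inr h1)
    exact ⟨w, hwR, h1, h2⟩

end Split
section Parts
open Finset
open scoped Classical

noncomputable def cmpr (D : Finset (ℕ×ℕ)) : ℕ×ℕ → ℕ×ℕ :=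
  fun p => (idx (D.image Prod.fst) p.1, idx (D.image Prod.snd) p.2)

lemma gridIso_cmp (D : Finset (ℕ×ℕ)) : GridIso D (cmpr D) := by
  refine ⟨?_, ?_, ?_, ?_⟩
  · intro p hp q hq
    exact idx_eq_iff _ (mem_image_of_mem _ hp) (mem_image_of_mem _ hq)
  · intro p hp q hq
    exact idx_lt_iff _ (mem_image_of_mem _ hp) (mem_image_of_mem _ hq)
  · intro p hp q hq
    exact idx_eq_iff _ (mem_image_of_mem _ hp) (mem_image_of_mem _ hq)
  · intro p hp q hq
    exact idx_lt_iff _ (mem_image_of_mem _ hp) (mem_image_of_mem _ hq)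

lemma image_fst_cmp (D : Finset (ℕ×ℕ)) :
    (D.image (cmpr D)).image Prod.fst = range ((D.image Prod.fst).card) := by
  rw [image_image]
  have h1 : (D.image (Prod.fst ∘ cmpr D)) = (D.image Prod.fst).image (idx (D.image Prod.fst)) := by
    rw [image_image]; rfl
  rw [h1, image_idx]

lemma image_snd_cmp (D : Finset (ℕ×ℕ)) :
    (D.image (cmpr D)).image Prod.snd = range ((D.image Prod.snd).card) := by
  rw [image_image]
  have h1 : (D.image (Prod.snd ∘ cmpr D)) = (D.image Prod.snd).image (idx (D.image Prod.snd)) := by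
    rw [image_image]; rfl
  rw [h1, image_idx]

lemma card_cmp (D : Finset (ℕ×ℕ)) : (D.image (cmpr D)).card = D.card :=
  card_image_of_injOn (fun p hp q hq h => (gridIso_cmp D).injOn p hp q hq h)

noncomputable def Lpart (A : Finset (ℕ×ℕ)) : Finset (ℕ×ℕ) := (Lset A).image (cmpr (Lset A))
noncomputable def Rpart (A : Finset (ℕ×ℕ)) : Finset (ℕ×ℕ) := (Rset A).image (cmpr (Rset A))

lemma Lpart_isNAT {A} (hA : IsNAT A) (hL : (Lset A).Nonempty) : IsNAT (Lpart A) :=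
  (gridIso_cmp _).isNAT_image (lset_relNAT hA hL) (image_fst_cmp _) (image_snd_cmp _)

lemma Rpart_isNAT {A} (hA : IsNAT A) (hR : (Rset A).Nonempty) : IsNAT (Rpart A) :=
  (gridIso_cmp _).isNAT_image (rset_relNAT hA hR) (image_fst_cmp _) (image_snd_cmp _)

lemma Lpart_complete {A} (hA : IsNAT A) (hC : IsCompleteNAT A) : IsCompleteNAT (Lpart A) :=
  (gridIso_cmp _).isComplete_image (fun p hp => by
    rw [lset_hasLeft hA hp, lset_hasRight hA hp]; exact hC p (lset_subset hp))

lemma Rpart_complete {A} (hA : IsNAT A) (hC : IsCompleteNAT A) : IsCompleteNAT (Rpart A) :=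
  (gridIso_cmp _).isComplete_image (fun p hp => by
    rw [rset_hasLeft hA hp, rset_hasRight hA hp]; exact hC p (rset_subset hp))

lemma root_internal {A} (hA : IsNAT A) (hC : IsCompleteNAT A) (h2 : 2 ≤ A.card) :
    HasLeftChild A (0,0) ∧ HasRightChild A (0,0) := by
  obtain ⟨p, hpA, hpne⟩ := Finset.exists_mem_ne (s := A) (by omega) (0,0)
  have hne : (A.erase (0,0)).Nonempty := ⟨p, mem_erase.mpr ⟨hpne, hpA⟩⟩
  obtain ⟨m, hm, hmin⟩ := exists_min_image (A.erase (0,0)) (fun q => q.1 + q.2) hne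
  obtain ⟨hmne, hmA⟩ := mem_erase.mp hm
  have key : HasLeftChild A (0,0) ∨ HasRightChild A (0,0) := by
    rcases lt_or_rt hA hmA hmne with ⟨r, hr, hr2, hr1⟩ | ⟨r, hr, hr1, hr2⟩
    · have hroot : r = (0,0) := by
        by_contra hrne
        have := hmin r (mem_erase.mpr ⟨hrne, hr⟩)
        omega
      left
      refine ⟨m, hmA, ?_, ?_⟩
      · rw [hroot] at hr2; exact hr2.symm ▸ rfl
      · show (0:ℕ) < m.1; omega
    · have hroot : r = (0,0) := by
        by_contra hrne
        have := hmin r (mem_erase.mpr ⟨hrne, hr⟩)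
        omega
      right
      refine ⟨m, hmA, ?_, ?_⟩
      · rw [hroot] at hr1; exact hr1.symm ▸ rfl
      · show (0:ℕ) < m.2; omega
  rcases key with h | h
  · exact ⟨h, (hC (0,0) hA.1).mp h⟩
  · exact ⟨(hC (0,0) hA.1).mpr h, h⟩

lemma lset_nonempty {A} (hA : IsNAT A) (hC : IsCompleteNAT A) (h2 : 2 ≤ A.card) :
    (Lset A).Nonempty := by
  obtain ⟨⟨w, hw, hw2, hw1⟩, -⟩ := root_internal hA hC h2
  have hw2' : w.2 = 0 := hw2
  have hw1' : (0:ℕ) < w.1 := hw1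
  exact ⟨w, mem_filter.mpr ⟨hw, ne_root_of_x_pos hw1', branch_y0 hw2'⟩⟩

lemma rset_nonempty {A} (hA : IsNAT A) (hC : IsCompleteNAT A) (h2 : 2 ≤ A.card) :
    (Rset A).Nonempty := by
  obtain ⟨-, ⟨w, hw, hw1, hw2⟩⟩ := root_internal hA hC h2
  have hw1' : w.1 = 0 := hw1
  have hw2' : (0:ℕ) < w.2 := hw2
  refine ⟨w, mem_filter.mpr ⟨hw, ne_root_of_y_pos hw2', branch_x0 (by omega) hw1'⟩⟩

lemma col_branch_clash {A} (hA : IsNAT A) {p q} (hp : p ∈ Lset A) (hq : q ∈ Rset A)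
    (h : p.1 = q.1) : False := by
  have hb := branch_col_const hA (lset_subset hp) (rset_subset hq) h (lset_x_ne hp)
  rw [(mem_filter.mp hp).2.2, (mem_filter.mp hq).2.2] at hb
  simp at hb

lemma row_branch_clash {A} (hA : IsNAT A) {p q} (hp : p ∈ Lset A) (hq : q ∈ Rset A)
    (h : p.2 = q.2) : False := by
  have hb := branch_row_const hA (lset_subset hp) (rset_subset hq) h (by
    rw [h]; exact rset_y_ne hq)
  rw [(mem_filter.mp hp).2.2, (mem_filter.mp hq).2.2] at hb
  simp at hb

lemma cols_partition {A} (hA : IsNAT A) (hR : (Rset A).Nonempty) :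
    A.image Prod.fst = ((Lset A).image Prod.fst) ∪ ((Rset A).image Prod.fst) ∧
    Disjoint ((Lset A).image Prod.fst) ((Rset A).image Prod.fst) := by
  constructor
  · apply Finset.Subset.antisymm
    · intro x hx
      obtain ⟨p, hp, rfl⟩ := mem_image.mp hx
      rcases mem_partition hp with hroot | hL | hRm
      · obtain ⟨c, hc, hc1, -⟩ := rset_corner hA hR
        rw [hroot]
        exact mem_union_right _ (mem_image.mpr ⟨c, hc, hc1⟩)
      · exact mem_union_left _ (mem_image_of_mem _ hL)
      · exact mem_union_right _ (mem_image_of_mem _ hRm)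
    · intro x hx
      rcases mem_union.mp hx with h | h
      · obtain ⟨p, hp, rfl⟩ := mem_image.mp h
        exact mem_image_of_mem _ (lset_subset hp)
      · obtain ⟨p, hp, rfl⟩ := mem_image.mp h
        exact mem_image_of_mem _ (rset_subset hp)
  · rw [disjoint_left]
    intro x hx hx'
    obtain ⟨p, hp, rfl⟩ := mem_image.mp hx
    obtain ⟨q, hq, hqx⟩ := mem_image.mp hx'
    exact col_branch_clash hA hp hq hqx.symm

lemma rows_partition {A} (hA : IsNAT A) (hL : (Lset A).Nonempty) :
    A.image Prod.snd = ((Lset A).image Prod.snd) ∪ ((Rset A).image Prod.snd) ∧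
    Disjoint ((Lset A).image Prod.snd) ((Rset A).image Prod.snd) := by
  constructor
  · apply Finset.Subset.antisymm
    · intro y hy
      obtain ⟨p, hp, rfl⟩ := mem_image.mp hy
      rcases mem_partition hp with hroot | hLm | hRm
      · obtain ⟨c, hc, hc2, -⟩ := lset_corner hA hL
        rw [hroot]
        exact mem_union_left _ (mem_image.mpr ⟨c, hc, hc2⟩)
      · exact mem_union_left _ (mem_image_of_mem _ hLm)
      · exact mem_union_right _ (mem_image_of_mem _ hRm)
    · intro y hy
      rcases mem_union.mp hy with h | h
      · obtain ⟨p, hp, rfl⟩ := mem_image.mp h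
        exact mem_image_of_mem _ (lset_subset hp)
      · obtain ⟨p, hp, rfl⟩ := mem_image.mp h
        exact mem_image_of_mem _ (rset_subset hp)
  · rw [disjoint_left]
    intro y hy hy'
    obtain ⟨p, hp, rfl⟩ := mem_image.mp hy
    obtain ⟨q, hq, hqy⟩ := mem_image.mp hy'
    exact row_branch_clash hA hp hq hqy.symm

/-- Cardinality bookkeeping for the split of a complete NAT with `t ≥ 1` internal
vertices. -/
lemma split_cards {A t} (hA : IsNAT A) (hC : IsCompleteNAT A) (ht : numInternal A = t)
    (ht1 : 1 ≤ t) :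
    ((Lset A).image Prod.fst).card = numInternal (Lpart A) + 1 ∧
    ((Lset A).image Prod.snd).card = numInternal (Lpart A) + 1 ∧
    ((Rset A).image Prod.fst).card = numInternal (Rpart A) + 1 ∧
    ((Rset A).image Prod.snd).card = numInternal (Rpart A) + 1 ∧
    t = numInternal (Lpart A) + numInternal (Rpart A) + 1 := by
  have hcard : A.card = 2*t+1 := (complete_struct hA hC ht).1
  have h2 : 2 ≤ A.card := by omega
  have hL := lset_nonempty hA hC h2
  have hR := rset_nonempty hA hC h2
  have hLN := Lpart_isNAT hA hL
  have hLC := Lpart_complete hA hC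
  have hRN := Rpart_isNAT hA hR
  have hRC := Rpart_complete hA hC
  have hLs := complete_struct hLN hLC rfl
  have hRs := complete_struct hRN hRC rfl
  have e1 : ((Lset A).image Prod.fst).card = numInternal (Lpart A) + 1 := by
    have h : ((Lset A).image (cmpr (Lset A))).image Prod.fst
        = range (numInternal (Lpart A) + 1) := hLs.2.1
    rw [image_fst_cmp] at h
    have h2 := congrArg Finset.card h
    simpa using h2
  have e2 : ((Lset A).image Prod.snd).card = numInternal (Lpart A) + 1 := by
    have h : ((Lset A).image (cmpr (Lset A))).image Prod.snd
        = range (numInternal (Lpart A) + 1) := hLs.2.2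
    rw [image_snd_cmp] at h
    have h2 := congrArg Finset.card h
    simpa using h2
  have e3 : ((Rset A).image Prod.fst).card = numInternal (Rpart A) + 1 := by
    have h : ((Rset A).image (cmpr (Rset A))).image Prod.fst
        = range (numInternal (Rpart A) + 1) := hRs.2.1
    rw [image_fst_cmp] at h
    have h2 := congrArg Finset.card h
    simpa using h2
  have e4 : ((Rset A).image Prod.snd).card = numInternal (Rpart A) + 1 := by
    have h : ((Rset A).image (cmpr (Rset A))).image Prod.snd
        = range (numInternal (Rpart A) + 1) := hRs.2.2
    rw [image_snd_cmp] at h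
    have h2 := congrArg Finset.card h
    simpa using h2
  refine ⟨e1, e2, e3, e4, ?_⟩
  have hcp := cols_partition hA hR
  have hcols : (A.image Prod.fst).card = t + 1 := by
    rw [(complete_struct hA hC ht).2.1, card_range]
  rw [hcp.1, card_union_of_disjoint hcp.2, e1, e3] at hcols
  omega

end Parts
section Glue
open Finset
open scoped Classical

noncomputable def embPt (cs rs : Finset ℕ) (p : ℕ×ℕ) : ℕ×ℕ := (nth cs p.1, nth rs p.2)

lemma embPt_fst (cs rs : Finset ℕ) (p : ℕ×ℕ) : (embPt cs rs p).1 = nth cs p.1 := rfl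
lemma embPt_snd (cs rs : Finset ℕ) (p : ℕ×ℕ) : (embPt cs rs p).2 = nth rs p.2 := rfl

lemma gridIso_emb (cs rs : Finset ℕ) (D : Finset (ℕ×ℕ))
    (hb : ∀ p ∈ D, p.1 < cs.card ∧ p.2 < rs.card) : GridIso D (embPt cs rs) := by
  refine ⟨?_, ?_, ?_, ?_⟩
  · intro p hp q hq
    exact nth_eq_iff cs (hb p hp).1 (hb q hq).1
  · intro p hp q hq
    exact nth_lt_iff cs (hb p hp).1 (hb q hq).1
  · intro p hp q hq
    exact nth_eq_iff rs (hb p hp).2 (hb q hq).2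
  · intro p hp q hq
    exact nth_lt_iff rs (hb p hp).2 (hb q hq).2

lemma image_fst_emb (cs rs : Finset ℕ) (D : Finset (ℕ×ℕ))
    (hD : D.image Prod.fst = range cs.card) :
    (D.image (embPt cs rs)).image Prod.fst = cs := by
  rw [image_image]
  have h1 : D.image (Prod.fst ∘ embPt cs rs) = (D.image Prod.fst).image (nth cs) := by
    rw [image_image]; rfl
  rw [h1, hD, image_nth]

lemma image_snd_emb (cs rs : Finset ℕ) (D : Finset (ℕ×ℕ))
    (hD : D.image Prod.snd = range rs.card) :
    (D.image (embPt cs rs)).image Prod.snd = rs := by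
  rw [image_image]
  have h1 : D.image (Prod.snd ∘ embPt cs rs) = (D.image Prod.snd).image (nth rs) := by
    rw [image_image]; rfl
  rw [h1, hD, image_nth]

lemma nth_zero_of_zero_mem {s : Finset ℕ} (h : 0 ∈ s) : nth s 0 = 0 := by
  have hidx : idx s 0 = 0 := by
    rw [idx]
    rw [Finset.card_eq_zero]
    ext z
    simp only [mem_filter, notMem_empty, iff_false]
    rintro ⟨-, hz⟩
    omega
  have := nth_idx s h
  rwa [hidx] at this

lemma mem_ltp_mono {S T : Finset (ℕ×ℕ)} (h : S ⊆ T) {p} (hp : LTp S p) : LTp T p := by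
  obtain ⟨r, hr, h1, h2⟩ := hp; exact ⟨r, h hr, h1, h2⟩
lemma mem_rtp_mono {S T : Finset (ℕ×ℕ)} (h : S ⊆ T) {p} (hp : RTp S p) : RTp T p := by
  obtain ⟨r, hr, h1, h2⟩ := hp; exact ⟨r, h hr, h1, h2⟩
lemma hasLeft_mono {S T : Finset (ℕ×ℕ)} (h : S ⊆ T) {p} (hp : HasLeftChild S p) :
    HasLeftChild T p := by
  obtain ⟨r, hr, h1, h2⟩ := hp; exact ⟨r, h hr, h1, h2⟩
lemma hasRight_mono {S T : Finset (ℕ×ℕ)} (h : S ⊆ T) {p} (hp : HasRightChild S p) :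
    HasRightChild T p := by
  obtain ⟨r, hr, h1, h2⟩ := hp; exact ⟨r, h hr, h1, h2⟩

noncomputable def glueF (t a : ℕ) (CL RL : Finset ℕ) (L₀ R₀ : Finset (ℕ×ℕ)) :
    Finset (ℕ×ℕ) :=
  insert (0,0)
    ((L₀.image (embPt CL (insert 0 RL))) ∪
     (R₀.image (embPt (insert 0 (Icc 1 t \ CL)) (Icc 1 t \ RL))))

end Glue
section GlueMain
open Finset
open scoped Classical

lemma glue_main {t a : ℕ} {CL RL : Finset ℕ} {L₀ R₀ : Finset (ℕ×ℕ)}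
    (hat : a < t)
    (hCL : CL ⊆ Icc 1 t) (hCLc : CL.card = a + 1)
    (hRL : RL ⊆ Icc 1 t) (hRLc : RL.card = a)
    (hLN : IsNAT L₀) (hLC : IsCompleteNAT L₀) (hLi : numInternal L₀ = a)
    (hRN : IsNAT R₀) (hRC : IsCompleteNAT R₀) (hRi : numInternal R₀ = t - 1 - a) :
    IsNAT (glueF t a CL RL L₀ R₀) ∧ IsCompleteNAT (glueF t a CL RL L₀ R₀) ∧
      numInternal (glueF t a CL RL L₀ R₀) = t ∧
      Lset (glueF t a CL RL L₀ R₀) = L₀.image (embPt CL (insert 0 RL)) ∧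
      Rset (glueF t a CL RL L₀ R₀) = R₀.image (embPt (insert 0 (Icc 1 t \ CL)) (Icc 1 t \ RL)) ∧
      Lpart (glueF t a CL RL L₀ R₀) = L₀ ∧ Rpart (glueF t a CL RL L₀ R₀) = R₀ := by
  set RL0 := insert 0 RL with hRL0
  set CR0 := insert 0 (Icc 1 t \ CL) with hCR0
  set RR := Icc 1 t \ RL with hRR
  set eL := embPt CL RL0 with heL
  set eR := embPt CR0 RR with heR
  set L' := L₀.image eL with hL'
  set R' := R₀.image eR with hR'
  have hG : glueF t a CL RL L₀ R₀ = insert (0,0) (L' ∪ R') := rfl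
  set G := insert ((0:ℕ),(0:ℕ)) (L' ∪ R') with hGdef
  rw [hG]
  -- numerology
  have fIcc : (Icc 1 t).card = t := by rw [Nat.card_Icc]; omega
  have f1 : (0:ℕ) ∉ RL := fun h => by have := mem_Icc.mp (hRL h); omega
  have f2 : RL0.card = a + 1 := by rw [hRL0, card_insert_of_notMem f1, hRLc]
  have f3 : (0:ℕ) ∉ Icc 1 t \ CL := fun h => by
    have := mem_Icc.mp (mem_sdiff.mp h).1; omega
  have fsd : (Icc 1 t \ CL).card = t - (a+1) := by rw [card_sdiff_of_subset hCL, fIcc, hCLc]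
  have f4 : CR0.card = t - a := by rw [hCR0, card_insert_of_notMem f3, fsd]; omega
  have f5 : RR.card = t - a := by rw [hRR, card_sdiff_of_subset hRL, fIcc, hRLc]
  have structL := complete_struct hLN hLC hLi
  have structR := complete_struct hRN hRC hRi
  have hta : t - 1 - a + 1 = t - a := by omega
  have boundsL : ∀ p ∈ L₀, p.1 < CL.card ∧ p.2 < RL0.card := by
    intro p hp
    constructor
    · have : p.1 ∈ L₀.image Prod.fst := mem_image_of_mem _ hp
      rw [structL.2.1] at this
      rw [hCLc]
      exact mem_range.mp this
    · have : p.2 ∈ L₀.image Prod.snd := mem_image_of_mem _ hp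
      rw [structL.2.2] at this
      rw [f2]
      exact mem_range.mp this
  have boundsR : ∀ p ∈ R₀, p.1 < CR0.card ∧ p.2 < RR.card := by
    intro p hp
    constructor
    · have : p.1 ∈ R₀.image Prod.fst := mem_image_of_mem _ hp
      rw [structR.2.1] at this
      rw [f4, ← hta]
      exact mem_range.mp this
    · have : p.2 ∈ R₀.image Prod.snd := mem_image_of_mem _ hp
      rw [structR.2.2] at this
      rw [f5, ← hta]
      exact mem_range.mp this
  have gIsoL : GridIso L₀ eL := gridIso_emb CL RL0 L₀ boundsL
  have gIsoR : GridIso R₀ eR := gridIso_emb CR0 RR R₀ boundsR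
  have imgfL : L'.image Prod.fst = CL := by
    rw [hL']; exact image_fst_emb _ _ _ (by rw [structL.2.1, hCLc])
  have imgsL : L'.image Prod.snd = RL0 := by
    rw [hL']; exact image_snd_emb _ _ _ (by rw [structL.2.2, f2])
  have imgfR : R'.image Prod.fst = CR0 := by
    rw [hR']; exact image_fst_emb _ _ _ (by rw [structR.2.1, f4, ← hta])
  have imgsR : R'.image Prod.snd = RR := by
    rw [hR']; exact image_snd_emb _ _ _ (by rw [structR.2.2, f5, ← hta])
  have memL : ∀ q ∈ L', q.1 ∈ CL ∧ q.2 ∈ RL0 := fun q hq =>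
    ⟨by rw [← imgfL]; exact mem_image_of_mem _ hq,
     by rw [← imgsL]; exact mem_image_of_mem _ hq⟩
  have memR : ∀ q ∈ R', q.1 ∈ CR0 ∧ q.2 ∈ RR := fun q hq =>
    ⟨by rw [← imgfR]; exact mem_image_of_mem _ hq,
     by rw [← imgsR]; exact mem_image_of_mem _ hq⟩
  have CLpos : ∀ x ∈ CL, 1 ≤ x ∧ x ≤ t := fun x hx => mem_Icc.mp (hCL hx)
  have RRpos : ∀ y ∈ RR, (1 ≤ y ∧ y ≤ t) ∧ y ∉ RL := fun y hy => by
    have := mem_sdiff.mp hy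
    exact ⟨mem_Icc.mp this.1, this.2⟩
  have disjC : ∀ x, x ∈ CL → x ∈ CR0 → False := by
    intro x hx hx'
    rcases mem_insert.mp hx' with h0 | hsd
    · have := CLpos x hx; omega
    · exact (mem_sdiff.mp hsd).2 hx
  have disjR : ∀ y, y ∈ RL0 → y ∈ RR → False := by
    intro y hy hy'
    have h2 := RRpos y hy'
    rcases mem_insert.mp hy with h0 | hRLm
    · omega
    · exact h2.2 hRLm
  have rootL : ((0:ℕ),(0:ℕ)) ∉ L' := fun h => by
    have := CLpos _ (memL _ h).1; simp at this
  have rootR : ((0:ℕ),(0:ℕ)) ∉ R' := fun h => by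
    have := RRpos _ (memR _ h).2; simp at this
  have LRdisj : ∀ q, q ∈ L' → q ∈ R' → False := fun q h1 h2 =>
    disjC q.1 (memL q h1).1 (memR q h2).1
  have memG : ∀ q ∈ G, q = (0,0) ∨ q ∈ L' ∨ q ∈ R' := by
    intro q hq
    rcases mem_insert.mp hq with h | h
    · exact Or.inl h
    · rcases mem_union.mp h with h | h
      · exact Or.inr (Or.inl h)
      · exact Or.inr (Or.inr h)
  have L'G : L' ⊆ G := fun q hq => mem_insert_of_mem (mem_union_left _ hq)
  have R'G : R' ⊆ G := fun q hq => mem_insert_of_mem (mem_union_right _ hq)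
  have locL_col : ∀ q w, q ∈ L' → w ∈ G → w.1 = q.1 → w ∈ L' := by
    intro q w hq hw he
    rcases memG w hw with h | h | h
    · exfalso
      have := CLpos _ (memL q hq).1
      rw [h] at he
      simp at he
      omega
    · exact h
    · exfalso
      apply disjC q.1 (memL q hq).1
      rw [← he]
      exact (memR w h).1
  have locL_row : ∀ q w, q ∈ L' → w ∈ G → w.2 = q.2 → w ≠ (0,0) → w ∈ L' := by
    intro q w hq hw he hne
    rcases memG w hw with h | h | h
    · exact absurd h hne
    · exact h
    · exfalso
      apply disjR q.2 (memL q hq).2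
      rw [← he]
      exact (memR w h).2
  have locR_row : ∀ q w, q ∈ R' → w ∈ G → w.2 = q.2 → w ∈ R' := by
    intro q w hq hw he
    rcases memG w hw with h | h | h
    · exfalso
      have := RRpos _ (memR q hq).2
      rw [h] at he
      simp at he
      omega
    · exfalso
      apply disjR w.2 (memL w h).2
      rw [he]
      exact (memR q hq).2
    · exact h
  have locR_col : ∀ q w, q ∈ R' → w ∈ G → w.1 = q.1 → w ≠ (0,0) → w ∈ R' := by
    intro q w hq hw he hne
    rcases memG w hw with h | h | h
    · exact absurd h hne
    · exfalso
      apply disjC w.1 (memL w h).1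
      rw [he]
      exact (memR q hq).1
    · exact h
  have hRL00 : (0:ℕ) ∈ RL0 := mem_insert_self _ _
  have hCR00 : (0:ℕ) ∈ CR0 := mem_insert_self _ _
  have nthRL0z : nth RL0 0 = 0 := nth_zero_of_zero_mem hRL00
  have nthCR0z : nth CR0 0 = 0 := nth_zero_of_zero_mem hCR00
  have eLsnd_pos : ∀ p ∈ L₀, 0 < p.2 → 0 < (eL p).2 := by
    intro p hp hpos
    have hb := (boundsL p hp).2
    have := (nth_lt_iff RL0 (by omega : 0 < RL0.card) hb).mpr hpos
    rw [nthRL0z] at this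
    exact this
  have eRfst_pos : ∀ p ∈ R₀, 0 < p.1 → 0 < (eR p).1 := by
    intro p hp hpos
    have hb := (boundsR p hp).1
    have := (nth_lt_iff CR0 (by omega : 0 < CR0.card) hb).mpr hpos
    rw [nthCR0z] at this
    exact this
  have L'x_pos : ∀ q ∈ L', 1 ≤ q.1 := fun q hq => (CLpos _ (memL q hq).1).1
  have R'y_pos : ∀ q ∈ R', 1 ≤ q.2 := fun q hq => ((RRpos _ (memR q hq).2).1).1
  -- the roots of the two parts
  have hrootL0 : (0,0) ∈ L₀ := hLN.1
  have hrootR0 : (0,0) ∈ R₀ := hRN.1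
  have eLroot : (eL (0,0)).2 = 0 := by rw [heL, embPt_snd]; exact nthRL0z
  have eRroot : (eR (0,0)).1 = 0 := by rw [heR, embPt_fst]; exact nthCR0z
  -- column sets of G
  have colsG : G.image Prod.fst = range (t+1) := by
    rw [hGdef, image_insert, image_union, imgfL, imgfR]
    ext x
    simp only [mem_insert, mem_union, mem_range]
    constructor
    · rintro (h | h | h)
      · omega
      · have := CLpos x h; omega
      · rcases mem_insert.mp h with h0 | hsd
        · omega
        · have := mem_Icc.mp (mem_sdiff.mp hsd).1; omega
    · intro hx
      by_cases h0 : x = 0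
      · exact Or.inl h0
      · by_cases hxCL : x ∈ CL
        · exact Or.inr (Or.inl hxCL)
        · refine Or.inr (Or.inr ?_)
          rw [hCR0]
          exact mem_insert_of_mem (mem_sdiff.mpr ⟨mem_Icc.mpr ⟨by omega, by omega⟩, hxCL⟩)
  have rowsG : G.image Prod.snd = range (t+1) := by
    rw [hGdef, image_insert, image_union, imgsL, imgsR]
    ext y
    simp only [mem_insert, mem_union, mem_range]
    constructor
    · rintro (h | h | h)
      · omega
      · rcases mem_insert.mp h with h0 | hRLm
        · omega
        · have := mem_Icc.mp (hRL hRLm); omega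
      · have := (RRpos y h).1; omega
    · intro hy
      by_cases h0 : y = 0
      · exact Or.inl h0
      · by_cases hyRL : y ∈ RL
        · exact Or.inr (Or.inl (mem_insert_of_mem hyRL))
        · refine Or.inr (Or.inr ?_)
          rw [hRR]
          exact mem_sdiff.mpr ⟨mem_Icc.mpr ⟨by omega, by omega⟩, hyRL⟩
  -- G is an NAT
  have hGNAT : IsNAT G := by
    refine ⟨mem_insert_self _ _, ?_, ?_⟩
    · -- Xor condition
      intro q hq hqne
      rcases memG q hq with h | hqL | hqR
      · exact absurd h hqne
      · obtain ⟨p, hp, rfl⟩ := mem_image.mp hqL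
        by_cases hp0 : p = (0,0)
        · subst hp0
          right
          constructor
          · refine ⟨(0,0), mem_insert_self _ _, ?_, ?_⟩
            · show (0:ℕ) = (eL (0,0)).2
              rw [eLroot]
            · show (0:ℕ) < (eL (0,0)).1
              have := L'x_pos _ (mem_image_of_mem eL hrootL0)
              omega
          · rintro ⟨w, hw, hw1, hw2⟩
            rw [eLroot] at hw2
            omega
        · have hqL' : eL p ∈ L' := mem_image_of_mem eL hp
          rcases hLN.2.1 p hp hp0 with ⟨hrt, hnlt⟩ | ⟨hlt, hnrt⟩
          · left
            constructor
            · exact mem_rtp_mono L'G ((gIsoL.rtp_iff hp).mpr hrt)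
            · rintro ⟨w, hw, hw2, hw1⟩
              have hy : 0 < (eL p).2 := eLsnd_pos p hp (rtp_y_pos hrt)
              have hwne : w ≠ (0,0) := by
                intro hwe
                rw [hwe] at hw2
                simp at hw2
                omega
              have hwL : w ∈ L' := locL_row _ w hqL' hw hw2 hwne
              exact hnlt ((gIsoL.ltp_iff hp).mp ⟨w, hwL, hw2, hw1⟩)
          · right
            constructor
            · exact mem_ltp_mono L'G ((gIsoL.ltp_iff hp).mpr hlt)
            · rintro ⟨w, hw, hw1, hw2⟩
              have hwL : w ∈ L' := locL_col _ w hqL' hw hw1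
              exact hnrt ((gIsoL.rtp_iff hp).mp ⟨w, hwL, hw1, hw2⟩)
      · obtain ⟨p, hp, rfl⟩ := mem_image.mp hqR
        by_cases hp0 : p = (0,0)
        · subst hp0
          left
          constructor
          · refine ⟨(0,0), mem_insert_self _ _, ?_, ?_⟩
            · show (0:ℕ) = (eR (0,0)).1
              rw [eRroot]
            · show (0:ℕ) < (eR (0,0)).2
              have := R'y_pos _ (mem_image_of_mem eR hrootR0)
              omega
          · rintro ⟨w, hw, hw2, hw1⟩
            rw [eRroot] at hw1
            omega
        · have hqR' : eR p ∈ R' := mem_image_of_mem eR hp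
          rcases hRN.2.1 p hp hp0 with ⟨hrt, hnlt⟩ | ⟨hlt, hnrt⟩
          · left
            constructor
            · exact mem_rtp_mono R'G ((gIsoR.rtp_iff hp).mpr hrt)
            · rintro ⟨w, hw, hw2, hw1⟩
              have hwR : w ∈ R' := locR_row _ w hqR' hw hw2
              exact hnlt ((gIsoR.ltp_iff hp).mp ⟨w, hwR, hw2, hw1⟩)
          · right
            constructor
            · exact mem_ltp_mono R'G ((gIsoR.ltp_iff hp).mpr hlt)
            · rintro ⟨w, hw, hw1, hw2⟩
              have hx : 0 < (eR p).1 := eRfst_pos p hp (ltp_x_pos hlt)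
              have hwne : w ≠ (0,0) := by
                intro hwe
                rw [hwe] at hw1
                simp at hw1
                omega
              have hwR : w ∈ R' := locR_col _ w hqR' hw hw1 hwne
              exact hnrt ((gIsoR.rtp_iff hp).mp ⟨w, hwR, hw1, hw2⟩)
    · -- condition 3
      intro p hp
      constructor
      · intro x' hx'
        have hp1 : p.1 ∈ range (t+1) := by rw [← colsG]; exact mem_image_of_mem _ hp
        have : x' ∈ G.image Prod.fst := by
          rw [colsG]
          exact mem_range.mpr (by have := mem_range.mp hp1; omega)
        obtain ⟨w, hw, hw1⟩ := mem_image.mp this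
        exact ⟨w, hw, hw1⟩
      · intro y' hy'
        have hp2 : p.2 ∈ range (t+1) := by rw [← rowsG]; exact mem_image_of_mem _ hp
        have : y' ∈ G.image Prod.snd := by
          rw [rowsG]
          exact mem_range.mpr (by have := mem_range.mp hp2; omega)
        obtain ⟨w, hw, hw2⟩ := mem_image.mp this
        exact ⟨w, hw, hw2⟩
  -- completeness
  have hGC : IsCompleteNAT G := by
    intro q hq
    rcases memG q hq with h | hqL | hqR
    · subst h
      have hleft : HasLeftChild G (0,0) := by
        refine ⟨eL (0,0), L'G (mem_image_of_mem eL hrootL0), eLroot, ?_⟩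
        show (0:ℕ) < (eL (0,0)).1
        have := L'x_pos _ (mem_image_of_mem eL hrootL0)
        omega
      have hright : HasRightChild G (0,0) := by
        refine ⟨eR (0,0), R'G (mem_image_of_mem eR hrootR0), eRroot, ?_⟩
        show (0:ℕ) < (eR (0,0)).2
        have := R'y_pos _ (mem_image_of_mem eR hrootR0)
        omega
      exact ⟨fun _ => hright, fun _ => hleft⟩
    · obtain ⟨p, hp, rfl⟩ := mem_image.mp hqL
      have hqL' : eL p ∈ L' := mem_image_of_mem eL hp
      have hLeq : HasLeftChild G (eL p) ↔ HasLeftChild L₀ p := by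
        constructor
        · rintro ⟨w, hw, hw2, hw1⟩
          have hwne : w ≠ (0,0) := by
            intro hwe
            rw [hwe] at hw1
            simp at hw1
          have hwL : w ∈ L' := locL_row _ w hqL' hw hw2 hwne
          exact (gIsoL.hasLeft_iff hp).mp ⟨w, hwL, hw2, hw1⟩
        · intro h
          exact hasLeft_mono L'G ((gIsoL.hasLeft_iff hp).mpr h)
      have hReq : HasRightChild G (eL p) ↔ HasRightChild L₀ p := by
        constructor
        · rintro ⟨w, hw, hw1, hw2⟩
          have hwL : w ∈ L' := locL_col _ w hqL' hw hw1
          exact (gIsoL.hasRight_iff hp).mp ⟨w, hwL, hw1, hw2⟩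
        · intro h
          exact hasRight_mono L'G ((gIsoL.hasRight_iff hp).mpr h)
      rw [hLeq, hReq]
      exact hLC p hp
    · obtain ⟨p, hp, rfl⟩ := mem_image.mp hqR
      have hqR' : eR p ∈ R' := mem_image_of_mem eR hp
      have hLeq : HasLeftChild G (eR p) ↔ HasLeftChild R₀ p := by
        constructor
        · rintro ⟨w, hw, hw2, hw1⟩
          have hwR : w ∈ R' := locR_row _ w hqR' hw hw2
          exact (gIsoR.hasLeft_iff hp).mp ⟨w, hwR, hw2, hw1⟩
        · intro h
          exact hasLeft_mono R'G ((gIsoR.hasLeft_iff hp).mpr h)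
      have hReq : HasRightChild G (eR p) ↔ HasRightChild R₀ p := by
        constructor
        · rintro ⟨w, hw, hw1, hw2⟩
          have hwne : w ≠ (0,0) := by
            intro hwe
            rw [hwe] at hw2
            simp at hw2
          have hwR : w ∈ R' := locR_col _ w hqR' hw hw1 hwne
          exact (gIsoR.hasRight_iff hp).mp ⟨w, hwR, hw1, hw2⟩
        · intro h
          exact hasRight_mono R'G ((gIsoR.hasRight_iff hp).mpr h)
      rw [hLeq, hReq]
      exact hRC p hp
  -- cardinality and numInternal
  have cardL' : L'.card = 2*a+1 := by
    rw [hL', card_image_of_injOn (fun p hp q hq h => gIsoL.injOn p hp q hq h), structL.1]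
  have cardR' : R'.card = 2*(t-1-a)+1 := by
    rw [hR', card_image_of_injOn (fun p hp q hq h => gIsoR.injOn p hp q hq h), structR.1]
  have cardG : G.card = 2*t+1 := by
    rw [hGdef, card_insert_of_notMem (fun h => by
      rcases mem_union.mp h with h | h
      · exact rootL h
      · exact rootR h),
      card_union_of_disjoint (disjoint_left.mpr (fun q h1 h2 => absurd h2 (fun h2 => LRdisj q h1 h2))),
      cardL', cardR']
    omega
  have hGnum : numInternal G = t := by
    have h1 : numInternal G + (G.image Prod.snd).card = G.card := by
      rw [numInternal_eq_card, internal_filter_left hGC]; exact card_left_add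
    rw [rowsG, card_range, cardG] at h1
    omega
  -- identification of the two branches
  have hLset : Lset G = L' := by
    have hsub : ∀ q ∈ L', q ∈ Lset G := by
      intro q hq
      refine mem_filter.mpr ⟨L'G hq, ?_, ?_⟩
      · intro hqe; rw [hqe] at hq; exact rootL hq
      · apply branch_true_of_closed hGNAT L' L'G
          (fun p hp => by have := L'x_pos p hp; omega)
          ?_ q hq
        intro p hp w hw hwne hshare
        rcases hshare with h | h
        · exact locL_row p w hp hw h hwne
        · exact locL_col p w hp hw h
    have hsub2 : ∀ q ∈ R', q ∈ Rset G := by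
      intro q hq
      refine mem_filter.mpr ⟨R'G hq, ?_, ?_⟩
      · intro hqe; rw [hqe] at hq; exact rootR hq
      · apply branch_false_of_closed hGNAT R' R'G
          (fun p hp => by have := R'y_pos p hp; omega)
          ?_ q hq
        intro p hp w hw hwne hshare
        rcases hshare with h | h
        · exact locR_row p w hp hw h
        · exact locR_col p w hp hw h hwne
    apply Finset.Subset.antisymm
    · intro q hq
      have hqG := (mem_filter.mp hq).1
      rcases memG q hqG with h | h | h
      · exact absurd h (mem_filter.mp hq).2.1
      · exact h
      · exact absurd hq (fun hq' => lset_rset_disjoint hq' (hsub2 q h))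
    · intro q hq
      exact hsub q hq
  have hRset : Rset G = R' := by
    have hsub : ∀ q ∈ L', q ∈ Lset G := fun q hq => by rw [hLset]; exact hq
    have hsub2 : ∀ q ∈ R', q ∈ Rset G := by
      intro q hq
      refine mem_filter.mpr ⟨R'G hq, ?_, ?_⟩
      · intro hqe; rw [hqe] at hq; exact rootR hq
      · apply branch_false_of_closed hGNAT R' R'G
          (fun p hp => by have := R'y_pos p hp; omega)
          ?_ q hq
        intro p hp w hw hwne hshare
        rcases hshare with h | h
        · exact locR_row p w hp hw h
        · exact locR_col p w hp hw h hwne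
    apply Finset.Subset.antisymm
    · intro q hq
      have hqG := (mem_filter.mp hq).1
      rcases memG q hqG with h | h | h
      · exact absurd h (mem_filter.mp hq).2.1
      · exact absurd hq (fun hq' => lset_rset_disjoint (hsub q h) hq')
      · exact h
    · intro q hq
      exact hsub2 q hq
  have hLpart : Lpart G = L₀ := by
    have h0 : Lpart G = (Lset G).image (cmpr (Lset G)) := rfl
    rw [h0, hLset, hL', image_image]
    have hptw : ∀ p ∈ L₀, (cmpr (L₀.image eL) ∘ eL) p = p := by
      intro p hp
      have h1 : (cmpr (L₀.image eL) ∘ eL) p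
          = (idx ((L₀.image eL).image Prod.fst) (nth CL p.1),
             idx ((L₀.image eL).image Prod.snd) (nth RL0 p.2)) := rfl
      rw [h1]
      rw [show (L₀.image eL).image Prod.fst = CL from imgfL,
        show (L₀.image eL).image Prod.snd = RL0 from imgsL]
      rw [idx_nth CL (boundsL p hp).1, idx_nth RL0 (boundsL p hp).2]
    rw [image_congr hptw]
    simp
  have hRpart : Rpart G = R₀ := by
    have h0 : Rpart G = (Rset G).image (cmpr (Rset G)) := rfl
    rw [h0, hRset, hR', image_image]
    have hptw : ∀ p ∈ R₀, (cmpr (R₀.image eR) ∘ eR) p = p := by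
      intro p hp
      have h1 : (cmpr (R₀.image eR) ∘ eR) p
          = (idx ((R₀.image eR).image Prod.fst) (nth CR0 p.1),
             idx ((R₀.image eR).image Prod.snd) (nth RR p.2)) := rfl
      rw [h1]
      rw [show (R₀.image eR).image Prod.fst = CR0 from imgfR,
        show (R₀.image eR).image Prod.snd = RR from imgsR]
      rw [idx_nth CR0 (boundsR p hp).1, idx_nth RR (boundsR p hp).2]
    rw [image_congr hptw]
    simp
  exact ⟨hGNAT, hGC, hGnum, hLset, hRset, hLpart, hRpart⟩

end GlueMain
section SplitGlue
open Finset
open scoped Classical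

lemma split_glue {A : Finset (ℕ×ℕ)} {t : ℕ} (hA : IsNAT A) (hC : IsCompleteNAT A)
    (ht : numInternal A = t) (ht1 : 1 ≤ t) :
    glueF t (numInternal (Lpart A)) ((Lset A).image Prod.fst)
      (((Lset A).image Prod.snd).erase 0) (Lpart A) (Rpart A) = A := by
  have hst := complete_struct hA hC ht
  have h2 : 2 ≤ A.card := by omega
  have hL := lset_nonempty hA hC h2
  have hR := rset_nonempty hA hC h2
  have h0L : (0:ℕ) ∈ (Lset A).image Prod.snd := by
    obtain ⟨c, hc, hc2, -⟩ := lset_corner hA hL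
    exact mem_image.mpr ⟨c, hc, hc2⟩
  have h0R : (0:ℕ) ∈ (Rset A).image Prod.fst := by
    obtain ⟨c, hc, hc1, -⟩ := rset_corner hA hR
    exact mem_image.mpr ⟨c, hc, hc1⟩
  have sg1 : insert 0 (((Lset A).image Prod.snd).erase 0) = (Lset A).image Prod.snd :=
    insert_erase h0L
  have hcolsparts := cols_partition hA hR
  have hrowparts := rows_partition hA hL
  have sg2 : insert 0 (Icc 1 t \ ((Lset A).image Prod.fst)) = (Rset A).image Prod.fst := by
    ext x
    simp only [mem_insert, mem_sdiff, mem_Icc]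
    constructor
    · rintro (rfl | ⟨⟨hx1, hx2⟩, hxn⟩)
      · exact h0R
      · have hx : x ∈ A.image Prod.fst := by
          rw [hst.2.1]; exact mem_range.mpr (by omega)
        rw [hcolsparts.1] at hx
        rcases mem_union.mp hx with h | h
        · exact absurd h hxn
        · exact h
    · intro hx
      by_cases h0 : x = 0
      · exact Or.inl h0
      · right
        have hxA : x ∈ A.image Prod.fst := by
          rw [hcolsparts.1]; exact mem_union_right _ hx
        rw [hst.2.1] at hxA
        have := mem_range.mp hxA
        refine ⟨⟨by omega, by omega⟩, ?_⟩
        intro hxn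
        exact (disjoint_left.mp hcolsparts.2) hxn hx
  have sg3 : Icc 1 t \ (((Lset A).image Prod.snd).erase 0) = (Rset A).image Prod.snd := by
    ext y
    simp only [mem_sdiff, mem_Icc, mem_erase]
    constructor
    · rintro ⟨⟨hy1, hy2⟩, hyn⟩
      have hy : y ∈ A.image Prod.snd := by
        rw [hst.2.2]; exact mem_range.mpr (by omega)
      rw [hrowparts.1] at hy
      rcases mem_union.mp hy with h | h
      · exact absurd ⟨by omega, h⟩ hyn
      · exact h
    · intro hy
      obtain ⟨q, hq, hqy⟩ := mem_image.mp hy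
      have hyne : y ≠ 0 := by rw [← hqy]; exact rset_y_ne hq
      have hyA : y ∈ A.image Prod.snd := by
        rw [hrowparts.1]; exact mem_union_right _ hy
      rw [hst.2.2] at hyA
      have := mem_range.mp hyA
      refine ⟨⟨by omega, by omega⟩, ?_⟩
      rintro ⟨-, hymem⟩
      exact (disjoint_left.mp hrowparts.2) hymem hy
  have sg4 : (Lpart A).image
      (embPt ((Lset A).image Prod.fst) (insert 0 (((Lset A).image Prod.snd).erase 0)))
      = Lset A := by
    rw [sg1]
    have h0' : Lpart A = (Lset A).image (cmpr (Lset A)) := rfl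
    rw [h0', image_image]
    have hptw : ∀ p ∈ Lset A,
        (embPt ((Lset A).image Prod.fst) ((Lset A).image Prod.snd) ∘ cmpr (Lset A)) p = p := by
      intro p hp
      have h1 : (embPt ((Lset A).image Prod.fst) ((Lset A).image Prod.snd) ∘ cmpr (Lset A)) p
          = (nth ((Lset A).image Prod.fst) (idx ((Lset A).image Prod.fst) p.1),
             nth ((Lset A).image Prod.snd) (idx ((Lset A).image Prod.snd) p.2)) := rfl
      rw [h1, nth_idx _ (mem_image_of_mem _ hp), nth_idx _ (mem_image_of_mem _ hp),
        Prod.mk.eta]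
    rw [image_congr hptw]
    simp
  have sg5 : (Rpart A).image
      (embPt (insert 0 (Icc 1 t \ ((Lset A).image Prod.fst)))
             (Icc 1 t \ (((Lset A).image Prod.snd).erase 0)))
      = Rset A := by
    rw [sg2, sg3]
    have h0' : Rpart A = (Rset A).image (cmpr (Rset A)) := rfl
    rw [h0', image_image]
    have hptw : ∀ p ∈ Rset A,
        (embPt ((Rset A).image Prod.fst) ((Rset A).image Prod.snd) ∘ cmpr (Rset A)) p = p := by
      intro p hp
      have h1 : (embPt ((Rset A).image Prod.fst) ((Rset A).image Prod.snd) ∘ cmpr (Rset A)) p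
          = (nth ((Rset A).image Prod.fst) (idx ((Rset A).image Prod.fst) p.1),
             nth ((Rset A).image Prod.snd) (idx ((Rset A).image Prod.snd) p.2)) := rfl
      rw [h1, nth_idx _ (mem_image_of_mem _ hp), nth_idx _ (mem_image_of_mem _ hp),
        Prod.mk.eta]
    rw [image_congr hptw]
    simp
  show insert (0,0) (_ ∪ _) = A
  rw [sg4, sg5]
  ext p
  simp only [mem_insert, mem_union]
  constructor
  · rintro (rfl | h | h)
    · exact hA.1
    · exact lset_subset h
    · exact rset_subset h
  · intro hp
    exact mem_partition hp
end SplitGlue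
section Count
open Finset
open scoped Classical

lemma S_finite (n : ℕ) :
    {A : Finset (ℕ×ℕ) | IsNAT A ∧ IsCompleteNAT A ∧ numInternal A = n}.Finite := by
  apply Set.Finite.subset ((range (n+1) ×ˢ range (n+1)).powerset : Finset (Finset (ℕ×ℕ))).finite_toSet
  rintro A ⟨hA, hC, ht⟩
  have hst := complete_struct hA hC ht
  simp only [coe_powerset, Set.mem_preimage, Set.mem_powerset_iff, coe_subset]
  intro p hp
  simp only [mem_coe, mem_product, mem_range]
  constructor
  · have : p.1 ∈ A.image Prod.fst := mem_image_of_mem _ hp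
    rw [hst.2.1] at this
    exact mem_range.mp this
  · have : p.2 ∈ A.image Prod.snd := mem_image_of_mem _ hp
    rw [hst.2.2] at this
    exact mem_range.mp this

noncomputable def Fse (n : ℕ) : Finset (Finset (ℕ×ℕ)) := (S_finite n).toFinset

lemma mem_Fse {n : ℕ} {A : Finset (ℕ×ℕ)} :
    A ∈ Fse n ↔ IsNAT A ∧ IsCompleteNAT A ∧ numInternal A = n := by
  rw [Fse, Set.Finite.mem_toFinset]
  rfl

lemma b_eq_card (n : ℕ) : b n = (Fse n).card := by
  rw [b, Set.ncard_eq_toFinset_card _ (S_finite n)]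
  rfl

noncomputable def Tgt (t : ℕ) :
    Finset (Σ _a : ℕ, (Finset ℕ × Finset ℕ) × (Finset (ℕ×ℕ) × Finset (ℕ×ℕ))) :=
  (range t).sigma (fun a =>
    ((Icc 1 t).powersetCard (a+1) ×ˢ (Icc 1 t).powersetCard a) ×ˢ (Fse a ×ˢ Fse (t-1-a)))

lemma main_bij (t : ℕ) (ht1 : 1 ≤ t) : (Fse t).card = (Tgt t).card := by
  apply card_bij' (fun A _ =>
      (⟨numInternal (Lpart A), (((Lset A).image Prod.fst), ((Lset A).image Prod.snd).erase 0),
        (Lpart A, Rpart A)⟩ : Σ _a : ℕ, (Finset ℕ × Finset ℕ) × (Finset (ℕ×ℕ) × Finset (ℕ×ℕ))))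
    (fun x _ => glueF t x.1 x.2.1.1 x.2.1.2 x.2.2.1 x.2.2.2)
  · -- maps into Tgt
    intro A hA'
    obtain ⟨hA, hC, ht⟩ := mem_Fse.mp hA'
    have hst := complete_struct hA hC ht
    have h2 : 2 ≤ A.card := by omega
    have hL := lset_nonempty hA hC h2
    have hR := rset_nonempty hA hC h2
    have sc := split_cards hA hC ht ht1
    rw [Tgt, mem_sigma]
    dsimp only
    constructor
    · exact mem_range.mpr (by omega)
    · rw [mem_product]
      constructor
      · rw [mem_product]
        constructor
        · rw [mem_powersetCard]
          constructor
          · intro x hx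
            obtain ⟨p, hp, rfl⟩ := mem_image.mp hx
            have hx0 := lset_x_ne hp
            have : p.1 ∈ A.image Prod.fst := mem_image_of_mem _ (lset_subset hp)
            rw [hst.2.1] at this
            have := mem_range.mp this
            exact mem_Icc.mpr ⟨by omega, by omega⟩
          · exact sc.1
        · rw [mem_powersetCard]
          constructor
          · intro y hy
            obtain ⟨hy0, hy'⟩ := mem_erase.mp hy
            obtain ⟨p, hp, rfl⟩ := mem_image.mp hy'
            have : p.2 ∈ A.image Prod.snd := mem_image_of_mem _ (lset_subset hp)
            rw [hst.2.2] at this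
            have := mem_range.mp this
            exact mem_Icc.mpr ⟨by omega, by omega⟩
          · have h0L : (0:ℕ) ∈ (Lset A).image Prod.snd := by
              obtain ⟨c, hc, hc2, -⟩ := lset_corner hA hL
              exact mem_image.mpr ⟨c, hc, hc2⟩
            rw [card_erase_of_mem h0L, sc.2.1]
            omega
      · rw [mem_product]
        constructor
        · exact mem_Fse.mpr ⟨Lpart_isNAT hA hL, Lpart_complete hA hC, rfl⟩
        · refine mem_Fse.mpr ⟨Rpart_isNAT hA hR, Rpart_complete hA hC, ?_⟩
          show numInternal (Rpart A) = t - 1 - numInternal (Lpart A)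
          omega
  · -- maps back into Fse t
    intro x hx
    obtain ⟨a, ⟨CL, RL⟩, L₀, R₀⟩ := x
    rw [Tgt, mem_sigma, mem_product] at hx
    obtain ⟨hmem, hx1, hx2⟩ := hx
    rw [mem_product] at hx1 hx2
    have hx11 := hx1.1
    have hx12 := hx1.2
    rw [mem_powersetCard] at hx11 hx12
    obtain ⟨hLN, hLC, hLi⟩ := mem_Fse.mp hx2.1
    obtain ⟨hRN, hRC, hRi⟩ := mem_Fse.mp hx2.2
    have hg := glue_main (mem_range.mp hmem) hx11.1 hx11.2 hx12.1 hx12.2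
      hLN hLC hLi hRN hRC hRi
    exact mem_Fse.mpr ⟨hg.1, hg.2.1, hg.2.2.1⟩
  · -- left inverse
    intro A hA'
    obtain ⟨hA, hC, ht⟩ := mem_Fse.mp hA'
    exact split_glue hA hC ht ht1
  · -- right inverse
    intro x hx
    obtain ⟨a, ⟨CL, RL⟩, L₀, R₀⟩ := x
    rw [Tgt, mem_sigma, mem_product] at hx
    obtain ⟨hmem, hx1, hx2⟩ := hx
    rw [mem_product] at hx1 hx2
    have hx11 := hx1.1
    have hx12 := hx1.2
    rw [mem_powersetCard] at hx11 hx12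
    obtain ⟨hLN, hLC, hLi⟩ := mem_Fse.mp hx2.1
    obtain ⟨hRN, hRC, hRi⟩ := mem_Fse.mp hx2.2
    have hg := glue_main (mem_range.mp hmem) hx11.1 hx11.2 hx12.1 hx12.2
      hLN hLC hLi hRN hRC hRi
    obtain ⟨hGN, hGC, hGt, hLset, hRset, hLpart, hRpart⟩ := hg
    have structL := complete_struct hLN hLC hLi
    have f1 : (0:ℕ) ∉ RL := fun h => by have := mem_Icc.mp (hx12.1 h); omega
    have f2 : (insert 0 RL).card = a + 1 := by rw [card_insert_of_notMem f1, hx12.2]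
    have himgf : (Lset (glueF t a CL RL L₀ R₀)).image Prod.fst = CL := by
      rw [hLset]
      exact image_fst_emb _ _ _ (by rw [structL.2.1, hx11.2])
    have himgs : (Lset (glueF t a CL RL L₀ R₀)).image Prod.snd = insert 0 RL := by
      rw [hLset]
      exact image_snd_emb _ _ _ (by rw [structL.2.2, f2])
    have hfirst : numInternal (Lpart (glueF t a CL RL L₀ R₀)) = a := by
      rw [hLpart, hLi]
    refine Sigma.ext hfirst (heq_of_eq ?_)
    rw [himgf, himgs, erase_insert f1, hLpart, hRpart]

lemma b_rec (t : ℕ) (ht : 1 ≤ t) :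
    b t = ∑ a ∈ Finset.range t, t.choose (a+1) * t.choose (t-a) * b a * b (t-1-a) := by
  rw [b_eq_card, main_bij t ht, Tgt, card_sigma]
  apply Finset.sum_congr rfl
  intro a ha
  have ha' := mem_range.mp ha
  rw [card_product, card_product, card_product, card_powersetCard, card_powersetCard,
    Nat.card_Icc]
  rw [← b_eq_card, ← b_eq_card]
  have h1 : t + 1 - 1 = t := by omega
  rw [h1]
  have h2 : t.choose (t - a) = t.choose a := by
    rw [← Nat.choose_symm (by omega : a ≤ t)]
  rw [h2]
  ring

end Count


open PowerSeries Finset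

lemma sum_range_odd (f : ℕ → ℚ) (n : ℕ) (h : ∀ e, f (2*e) = 0) :
    ∑ i ∈ range (2*n+1), f i = ∑ a ∈ range n, f (2*a+1) := by
  induction n with
  | zero => simpa using h 0
  | succ n ih =>
      have e : 2*(n+1)+1 = (2*n+1)+1+1 := by ring
      rw [e, sum_range_succ, sum_range_succ, ih, sum_range_succ,
        show (2*n+1)+1 = 2*(n+1) from by ring, h (n+1), add_zero]

-- the key factorial identity for one term
lemma term_identity (a c : ℕ) :
    (((a+c+1).choose (a+1) : ℚ) * ((a+c+1).choose (c+1)) )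
      * ((2*(a+c+1)+2)^2 / ((((a+c+1)+1).factorial : ℚ) * 2 ^ ((a+c+1)+1)) ^ 2)
    = (2*(a:ℚ)+2) * (2*(c:ℚ)+2) /
        ((((a+1).factorial : ℚ) * 2 ^ (a+1)) ^ 2 * (((c+1).factorial : ℚ) * 2 ^ (c+1)) ^ 2) := by
  have hfac : ∀ k : ℕ, ((k.factorial : ℚ)) ≠ 0 := fun k =>
    Nat.cast_ne_zero.mpr k.factorial_ne_zero
  have hp : ((a+c+1).choose (a+1) : ℚ) = ((a+c+1).factorial : ℚ)
      / (((a+1).factorial : ℚ) * (c.factorial : ℚ)) := by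
    rw [Nat.cast_choose ℚ (by omega : a+1 ≤ a+c+1), show a+c+1-(a+1) = c from by omega]
  have hq : ((a+c+1).choose (c+1) : ℚ) = ((a+c+1).factorial : ℚ)
      / (((c+1).factorial : ℚ) * (a.factorial : ℚ)) := by
    rw [Nat.cast_choose ℚ (by omega : c+1 ≤ a+c+1)]
    rw [show a+c+1-(c+1) = a from by omega, mul_comm]
  have e1 : (((a+c+1)+1).factorial : ℚ) = ((a:ℚ)+c+2) * ((a+c+1).factorial : ℚ) := by
    rw [Nat.factorial_succ]; push_cast; ring
  have e2 : ((a+1).factorial : ℚ) = ((a:ℚ)+1) * (a.factorial : ℚ) := by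
    rw [Nat.factorial_succ]; push_cast; ring
  have e3 : ((c+1).factorial : ℚ) = ((c:ℚ)+1) * (c.factorial : ℚ) := by
    rw [Nat.factorial_succ]; push_cast; ring
  have e4 : (2:ℚ) ^ ((a+c+1)+1) = 2^(a+1) * 2^(c+1) := by
    rw [← pow_add]; congr 1; omega
  rw [hp, hq, e1, e2, e3, e4]
  have h1 : ((a:ℚ)+1) ≠ 0 := by positivity
  have h2 : ((c:ℚ)+1) ≠ 0 := by positivity
  have h3 : ((a:ℚ)+c+2) ≠ 0 := by positivity
  have h4 : (2:ℚ)^(a+1) ≠ 0 := by positivity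
  have h5 : (2:ℚ)^(c+1) ≠ 0 := by positivity
  field_simp
  ring

open PowerSeries in
theorem bessel_log_identity (Z J₀ : PowerSeries ℚ)
    (hZ : ∀ k : ℕ, coeff (2 * (k + 1)) Z =
      (b k : ℚ) / (((k + 1).factorial : ℚ) * 2 ^ (k + 1)) ^ 2)
    (hZ' : ∀ m : ℕ, (∀ k : ℕ, m ≠ 2 * (k + 1)) → coeff m Z = 0)
    (hJ : ∀ k : ℕ, coeff (2 * k) J₀ =
      (-1 : ℚ) ^ k / ((k.factorial : ℚ) ^ 2 * 4 ^ k))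
    (hJ' : ∀ m : ℕ, (∀ k : ℕ, m ≠ 2 * k) → coeff m J₀ = 0) :
    derivative ℚ Z * J₀ = - derivative ℚ J₀ := by
  have hJodd : ∀ r : ℕ, coeff (2*r+1) J₀ = 0 := fun r => hJ' _ (fun k => by omega)
  have hZodd : ∀ r : ℕ, coeff (2*r+1) Z = 0 := fun r => hZ' _ (fun k => by omega)
  have hfac : ∀ k : ℕ, ((k.factorial : ℚ)) ≠ 0 := fun k =>
    Nat.cast_ne_zero.mpr k.factorial_ne_zero
  -- Bessel ODE
  have odeJ : X * derivative ℚ (derivative ℚ J₀) + derivative ℚ J₀ + X * J₀ = 0 := by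
    ext n
    rw [map_add, map_add, map_zero]
    cases n with
    | zero =>
        simp only [coeff_zero_X_mul, coeff_derivative, zero_add]
        have h1 : coeff 1 J₀ = 0 := by simpa using hJodd 0
        rw [h1]; ring
    | succ m =>
        rw [coeff_succ_X_mul, coeff_succ_X_mul, coeff_derivative, coeff_derivative]
        rcases Nat.even_or_odd m with ⟨k, hk⟩ | ⟨k, hk⟩
        · have hm : m = 2*k := by omega
          subst hm
          rw [show (2*k+1+1 : ℕ) = 2*(k+1) from by ring, hJ (k+1), hJ k,
            show ((k+1).factorial : ℚ) = ((k:ℚ)+1) * (k.factorial : ℚ) from by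
              rw [Nat.factorial_succ]; push_cast; ring,
            show (4:ℚ)^(k+1) = 4 * 4^k from by ring]
          have h1 : ((k:ℚ)+1) ≠ 0 := by positivity
          have h4 : (4:ℚ)^k ≠ 0 := by positivity
          field_simp
          push_cast
          ring
        · have hm : m = 2*k+1 := by omega
          subst hm
          rw [show (2*k+1+1+1 : ℕ) = 2*(k+1)+1 from by ring, hJodd (k+1), hJodd k]
          ring
  -- ODE for Z
  have odeZ : X * derivative ℚ (derivative ℚ Z) + derivative ℚ Z
      = X + X * (derivative ℚ Z * derivative ℚ Z) := by
    ext n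
    rw [map_add, map_add]
    cases n with
    | zero =>
        simp only [coeff_zero_X_mul, coeff_derivative, zero_add, coeff_zero_X]
        have h1 : coeff 1 Z = 0 := by simpa using hZodd 0
        rw [h1]; ring
    | succ m =>
        rw [coeff_succ_X_mul, coeff_succ_X_mul, coeff_derivative, coeff_derivative,
          coeff_X]
        rw [coeff_mul, Nat.sum_antidiagonal_eq_sum_range_succ
          (fun i j => coeff i (derivative ℚ Z) * coeff j (derivative ℚ Z))]
        rcases Nat.even_or_odd m with ⟨k, hk⟩ | ⟨k, hk⟩
        · -- m = 2k even
          have hm : m = 2*k := by omega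
          subst hm
          have hsum : ∑ i ∈ range (2*k+1),
              coeff i (derivative ℚ Z) * coeff (2*k - i) (derivative ℚ Z)
              = ∑ a ∈ range k,
                  ((b a : ℚ) / (((a+1).factorial : ℚ) * 2 ^ (a+1)) ^ 2 * (2*(a:ℚ)+2))
                  * ((b (k-1-a) : ℚ) / ((((k-1-a)+1).factorial : ℚ) * 2 ^ ((k-1-a)+1)) ^ 2
                      * (2*((k:ℚ)-1-a)+2)) := by
            rw [sum_range_odd (fun i =>
              coeff i (derivative ℚ Z) * coeff (2*k - i) (derivative ℚ Z)) k
              (by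
                intro e
                rw [coeff_derivative, hZodd e]
                ring)]
            refine Finset.sum_congr rfl fun a ha => ?_
            have ha' : a < k := Finset.mem_range.mp ha
            rw [coeff_derivative, coeff_derivative,
              show (2*a+1+1 : ℕ) = 2*(a+1) from by ring, hZ a,
              show (2*k - (2*a+1) : ℕ) = 2*(k-1-a)+1 from by omega,
              show (2*(k-1-a)+1+1 : ℕ) = 2*((k-1-a)+1) from by ring, hZ (k-1-a)]
            have c1 : ((2*a+1 : ℕ) : ℚ) + 1 = 2*(a:ℚ)+2 := by push_cast; ring
            have c2 : ((2*(k-1-a)+1 : ℕ) : ℚ) + 1 = 2*((k:ℚ)-1-a)+2 := by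
              have : ((k-1-a : ℕ) : ℚ) = (k:ℚ)-1-a := by
                have hh : (k-1-a : ℕ) + a + 1 = k := by omega
                have := congrArg (fun x : ℕ => (x : ℚ)) hh
                push_cast at this
                linarith
              push_cast
              rw [this]
              ring
            rw [c1, c2]
          rw [hsum]
          rcases Nat.eq_zero_or_pos k with hk0 | hkpos
          · subst hk0
            have h2 : coeff (2*0+1+1) Z = (b 0 : ℚ) / ((Nat.factorial (0+1) : ℚ) * 2 ^ (0+1)) ^ 2 := hZ 0
            rw [b_zero] at h2
            norm_num at h2 ⊢
            rw [h2]
            norm_num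
          · rw [if_neg (by omega : ¬ 2*k+1 = 1), zero_add]
            -- LHS with b k
            rw [show (2*k+1+1 : ℕ) = 2*(k+1) from by ring, hZ k]
            -- use the recurrence
            have hb := b_rec k hkpos
            have hbq : (b k : ℚ) = ∑ a ∈ range k,
                ((k.choose (a+1) : ℚ) * (k.choose (k-a) : ℚ)) * (b a : ℚ) * (b (k-1-a) : ℚ) := by
              rw [hb]
              push_cast
              ring
            have key : ∀ a ∈ range k,
                (((k.choose (a+1) : ℚ) * (k.choose (k-a) : ℚ)) * (b a : ℚ) * (b (k-1-a) : ℚ))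
                  * ((2*(k:ℚ)+2)^2 / (((k+1).factorial : ℚ) * 2 ^ (k+1)) ^ 2)
                = ((b a : ℚ) / (((a+1).factorial : ℚ) * 2 ^ (a+1)) ^ 2 * (2*(a:ℚ)+2))
                  * ((b (k-1-a) : ℚ) / ((((k-1-a)+1).factorial : ℚ) * 2 ^ ((k-1-a)+1)) ^ 2
                      * (2*((k:ℚ)-1-a)+2)) := by
              intro a ha
              have ha' : a < k := Finset.mem_range.mp ha
              obtain ⟨c, hc⟩ : ∃ c, k = a + c + 1 := ⟨k - 1 - a, by omega⟩
              subst hc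
              rw [show (a+c+1-1-a : ℕ) = c from by omega,
                show (a+c+1-a : ℕ) = c+1 from by omega]
              have hterm := term_identity a c
              push_cast
              push_cast at hterm
              linear_combination ((b a : ℚ) * (b c : ℚ)) * hterm
            rw [← Finset.sum_congr rfl key]
            rw [← Finset.sum_mul, ← hbq]
            have c3 : ((2*k+1 : ℕ) : ℚ) + 1 = 2*(k:ℚ)+2 := by push_cast; ring
            have c4 : ((2*k : ℕ) : ℚ) + 1 = 2*(k:ℚ)+1 := by push_cast; ring
            rw [c3, c4]
            ring
        · -- m odd : everything vanishes
          have hm : m = 2*k+1 := by omega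
          subst hm
          rw [if_neg (by omega : ¬ 2*k+1+1 = 1),
            show (2*k+1+1+1 : ℕ) = 2*(k+1)+1 from by ring, hZodd (k+1)]
          rw [Finset.sum_eq_zero, add_zero]
          · ring
          intro i hi
          have hi' : i < 2*k+2 := mem_range.mp hi
          rcases Nat.even_or_odd i with ⟨e, he⟩ | ⟨e, he⟩
          · rw [coeff_derivative, show i+1 = 2*e+1 from by omega, hZodd e]
            ring
          · have h2 : 2*k+1-i = 2*(k-e) := by omega
            rw [mul_comm, coeff_derivative, show (2*k+1-i)+1 = 2*(k-e)+1 from by omega,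
              hZodd (k-e)]
            ring
  -- now the Riccati-type argument
  set W : PowerSeries ℚ := derivative ℚ Z * J₀ + derivative ℚ J₀ with hWdef
  have hDW : derivative ℚ W = derivative ℚ Z * derivative ℚ J₀
      + J₀ * derivative ℚ (derivative ℚ Z) + derivative ℚ (derivative ℚ J₀) := by
    rw [hWdef, map_add, Derivation.leibniz, smul_eq_mul, smul_eq_mul]
  have hW : X * derivative ℚ W + W = X * (derivative ℚ Z * W) := by
    rw [hDW, hWdef]
    linear_combination J₀ * odeZ + odeJ
  have hWz : ∀ n, coeff n W = 0 := by
    intro n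
    induction n using Nat.strong_induction_on with
    | _ n ih =>
      have h := congrArg (coeff n) hW
      cases n with
      | zero =>
          rw [map_add, coeff_zero_X_mul, coeff_zero_X_mul, zero_add] at h
          exact h
      | succ m =>
          rw [map_add, coeff_succ_X_mul, coeff_succ_X_mul, coeff_derivative, coeff_mul] at h
          rw [Finset.sum_eq_zero] at h
          · have hm2 : ((m:ℚ) + 1 + 1) ≠ 0 := by positivity
            have : coeff (m+1) W * ((m:ℚ)+1+1) = 0 := by push_cast at h ⊢; linarith
            exact (mul_eq_zero.mp this).resolve_right hm2
          · intro p hp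
            have hps := Finset.HasAntidiagonal.mem_antidiagonal.mp hp
            have : coeff p.2 W = 0 := ih p.2 (by omega)
            rw [this, mul_zero]
  have hW0 : W = 0 := by
    ext n
    rw [hWz n, map_zero]
  have : derivative ℚ Z * J₀ + derivative ℚ J₀ = 0 := by rw [← hWdef, hW0]
  linear_combination this
end

section
/- For every integer n ≥ 1, ∑_{k=0}^{n} (−1)^{n+k}·C(n+k, n−k)·Cat_k = 0, an identity in ℤ, where C(·,·) denotes the binomial coefficient. -/
private lemma choose_key (n k : ℕ) :
    (2*k+1)*((2*k+2)*Nat.choose (n+k+1) (2*k+2)) =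
      (n-k)*((n+k+1)*Nat.choose (n+k) (2*k)) := by
  have h1 : Nat.choose (n+k+1) (2*k+2) * (2*k+2) =
      Nat.choose (n+k+1) (2*k+1) * (n+k+1 - (2*k+1)) :=
    Nat.choose_succ_right_eq (n+k+1) (2*k+1)
  have h2 : (n+k+1) * Nat.choose (n+k) (2*k) =
      Nat.choose (n+k+1) (2*k+1) * (2*k+1) := by
    have := Nat.add_one_mul_choose_eq (n+k) (2*k)
    simpa [Nat.succ_eq_add_one] using this
  have hsub : n+k+1 - (2*k+1) = n - k := by omega
  rw [hsub] at h1
  calc (2*k+1)*((2*k+2)*Nat.choose (n+k+1) (2*k+2))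
      = (2*k+1)*(Nat.choose (n+k+1) (2*k+1) * (n-k)) := by rw [← h1]; ring
    _ = (n-k)*(Nat.choose (n+k+1) (2*k+1) * (2*k+1)) := by ring
    _ = (n-k)*((n+k+1)*Nat.choose (n+k) (2*k)) := by rw [← h2]

private lemma key2 (n k : ℕ) :
    ((k:ℤ)+1)*((k:ℤ)+2)*(Nat.choose (n+k+1) (2*k+2) : ℤ)*(catalan (k+1) : ℤ) =
      ((n-k : ℕ) : ℤ)*((n:ℤ)+k+1)*(Nat.choose (n+k) (2*k) : ℤ)*(catalan k : ℤ) := by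
  have h1 : ((k:ℤ)+2)*(catalan (k+1) : ℤ) = (Nat.centralBinom (k+1) : ℤ) := by
    exact_mod_cast congrArg (Nat.cast (R := ℤ)) (succ_mul_catalan_eq_centralBinom (k+1))
  have h2 : ((k:ℤ)+1)*(Nat.centralBinom (k+1) : ℤ) = 2*(2*(k:ℤ)+1)*(Nat.centralBinom k : ℤ) := by
    exact_mod_cast congrArg (Nat.cast (R := ℤ)) (Nat.succ_mul_centralBinom_succ k)
  have h3 : (Nat.centralBinom k : ℤ) = ((k:ℤ)+1)*(catalan k : ℤ) := by
    exact_mod_cast (congrArg (Nat.cast (R := ℤ)) (succ_mul_catalan_eq_centralBinom k)).symm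
  have h4 : (2*(k:ℤ)+1)*((2*(k:ℤ)+2)*(Nat.choose (n+k+1) (2*k+2) : ℤ)) =
      ((n-k : ℕ) : ℤ)*(((n:ℤ)+k+1)*(Nat.choose (n+k) (2*k) : ℤ)) := by
    exact_mod_cast congrArg (Nat.cast (R := ℤ)) (choose_key n k)
  linear_combination ((Nat.choose (n+k+1) (2*k+2) : ℤ) * ((k:ℤ)+1)) * h1 +
    (Nat.choose (n+k+1) (2*k+2) : ℤ) * h2 +
    (2*(2*(k:ℤ)+1)*(Nat.choose (n+k+1) (2*k+2) : ℤ)) * h3 +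
    (catalan k : ℤ) * h4

theorem catalan_alternating_identity (n : ℕ) (hn : 1 ≤ n) :
    ∑ k ∈ Finset.range (n + 1),
      (-1 : ℤ) ^ (n + k) * Nat.choose (n + k) (n - k) * catalan k = 0 := by
  set G : ℕ → ℤ := fun k =>
    (-1)^(k+1) * k * (k+1) * (Nat.choose (n+k) (2*k) : ℤ) * catalan k with hG
  have hterm : ∀ k ∈ Finset.range (n+1),
      (n:ℤ)*((n:ℤ)+1) * ((-1)^k * (Nat.choose (n+k) (2*k) : ℤ) * catalan k)
        = G (k+1) - G k := by
    intro k hk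
    have hk' : k ≤ n := Nat.lt_succ_iff.mp (Finset.mem_range.mp hk)
    have hkey := key2 n k
    have hcast : ((n-k : ℕ) : ℤ) = (n:ℤ) - k := by
      have := Nat.cast_sub (R := ℤ) hk'; exact this
    rw [hcast] at hkey
    simp only [hG]
    have e1 : n + (k+1) = n + k + 1 := by ring
    have e2 : 2*(k+1) = 2*k+2 := by ring
    rw [e1, e2]
    generalize (Nat.choose (n+k+1) (2*k+2) : ℤ) = B at hkey ⊢
    generalize (Nat.choose (n+k) (2*k) : ℤ) = A at hkey ⊢
    generalize (catalan (k+1) : ℤ) = Y at hkey ⊢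
    generalize (catalan k : ℤ) = X at hkey ⊢
    simp only [pow_succ]
    push_cast
    linear_combination (-((-1:ℤ)^k)) * hkey
  have hsum : (n:ℤ)*((n:ℤ)+1) *
      ∑ k ∈ Finset.range (n+1), (-1:ℤ)^k * (Nat.choose (n+k) (2*k) : ℤ) * catalan k = 0 := by
    rw [Finset.mul_sum, Finset.sum_congr rfl hterm, Finset.sum_range_sub]
    have hG0 : G 0 = 0 := by simp [hG]
    have hGn : G (n+1) = 0 := by
      have : Nat.choose (n+(n+1)) (2*(n+1)) = 0 :=
        Nat.choose_eq_zero_of_lt (by omega)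
      simp [hG, this]
    rw [hG0, hGn, sub_zero]
  have hne : (n:ℤ)*((n:ℤ)+1) ≠ 0 := by
    have : (1:ℤ) ≤ (n:ℤ) := by exact_mod_cast hn
    positivity
  have hzero : ∑ k ∈ Finset.range (n+1),
      (-1:ℤ)^k * (Nat.choose (n+k) (2*k) : ℤ) * catalan k = 0 :=
    (mul_eq_zero.mp hsum).resolve_left hne
  have hcongr : ∀ k ∈ Finset.range (n+1),
      (-1 : ℤ) ^ (n + k) * Nat.choose (n + k) (n - k) * catalan k
        = (-1:ℤ)^n * ((-1:ℤ)^k * (Nat.choose (n+k) (2*k) : ℤ) * catalan k) := by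
    intro k hk
    have hk' : k ≤ n := Nat.lt_succ_iff.mp (Finset.mem_range.mp hk)
    have hch : Nat.choose (n+k) (n-k) = Nat.choose (n+k) (2*k) := by
      have h2k : 2*k ≤ n+k := by omega
      have := Nat.choose_symm h2k
      have hd : n + k - 2*k = n - k := by omega
      rw [hd] at this
      exact this
    rw [hch, pow_add]
    ring
  rw [Finset.sum_congr rfl hcongr, ← Finset.mul_sum, hzero, mul_zero]
end

section
/- For all integers i ≥ 1 and 0 ≤ j ≤ i, ∑_{k=0}^{i} (−1)^{i+k}·C(i+k, i−k)·C(k+1, j+1)·C(k, j)·Cat_k = C(i+j, i−j)^2·Cat_j, an identity in ℤ, where C(·,·) denotes the binomial coefficient. -/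
set_option maxRecDepth 10000
set_option maxHeartbeats 1000000

/-- The summand of the identity. -/
def Fz (j i k : ℕ) : ℤ :=
  (-1 : ℤ) ^ (i + k) * Nat.choose (i + k) (i - k) * Nat.choose (k + 1) (j + 1) *
    Nat.choose k j * catalan k

/-- WZ certificate. -/
def Hz (j i k : ℕ) : ℤ :=
  (-1 : ℤ) ^ (i + k) * (i + 1) * ((k : ℤ) - j) * Nat.choose (i + k) (i + 1 - k) *
    Nat.choose (k + 1) (j + 1) * Nat.choose (k - 1) j * catalan k

lemma cat_rec (n : ℕ) : (n + 2) * catalan (n + 1) = 2 * (2 * n + 1) * catalan n := by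
  apply Nat.eq_of_mul_eq_mul_left (Nat.succ_pos n)
  calc (n + 1) * ((n + 2) * catalan (n + 1))
      = (n + 1 + 1) * catalan (n + 1) * (n + 1) := by ring
    _ = Nat.centralBinom (n + 1) * (n + 1) := by
        rw [succ_mul_catalan_eq_centralBinom]
    _ = (n + 1) * Nat.centralBinom (n + 1) := by ring
    _ = 2 * (2 * n + 1) * Nat.centralBinom n := Nat.succ_mul_centralBinom_succ n
    _ = 2 * (2 * n + 1) * ((n + 1) * catalan n) := by
        rw [succ_mul_catalan_eq_centralBinom]
    _ = (n + 1) * (2 * (2 * n + 1) * catalan n) := by ring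

lemma termId (j i k : ℕ) (hk : k ≤ i) :
    ((i : ℤ) + 1 - j) ^ 2 * Fz j (i + 1) k - ((i : ℤ) + 1 + j) ^ 2 * Fz j i k
      = Hz j i (k + 1) - Hz j i k := by
  rcases Nat.lt_or_ge k j with h | h
  · have h0 : Nat.choose k j = 0 := Nat.choose_eq_zero_of_lt h
    have h1 : Nat.choose (k - 1) j = 0 :=
      Nat.choose_eq_zero_of_lt (lt_of_le_of_lt (Nat.pred_le k) h)
    simp [Fz, Hz, h0, h1]
  · obtain ⟨b, rfl⟩ : ∃ b, k = j + b := ⟨k - j, by omega⟩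
    obtain ⟨c, rfl⟩ : ∃ c, i = j + b + c := ⟨i - (j + b), by omega⟩
    simp only [Fz, Hz]
    simp only [show j + b + c + 1 - (j + b) = c + 1 from by omega,
      show j + b + c - (j + b) = c from by omega,
      show j + b + c + 1 - (j + b + 1) = c from by omega,
      show j + b + 1 - 1 = j + b from by omega,
      show j + b + c + 1 + (j + b) = 2 * (j + b) + c + 1 from by omega,
      show j + b + c + (j + b + 1) = 2 * (j + b) + c + 1 from by omega,
      show j + b + c + (j + b) = 2 * (j + b) + c from by omega,
      show j + b + 1 + 1 = j + b + 2 from by omega]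
    simp only [pow_add, pow_mul, neg_one_sq, one_pow, one_mul, pow_one]
    rcases Nat.eq_zero_or_pos (j + b) with hK | hK
    · obtain ⟨hj0, hb0⟩ : j = 0 ∧ b = 0 := by omega
      subst hj0; subst hb0
      norm_num [Nat.choose_self, Nat.choose_succ_self_right, Nat.choose_succ_self,
        catalan_zero, catalan_one]
      ring
    · -- relations
      have R1 : ((c : ℤ) + 1) * Nat.choose (2 * (j + b) + c + 1) (c + 1)
          = (2 * ((j : ℤ) + b) + c + 1) * Nat.choose (2 * (j + b) + c) c := by
        have hh := Nat.add_one_mul_choose_eq (2 * (j + b) + c) c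
        zify at hh
        linarith [hh]
      have R2 : (2 * ((j : ℤ) + b) + 1) * Nat.choose (2 * (j + b) + c + 1) c
          = (2 * ((j : ℤ) + b) + c + 1) * Nat.choose (2 * (j + b) + c) c := by
        have hh := Nat.choose_mul_succ_eq (2 * (j + b) + c) c
        rw [show 2 * (j + b) + c + 1 - c = 2 * (j + b) + 1 from by omega] at hh
        zify at hh
        linarith [hh]
      have R3 : ((c : ℤ) + 1) * Nat.choose (2 * (j + b) + c) (c + 1)
          = 2 * ((j : ℤ) + b) * Nat.choose (2 * (j + b) + c) c := by
        have hh := Nat.choose_succ_right_eq (2 * (j + b) + c) c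
        rw [show 2 * (j + b) + c - c = 2 * (j + b) from by omega] at hh
        zify at hh
        linarith [hh]
      have R4 : ((b : ℤ) + 1) * Nat.choose (j + b + 2) (j + 1)
          = ((j : ℤ) + b + 2) * Nat.choose (j + b + 1) (j + 1) := by
        have hh := Nat.choose_mul_succ_eq (j + b + 1) (j + 1)
        rw [show j + b + 1 + 1 = j + b + 2 from by omega,
          show j + b + 2 - (j + 1) = b + 1 from by omega] at hh
        zify at hh
        linarith [hh]
      have R5 : ((j : ℤ) + b + 2) * catalan (j + b + 1)
          = 2 * (2 * ((j : ℤ) + b) + 1) * catalan (j + b) := by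
        have hh := cat_rec (j + b)
        zify at hh
        linarith [hh]
      have R6 : ((j : ℤ) + b) * Nat.choose (j + b - 1) j = (b : ℤ) * Nat.choose (j + b) j := by
        rcases Nat.eq_zero_or_pos b with hb | hb
        · subst hb
          rcases Nat.eq_zero_or_pos j with hj0 | hj0
        

          · subst hj0; simp
          · have h0 : Nat.choose (j + 0 - 1) j = 0 := Nat.choose_eq_zero_of_lt (by omega)
            rw [h0]
            simp
        · obtain ⟨B, rfl⟩ : ∃ B, b = B + 1 := ⟨b - 1, by omega⟩
          have hh := Nat.choose_mul_succ_eq (j + B) j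
          rw [show j + B + 1 - j = B + 1 from by omega] at hh
          rw [show j + (B + 1) - 1 = j + B from by omega,
            show j + (B + 1) = j + B + 1 from by omega]
          zify at hh
          push_cast
          linarith [hh]
      have hKne : ((j : ℤ) + b) * (2 * ((j : ℤ) + b) + 1) * ((c : ℤ) + 1) ≠ 0 := by
        have : (1 : ℤ) ≤ (j : ℤ) + b := by exact_mod_cast hK
        positivity
      simp only [Nat.cast_add, Nat.cast_one]
      apply mul_left_cancel₀ hKne
      linear_combination
        (-((b : ℤ) + c + 1) ^ 2 * ((j : ℤ) + (b : ℤ)) * (2 * ((j : ℤ) + (b : ℤ)) + 1) * ((Nat.choose (j + b + 1) (j + 1) : ℕ) : ℤ) * ((Nat.choose (j + b) j : ℕ) : ℤ) * ((catalan (j + b) : ℕ) : ℤ)) * (-1 : ℤ) ^ c * R1 +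
        ((((j : ℤ) + (b : ℤ)) + c + 1) * ((b : ℤ) + 1) * ((j : ℤ) + (b : ℤ)) * ((c : ℤ) + 1) * ((Nat.choose (j + b + 2) (j + 1) : ℕ) : ℤ) * ((Nat.choose (j + b) j : ℕ) : ℤ) * ((catalan (j + b + 1) : ℕ) : ℤ)) * (-1 : ℤ) ^ c * R2 +
        ((((j : ℤ) + (b : ℤ)) + c + 1) * ((b : ℤ)) * (2 * ((j : ℤ) + (b : ℤ)) + 1) * ((j : ℤ) + (b : ℤ)) * ((Nat.choose (j + b + 1) (j + 1) : ℕ) : ℤ) * ((Nat.choose (j + b - 1) j : ℕ) : ℤ) * ((catalan (j + b) : ℕ) : ℤ)) * (-1 : ℤ) ^ c * R3 +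
        ((((j : ℤ) + (b : ℤ)) + c + 1) * ((j : ℤ) + (b : ℤ)) * ((c : ℤ) + 1) * (2 * ((j : ℤ) + (b : ℤ)) + ((c : ℤ)) + 1) * ((Nat.choose (2 * (j + b) + c) c : ℕ) : ℤ) * ((Nat.choose (j + b) j : ℕ) : ℤ) * ((catalan (j + b + 1) : ℕ) : ℤ)) * (-1 : ℤ) ^ c * R4 +
        ((((j : ℤ) + (b : ℤ)) + c + 1) * ((j : ℤ) + (b : ℤ)) * ((c : ℤ) + 1) * (2 * ((j : ℤ) + (b : ℤ)) + ((c : ℤ)) + 1) * ((Nat.choose (2 * (j + b) + c) c : ℕ) : ℤ) * ((Nat.choose (j + b + 1) (j + 1) : ℕ) : ℤ) * ((Nat.choose (j + b) j : ℕ) : ℤ)) * (-1 : ℤ) ^ c * R5 +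
        ((((j : ℤ) + (b : ℤ)) + c + 1) * ((b : ℤ)) * (2 * ((j : ℤ) + (b : ℤ)) + 1) * 2 * ((j : ℤ) + (b : ℤ)) * ((Nat.choose (2 * (j + b) + c) c : ℕ) : ℤ) * ((Nat.choose (j + b + 1) (j + 1) : ℕ) : ℤ) * ((catalan (j + b) : ℕ) : ℤ)) * (-1 : ℤ) ^ c * R6

lemma Hz_zero (j i : ℕ) : Hz j i 0 = 0 := by
  rcases Nat.eq_zero_or_pos j with hj | hj
  · subst hj; simp [Hz]
  · have : Nat.choose (0 - 1) j = 0 := Nat.choose_eq_zero_of_lt (by omega)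
    simp [Hz, this]

lemma boundary (j i : ℕ) (hj : j ≤ i) :
    Hz j i (i + 1) = -(((i : ℤ) + 1 - j) ^ 2 * Fz j (i + 1) (i + 1)) := by
  simp only [Fz, Hz]
  simp only [show i + 1 - (i + 1) = 0 from by omega, show i + 1 - 1 = i from by omega,
    show i + (i + 1) = 2 * i + 1 from by omega, show i + 1 + (i + 1) = 2 * (i + 1) from by omega]
  simp only [pow_add, pow_mul, neg_one_sq, one_pow, one_mul, pow_one, Nat.choose_zero_right,
    Nat.cast_one, mul_one]
  have hh := Nat.choose_mul_succ_eq i j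
  have hcast : ((i + 1 - j : ℕ) : ℤ) = (i : ℤ) + 1 - j := by
    have : j ≤ i + 1 := by omega
    push_cast [this]; ring
  have hh' : (Nat.choose i j : ℤ) * ((i : ℤ) + 1) = (Nat.choose (i + 1) j : ℤ) * ((i : ℤ) + 1 - j) := by
    zify [show j ≤ i + 1 from by omega] at hh
    linarith [hh]
  push_cast
  linear_combination (-((i : ℤ) + 1 - j) * (Nat.choose (i + 1 + 1) (j + 1) : ℤ) * (catalan (i + 1) : ℤ)) * hh'

lemma recur (j i : ℕ) (hj : j ≤ i) :
    ((i : ℤ) + 1 - j) ^ 2 * ∑ k ∈ Finset.range (i + 2), Fz j (i + 1) k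
      = ((i : ℤ) + 1 + j) ^ 2 * ∑ k ∈ Finset.range (i + 1), Fz j i k := by
  rw [Finset.sum_range_succ, mul_add, Finset.mul_sum, Finset.mul_sum]
  have hsum : ∑ k ∈ Finset.range (i + 1), ((i : ℤ) + 1 - j) ^ 2 * Fz j (i + 1) k
      = ∑ k ∈ Finset.range (i + 1),
          (((i : ℤ) + 1 + j) ^ 2 * Fz j i k + (Hz j i (k + 1) - Hz j i k)) := by
    refine Finset.sum_congr rfl fun k hk => ?_
    have := termId j i k (by simpa using Nat.lt_succ_iff.mp (Finset.mem_range.mp hk))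
    linarith [this]
  rw [hsum, Finset.sum_add_distrib, Finset.sum_range_sub (Hz j i)]
  rw [Hz_zero, boundary j i hj]
  ring

lemma base_case (j : ℕ) : ∑ k ∈ Finset.range (j + 1), Fz j j k = catalan j := by
  rw [Finset.sum_range_succ,
    Finset.sum_eq_zero fun k hk => by
      have h0 : Nat.choose k j = 0 := Nat.choose_eq_zero_of_lt (Finset.mem_range.mp hk)
      simp [Fz, h0]]
  simp only [Fz, show j + j = 2 * j from by omega, Nat.sub_self, Nat.choose_zero_right,
    Nat.choose_self, pow_mul, neg_one_sq, one_pow]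
  push_cast
  ring

lemma mainAux (j d : ℕ) :
    ∑ k ∈ Finset.range (j + d + 1), Fz j (j + d) k
      = (Nat.choose (j + d + j) d : ℤ) ^ 2 * catalan j := by
  induction d with
  | zero => simpa using base_case j
  | succ d ih =>
    have hrec := recur j (j + d) (by omega)
    rw [ih] at hrec
    have hrec' : ((d : ℤ) + 1) ^ 2 * ∑ k ∈ Finset.range (j + d + 2), Fz j (j + d + 1) k
        = ((j : ℤ) + d + 1 + j) ^ 2 * ((Nat.choose (j + d + j) d : ℤ) ^ 2 * catalan j) := by
      push_cast at hrec ⊢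
      linear_combination hrec
    have h2 : ((d : ℤ) + 1) * Nat.choose (j + d + 1 + j) (d + 1)
        = ((j : ℤ) + d + 1 + j) * Nat.choose (j + d + j) d := by
      have hh := Nat.add_one_mul_choose_eq (j + d + j) d
      rw [show j + d + j + 1 = j + d + 1 + j from by omega] at hh
      zify at hh
      linarith [hh]
    have hd : ((d : ℤ) + 1) ^ 2 ≠ 0 := by positivity
    apply mul_left_cancel₀ hd
    rw [show j + (d + 1) = j + d + 1 from by omega, show j + d + 1 + 1 = j + d + 2 from by omega]
    rw [hrec']
    linear_combination (-(((d : ℤ) + 1) * Nat.choose (j + d + 1 + j) (d + 1)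
      + ((j : ℤ) + d + 1 + j) * Nat.choose (j + d + j) d)) * (catalan j : ℤ) * h2

theorem catalan_binomial_identity (i j : ℕ) (hi : 1 ≤ i) (hj : j ≤ i) :
    ∑ k ∈ Finset.range (i + 1),
      (-1 : ℤ) ^ (i + k) * Nat.choose (i + k) (i - k) * Nat.choose (k + 1) (j + 1) *
        Nat.choose k j * catalan k =
      (Nat.choose (i + j) (i - j) : ℤ) ^ 2 * catalan j := by
  obtain ⟨d, rfl⟩ : ∃ d, i = j + d := ⟨i - j, by omega⟩
  have h := mainAux j d
  simp only [Fz] at h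
  rw [show j + d - j = d from by omega]
  exact h
end

section
/- WZ-pair identity: fix integers i ≥ 1 and 0 ≤ j ≤ i, and for integers m ≥ 1 and k ≥ 0 define the rational numbers F(m,k) = (−1)^{m+k}·C(m+k, m−k)·C(k+1, j+1)·C(k, j)·Cat_k / (C(m+j, m−j)^2·Cat_j) and G(m,k) = (−1)^{m+k}·C(m+k+1, m−k+1)·C(k+1, j+1)·C(k, j)·Cat_k·2(m+1)(k−j)^2 / (C(m+j, m−j)^2·Cat_j·(m+j+1)^2·(m+k+1)), where by convention the binomial coefficient C(a, b) equals 0 whenever b < 0 (subtractions taken in ℤ, so C(m+k, m−k) = 0 for k > m). Then for every k ≥ 0, F(i+1, k) − F(i, k) = G(i, k+1) − G(i, k). -/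
/-- Binomial coefficient `C(a, b)` with an integer lower index, equal to `0` when `b < 0`. -/
def ichoose (a : ℕ) (b : ℤ) : ℚ :=
  if b < 0 then 0 else (a.choose b.toNat : ℚ)

/-- The WZ proof certificate's `F(m, k)`, for a fixed parameter `j`. -/
noncomputable def Fwz (j m k : ℕ) : ℚ :=
  ((-1 : ℚ) ^ (m + k) * ichoose (m + k) ((m : ℤ) - k) * (Nat.choose (k + 1) (j + 1) : ℚ) *
      (Nat.choose k j : ℚ) * (catalan k : ℚ)) /
    ((ichoose (m + j) ((m : ℤ) - j)) ^ 2 * (catalan j : ℚ))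

/-- The WZ proof certificate's `G(m, k)`, for a fixed parameter `j`. -/
noncomputable def Gwz (j m k : ℕ) : ℚ :=
  ((-1 : ℚ) ^ (m + k) * ichoose (m + k + 1) ((m : ℤ) - k + 1) *
      (Nat.choose (k + 1) (j + 1) : ℚ) * (Nat.choose k j : ℚ) * (catalan k : ℚ) *
      (2 * ((m : ℚ) + 1) * ((k : ℚ) - (j : ℚ)) ^ 2)) /
    ((ichoose (m + j) ((m : ℤ) - j)) ^ 2 * (catalan j : ℚ) * ((m : ℚ) + (j : ℚ) + 1) ^ 2 *
      ((m : ℚ) + (k : ℚ) + 1))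

lemma ichoose_nonneg (a : ℕ) (b : ℤ) (h : 0 ≤ b) : ichoose a b = (a.choose b.toNat : ℚ) := by
  simp [ichoose, not_lt.mpr h]


lemma ichoose_neg (a : ℕ) (b : ℤ) (h : b < 0) : ichoose a b = 0 := by simp [ichoose, h]

lemma catalan_pos' (n : ℕ) : 0 < catalan n := by
  have h := succ_mul_catalan_eq_centralBinom n
  have h2 := n.centralBinom_pos
  exact Nat.pos_of_ne_zero fun h0 => by simp [h0] at h; omega

lemma choose_upper (n r : ℕ) : (n+1) * n.choose r = (n+1).choose r * (n+1-r) := by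
  rw [Nat.add_one_mul_choose_eq, Nat.choose_succ_right_eq]

lemma cat_succ (k : ℕ) : (k+2) * catalan (k+1) = 2*(2*k+1) * catalan k := by
  have h1 := succ_mul_catalan_eq_centralBinom (k+1)
  have h2 := succ_mul_catalan_eq_centralBinom k
  have h3 := Nat.succ_mul_centralBinom_succ k
  rw [show k+1+1 = k+2 from by omega] at h1
  have key : (k+1) * ((k+2) * catalan (k+1)) = (k+1) * (2*(2*k+1) * catalan k) := by
    calc (k+1) * ((k+2) * catalan (k+1)) = (k+1) * (k+1).centralBinom := by rw [h1]
    _ = 2*(2*k+1) * k.centralBinom := h3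
    _ = 2*(2*k+1) * ((k+1) * catalan k) := by rw [h2]
    _ = (k+1) * (2*(2*k+1) * catalan k) := by ring
  exact Nat.eq_of_mul_eq_mul_left (by omega) key


set_option maxHeartbeats 1600000 in
lemma main_case (i j k : ℕ) (hj : j ≤ i) (hk : k ≤ i) (hjk : j ≤ k) :
    Fwz j (i + 1) k - Fwz j i k = Gwz j i (k + 1) - Gwz j i k := by
  rw [Fwz, Fwz, Gwz, Gwz]
  rw [ichoose_nonneg (i+1+k) _ (by omega), ichoose_nonneg (i+k) _ (by omega),
      ichoose_nonneg (i+1+j) _ (by omega), ichoose_nonneg (i+j) _ (by omega),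
      ichoose_nonneg (i+(k+1)+1) _ (by omega), ichoose_nonneg (i+k+1) _ (by omega)]
  rw [show ((i+1:ℕ):ℤ) - (k:ℤ) = ((i+1-k : ℕ):ℤ) from by omega,
      show ((i:ℕ):ℤ) - (k:ℤ) = ((i-k : ℕ):ℤ) from by omega,
      show ((i+1:ℕ):ℤ) - (j:ℤ) = ((i+1-j : ℕ):ℤ) from by omega,
      show ((i:ℕ):ℤ) - (j:ℤ) = ((i-j : ℕ):ℤ) from by omega,
      show ((i:ℕ):ℤ) - ((k+1:ℕ):ℤ) + 1 = ((i-k : ℕ):ℤ) from by omega,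
      show ((i-k:ℕ):ℤ) + 1 = ((i-k+1 : ℕ):ℤ) from by omega]
  simp only [Int.toNat_natCast]
  rw [show i+1+k = i+k+1 from by omega, show i+1-k = i-k+1 from by omega,
      show i+1+j = i+j+1 from by omega, show i+1-j = i-j+1 from by omega,
      show i+(k+1)+1 = i+k+2 from by omega, show k+1+1 = k+2 from by omega,
      show i+(k+1) = i+k+1 from by omega]
  have hk' : (k:ℚ) ≤ (i:ℚ) := by exact_mod_cast hk
  have hj' : (j:ℚ) ≤ (i:ℚ) := by exact_mod_cast hj
  have hjk' : (j:ℚ) ≤ (k:ℚ) := by exact_mod_cast hjk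
  have hJ0 : (0:ℚ) ≤ (j:ℚ) := by positivity
  have hK0 : (0:ℚ) ≤ (k:ℚ) := by positivity
  have hIK : ((i-k : ℕ):ℚ) = (i:ℚ) - (k:ℚ) := by rw [Nat.cast_sub hk]
  have hIJ : ((i-j : ℕ):ℚ) = (i:ℚ) - (j:ℚ) := by rw [Nat.cast_sub hj]
  have hKJ : ((k-j : ℕ):ℚ) = (k:ℚ) - (j:ℚ) := by rw [Nat.cast_sub hjk]
  have hb : (0:ℚ) < ((i+j).choose (i-j) : ℚ) := by
    exact_mod_cast Nat.choose_pos (by omega)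
  have hq : (0:ℚ) < (catalan j : ℚ) := by exact_mod_cast catalan_pos' j
  have ha : (0:ℚ) < ((i+k).choose (i-k) : ℚ) := by
    exact_mod_cast Nat.choose_pos (by omega)
  have e1 : (((i+k+1).choose (i-k+1)) : ℚ) =
      ((i+k).choose (i-k) : ℚ) * ((i:ℚ)+(k:ℚ)+1) / ((i:ℚ)-(k:ℚ)+1) := by
    rw [eq_div_iff (by linarith)]
    have h := congrArg (Nat.cast : ℕ → ℚ) (Nat.add_one_mul_choose_eq (i+k) (i-k))
    push_cast [hIK] at h
    linear_combination -h
  have e2 : (((i+j+1).choose (i-j+1)) : ℚ) =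
      ((i+j).choose (i-j) : ℚ) * ((i:ℚ)+(j:ℚ)+1) / ((i:ℚ)-(j:ℚ)+1) := by
    rw [eq_div_iff (by linarith)]
    have h := congrArg (Nat.cast : ℕ → ℚ) (Nat.add_one_mul_choose_eq (i+j) (i-j))
    push_cast [hIJ] at h
    linear_combination -h
  have u1 := congrArg (Nat.cast : ℕ → ℚ) (choose_upper (i+k) (i-k))
  rw [show i+k+1-(i-k) = 2*k+1 from by omega] at u1
  have u2 := congrArg (Nat.cast : ℕ → ℚ) (choose_upper (i+k+1) (i-k))
  rw [show i+k+1+1 = i+k+2 from by omega, show i+k+2-(i-k) = 2*k+2 from by omega] at u2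
  push_cast [hIK] at u1 u2
  have e3 : (((i+k+2).choose (i-k)) : ℚ) =
      ((i+k).choose (i-k) : ℚ) * ((i:ℚ)+(k:ℚ)+1) * ((i:ℚ)+(k:ℚ)+2) / ((2*(k:ℚ)+1)*(2*(k:ℚ)+2)) := by
    rw [eq_div_iff (by positivity)]
    linear_combination -(2*(k:ℚ)+1)*u2 - ((i:ℚ)+(k:ℚ)+2)*u1
  have u3 := congrArg (Nat.cast : ℕ → ℚ) (choose_upper (k+1) (j+1))
  rw [show k+1+1 = k+2 from by omega, show k+1+1-(j+1) = k-j+1 from by omega] at u3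
  push_cast [hKJ] at u3
  have e4 : (((k+2).choose (j+1)) : ℚ) =
      ((k+1).choose (j+1) : ℚ) * ((k:ℚ)+2) / ((k:ℚ)-(j:ℚ)+1) := by
    rw [eq_div_iff (by linarith)]
    linear_combination -u3
  have u4 := congrArg (Nat.cast : ℕ → ℚ) (choose_upper k j)
  rw [show k+1-j = k-j+1 from by omega] at u4
  push_cast [hKJ] at u4
  have e5 : (((k+1).choose j) : ℚ) = (k.choose j : ℚ) * ((k:ℚ)+1) / ((k:ℚ)-(j:ℚ)+1) := by
    rw [eq_div_iff (by linarith)]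
    linear_combination -u4
  have u5 := congrArg (Nat.cast : ℕ → ℚ) (cat_succ k)
  push_cast at u5
  have e6 : ((catalan (k+1)) : ℚ) = 2*(2*(k:ℚ)+1) * (catalan k : ℚ) / ((k:ℚ)+2) := by
    rw [eq_div_iff (by positivity)]
    linear_combination u5
  rw [e1, e2, e3, e4, e5, e6]
  rw [pow_succ]
  push_cast
  have n1 : ((i:ℚ)-(k:ℚ)+1) ≠ 0 := by linarith
  have n2 : ((i:ℚ)-(j:ℚ)+1) ≠ 0 := by linarith
  have n3 : ((i:ℚ)+(j:ℚ)+1) ≠ 0 := by linarith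
  have n4 : ((i:ℚ)+(k:ℚ)+1) ≠ 0 := by linarith
  have n5 : ((i:ℚ)+(k:ℚ)+2) ≠ 0 := by linarith
  have n6 : ((k:ℚ)-(j:ℚ)+1) ≠ 0 := by linarith
  have n7 : ((k:ℚ)+2) ≠ 0 := by linarith
  have n8 : (2*(k:ℚ)+1) ≠ 0 := by linarith
  have n9 : (2*(k:ℚ)+2) ≠ 0 := by linarith
  field_simp [hb.ne', hq.ne']
  ring

lemma Fwz_zero_of_lt (j m k : ℕ) (h : k < j) : Fwz j m k = 0 := by
  simp [Fwz, Nat.choose_eq_zero_of_lt h]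

lemma Gwz_zero_of_lt (j m k : ℕ) (h : k < j) : Gwz j m k = 0 := by
  simp [Gwz, Nat.choose_eq_zero_of_lt h]

lemma Gwz_zero_of_eq (j m k : ℕ) (h : k = j) : Gwz j m k = 0 := by
  simp [Gwz, h]

lemma Fwz_zero_big (j m k : ℕ) (h : m < k) : Fwz j m k = 0 := by
  rw [Fwz, ichoose_neg _ _ (by push_cast; omega)]
  simp

lemma Gwz_zero_big (j m k : ℕ) (h : m + 1 < k) : Gwz j m k = 0 := by
  rw [Gwz, ichoose_neg _ _ (by push_cast; omega)]
  simp

lemma boundary_case (i j : ℕ) (hj : j ≤ i) :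
    Fwz j (i + 1) (i + 1) = - Gwz j i (i + 1) := by
  rw [Fwz, Gwz]
  rw [ichoose_nonneg (i+1+(i+1)) _ (by omega), ichoose_nonneg (i+1+j) _ (by omega),
      ichoose_nonneg (i+(i+1)+1) _ (by omega), ichoose_nonneg (i+j) _ (by omega)]
  rw [show ((i+1:ℕ):ℤ) - ((i+1:ℕ):ℤ) = ((0:ℕ):ℤ) from by omega,
      show ((i:ℕ):ℤ) - ((i+1:ℕ):ℤ) + 1 = ((0:ℕ):ℤ) from by omega,
      show ((i+1:ℕ):ℤ) - (j:ℤ) = ((i+1-j : ℕ):ℤ) from by omega,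
      show ((i:ℕ):ℤ) - (j:ℤ) = ((i-j : ℕ):ℤ) from by omega]
  simp only [Int.toNat_natCast, Nat.choose_zero_right, Nat.cast_one, mul_one]
  rw [show i+1+j = i+j+1 from by omega, show i+1-j = i-j+1 from by omega,
      show i+1+(i+1) = (i+(i+1))+1 from by omega, pow_succ]
  have hj' : (j:ℚ) ≤ (i:ℚ) := by exact_mod_cast hj
  have hJ0 : (0:ℚ) ≤ (j:ℚ) := by positivity
  have hIJ : ((i-j : ℕ):ℚ) = (i:ℚ) - (j:ℚ) := by rw [Nat.cast_sub hj]
  have hb : (0:ℚ) < ((i+j).choose (i-j) : ℚ) := by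
    exact_mod_cast Nat.choose_pos (by omega)
  have hq : (0:ℚ) < (catalan j : ℚ) := by exact_mod_cast catalan_pos' j
  have e2 : (((i+j+1).choose (i-j+1)) : ℚ) =
      ((i+j).choose (i-j) : ℚ) * ((i:ℚ)+(j:ℚ)+1) / ((i:ℚ)-(j:ℚ)+1) := by
    rw [eq_div_iff (by linarith)]
    have h := congrArg (Nat.cast : ℕ → ℚ) (Nat.add_one_mul_choose_eq (i+j) (i-j))
    push_cast [hIJ] at h
    linear_combination -h
  rw [e2]
  push_cast
  have n2 : ((i:ℚ)-(j:ℚ)+1) ≠ 0 := by linarith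
  have n3 : ((i:ℚ)+(j:ℚ)+1) ≠ 0 := by linarith
  have n4 : ((i:ℚ)+((i:ℚ)+1)+1) ≠ 0 := by linarith
  field_simp [hb.ne', hq.ne']
  ring

theorem wz_pair_identity (i j : ℕ) (hi : 1 ≤ i) (hj : j ≤ i) (k : ℕ) :
    Fwz j (i + 1) k - Fwz j i k = Gwz j i (k + 1) - Gwz j i k := by
  rcases lt_or_ge i k with hik | hik
  · -- k ≥ i+1
    rcases eq_or_lt_of_le (Nat.succ_le_of_lt hik) with hk1 | hk2
    · -- k = i+1
      have hk3 : k = i + 1 := by omega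
      subst hk3
      rw [Fwz_zero_big j i (i+1) (by omega), Gwz_zero_big j i (i+1+1) (by omega),
          boundary_case i j hj]
      ring
    · -- k ≥ i+2
      rw [Fwz_zero_big _ _ _ (by omega), Fwz_zero_big _ _ _ (by omega),
          Gwz_zero_big _ _ _ (by omega), Gwz_zero_big _ _ _ (by omega)]
  · -- k ≤ i
    rcases lt_or_ge k j with hkj | hkj
    · rw [Fwz_zero_of_lt _ _ _ hkj, Fwz_zero_of_lt _ _ _ hkj, Gwz_zero_of_lt _ _ _ hkj]
      rcases eq_or_lt_of_le (Nat.succ_le_of_lt hkj) with h1 | h2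
      · rw [Gwz_zero_of_eq _ _ _ h1]
      · rw [Gwz_zero_of_lt _ _ _ h2]
    · exact main_case i j k hj hik hkj
end

section
/- For every parallelogram polyomino P, the set S(P) of cells of P that are first in their row or first in their column is a non-ambiguous tree. -/
/-- A parallelogram polyomino, as a finite set of unit cells. -/
def IsPP (P : Finset (ℕ × ℕ)) : Prop :=
  ∃ (h : ℕ) (l r : ℕ → ℕ),
    (∀ p ∈ P, p.1 ≤ h) ∧
    (∀ x ≤ h, ∀ y : ℕ, ((x, y) ∈ P ↔ l x ≤ y ∧ y ≤ r x)) ∧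
    (∀ x ≤ h, l x ≤ r x) ∧
    l 0 = 0 ∧
    (∀ x < h, l x ≤ l (x + 1) ∧ r x ≤ r (x + 1) ∧ l (x + 1) ≤ r x)

/-- The cells of `P` that are enlightened: first in their row or first in their column. -/
def SP (P : Finset (ℕ × ℕ)) : Finset (ℕ × ℕ) :=
  P.filter (fun p => (∀ y' < p.2, (p.1, y') ∉ P) ∨ (∀ x' < p.1, (x', p.2) ∉ P))

theorem sp_is_nat (P : Finset (ℕ × ℕ)) (hP : IsPP P) : IsNAT (SP P) := by
  classical
  obtain ⟨h, l, r, hle, hm, hlr, hl0, hstep⟩ := hP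
  have hSPmem : ∀ p : ℕ × ℕ, p ∈ SP P ↔ p ∈ P ∧
      ((∀ y' < p.2, (p.1, y') ∉ P) ∨ (∀ x' < p.1, (x', p.2) ∉ P)) := by
    intro p; simp [SP, Finset.mem_filter]
  -- the first cell of each row is in SP
  have hrow : ∀ x ≤ h, (x, l x) ∈ SP P := by
    intro x hx
    rw [hSPmem]
    refine ⟨(hm x hx (l x)).mpr ⟨le_refl _, hlr x hx⟩, Or.inl ?_⟩
    intro y' hy' hmem
    exact absurd ((hm x hx y').mp hmem).1 (not_le.mpr hy')
  -- for every column occupied somewhere up to X, the minimal cell of that column is in SP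
  have hcol : ∀ y X, X ≤ h → y ≤ r X →
      ∃ x0 ≤ X, (x0, y) ∈ SP P ∧ ∀ x' < x0, (x', y) ∉ P := by
    intro y X hX hyr
    have hex : ∃ x, y ≤ r x := ⟨X, hyr⟩
    set x0 := Nat.find hex with hx0
    have hx0X : x0 ≤ X := Nat.find_min' hex hyr
    have hx0h : x0 ≤ h := le_trans hx0X hX
    have hly : l x0 ≤ y := by
      rcases Nat.eq_zero_or_pos x0 with h0 | h0
      · rw [h0, hl0]; exact Nat.zero_le y
      · have h1 : ¬ y ≤ r (x0 - 1) := Nat.find_min hex (Nat.sub_lt h0 one_pos)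
        have h0' : 1 ≤ x0 := h0
        have h2 : l x0 ≤ r (x0 - 1) := by
          have := (hstep (x0 - 1) (lt_of_lt_of_le (Nat.sub_lt h0 one_pos) hx0h)).2.2
          rwa [Nat.sub_add_cancel h0'] at this
        omega
    have hmem : (x0, y) ∈ P := (hm x0 hx0h y).mpr ⟨hly, Nat.find_spec hex⟩
    have hnot : ∀ x' < x0, (x', y) ∉ P := by
      intro x' hx' hmem'
      have : y ≤ r x' := ((hm x' (le_trans (le_of_lt hx') hx0h) y).mp hmem').2
      exact Nat.find_min hex hx' this
    exact ⟨x0, hx0X, (hSPmem _).mpr ⟨hmem, Or.inr hnot⟩, hnot⟩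
  refine ⟨?_, ?_, ?_⟩
  · have := hrow 0 (Nat.zero_le h)
    rwa [hl0] at this
  · rintro ⟨x, y⟩ hp hne
    rw [hSPmem] at hp
    obtain ⟨hpP, hdisj⟩ := hp
    have hxh : x ≤ h := hle _ hpP
    have hly : l x ≤ y := ((hm x hxh y).mp hpP).1
    have hyr : y ≤ r x := ((hm x hxh y).mp hpP).2
    rcases Nat.eq_zero_or_pos x with hx0 | hx0
    · subst hx0
      have hy0 : 0 < y := by
        rcases Nat.eq_zero_or_pos y with h0 | h0
        · subst h0; exact absurd rfl hne
        · exact h0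
      left
      constructor
      · refine ⟨(0, y - 1), ?_, rfl, Nat.sub_lt hy0 one_pos⟩
        rw [hSPmem]
        refine ⟨(hm 0 (Nat.zero_le h) (y - 1)).mpr
          ⟨by rw [hl0]; exact Nat.zero_le _, le_trans (Nat.sub_le y 1) hyr⟩,
          Or.inr ?_⟩
        intro x' hx'; omega
      · rintro ⟨q, hq, hq2, hq1⟩
        omega
    · rcases eq_or_lt_of_le hly with heq | hlt
      · right
        constructor
        · have hxm1h : x - 1 ≤ h := le_trans (Nat.sub_le x 1) hxh
          have hyrxm1 : y ≤ r (x - 1) := by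
            have hx0' : 1 ≤ x := hx0
            have := (hstep (x - 1) (lt_of_lt_of_le (Nat.sub_lt hx0 one_pos) hxh)).2.2
            rw [Nat.sub_add_cancel hx0'] at this
            omega
          obtain ⟨x0, hx0le, hx0SP, _⟩ := hcol y (x - 1) hxm1h hyrxm1
          exact ⟨(x0, y), hx0SP, rfl, lt_of_le_of_lt hx0le (Nat.sub_lt hx0 one_pos)⟩
        · rintro ⟨q, hq, hq1, hq2⟩
          rw [hSPmem] at hq
          have hq1' : q.1 = x := hq1
          have h1 : l q.1 ≤ q.2 :=
            ((hm q.1 (hle _ hq.1) q.2).mp (by simpa using hq.1)).1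
          rw [hq1'] at h1
          omega
      · have hnotrow : ¬ (∀ y' < y, (x, y') ∉ P) := by
          intro hall
          exact hall (l x) hlt ((hm x hxh (l x)).mpr ⟨le_refl _, hlr x hxh⟩)
        have hcolfirst : ∀ x' < x, (x', y) ∉ P := hdisj.resolve_left hnotrow
        left
        constructor
        · exact ⟨(x, l x), hrow x hxh, rfl, hlt⟩
        · rintro ⟨q, hq, hq2, hq1⟩
          rw [hSPmem] at hq
          have hq2' : q.2 = y := hq2
          exact hcolfirst q.1 hq1 (by rw [← hq2']; simpa using hq.1)
  · rintro ⟨x, y⟩ hp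
    rw [hSPmem] at hp
    have hxh : x ≤ h := hle _ hp.1
    have hyr : y ≤ r x := ((hm x hxh y).mp hp.1).2
    constructor
    · intro x' hx'
      exact ⟨(x', l x'), hrow x' (le_trans (le_of_lt hx') hxh), rfl⟩
    · intro y' hy'
      obtain ⟨x0, _, hSP, _⟩ := hcol y' x hxh (le_trans (le_of_lt hy') hyr)
      exact ⟨(x0, y'), hSP, rfl⟩
end

section
/- Let P and P' be parallelogram polyominoes. If the non-ambiguous trees S(P) and S(P') are isomorphic (i.e. P and P' have the same underlying binary tree), then P = P'. -/
/-- `q` is the parent of `p`, with `p` a left child, in the non-ambiguous tree `A`. -/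
def LeftParent (A : Finset (ℕ × ℕ)) (p q : ℕ × ℕ) : Prop :=
  p ∈ A ∧ q ∈ A ∧ q.2 = p.2 ∧ q.1 < p.1 ∧
    ∀ r ∈ A, r.2 = p.2 → r.1 < p.1 → r.1 ≤ q.1

/-- `q` is the parent of `p`, with `p` a right child, in the non-ambiguous tree `A`. -/
def RightParent (A : Finset (ℕ × ℕ)) (p q : ℕ × ℕ) : Prop :=
  p ∈ A ∧ q ∈ A ∧ q.1 = p.1 ∧ q.2 < p.2 ∧
    ∀ r ∈ A, r.1 = p.1 → r.2 < p.2 → r.2 ≤ q.2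

/-- Two non-ambiguous trees are isomorphic (have the same underlying binary tree). -/
def NATIso (A A' : Finset (ℕ × ℕ)) : Prop :=
  ∃ f : ℕ × ℕ → ℕ × ℕ, Set.BijOn f (↑A) (↑A') ∧ f (0, 0) = (0, 0) ∧
    ∀ p ∈ A, ∀ q ∈ A,
      (LeftParent A p q ↔ LeftParent A' (f p) (f q)) ∧
      (RightParent A p q ↔ RightParent A' (f p) (f q))

namespace NATAux


def Good (P : Finset (ℕ × ℕ)) (h : ℕ) (l r : ℕ → ℕ) : Prop :=
  (∀ p ∈ P, p.1 ≤ h) ∧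
  (∀ x ≤ h, ∀ y : ℕ, ((x, y) ∈ P ↔ l x ≤ y ∧ y ≤ r x)) ∧
  (∀ x ≤ h, l x ≤ r x) ∧
  l 0 = 0 ∧
  (∀ x < h, l x ≤ l (x + 1) ∧ r x ≤ r (x + 1) ∧ l (x + 1) ≤ r x)

variable {P : Finset (ℕ × ℕ)} {h : ℕ} {l r : ℕ → ℕ}

theorem mem_iff (hd : Good P h l r) {x y : ℕ} :
    (x, y) ∈ P ↔ x ≤ h ∧ l x ≤ y ∧ y ≤ r x := by
  constructor
  · intro hm
    have hx := hd.1 _ hm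
    exact ⟨hx, (hd.2.1 x hx y).1 hm⟩
  · rintro ⟨hx, h2⟩
    exact (hd.2.1 x hx y).2 h2

theorem l_mono (hd : Good P h l r) {x x' : ℕ} (hxx : x ≤ x') (hx' : x' ≤ h) : l x ≤ l x' := by
  induction x' with
  | zero => have : x = 0 := Nat.le_zero.mp hxx; subst this; exact le_refl _
  | succ n ih =>
    rcases Nat.lt_or_ge x (n + 1) with hlt | hge
    · have h1 : l x ≤ l n := ih (by omega) (by omega)
      have h2 : l n ≤ l (n + 1) := (hd.2.2.2.2 n (by omega)).1
      omega
    · have : x = n + 1 := by omega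
      subst this; exact le_refl _

theorem r_mono (hd : Good P h l r) {x x' : ℕ} (hxx : x ≤ x') (hx' : x' ≤ h) : r x ≤ r x' := by
  induction x' with
  | zero => have : x = 0 := Nat.le_zero.mp hxx; subst this; exact le_refl _
  | succ n ih =>
    rcases Nat.lt_or_ge x (n + 1) with hlt | hge
    · have h1 : r x ≤ r n := ih (by omega) (by omega)
      have h2 : r n ≤ r (n + 1) := (hd.2.2.2.2 n (by omega)).2.1
      omega
    · have : x = n + 1 := by omega
      subst this; exact le_refl _

theorem l_zero (hd : Good P h l r) : l 0 = 0 := hd.2.2.2.1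

theorem l_le_r (hd : Good P h l r) : ∀ x ≤ h, l x ≤ r x := hd.2.2.1

theorem root_mem (hd : Good P h l r) : ((0, 0) : ℕ × ℕ) ∈ P := by
  rw [mem_iff hd]
  refine ⟨Nat.zero_le _, ?_, ?_⟩
  · rw [hd.2.2.2.1]
  · have h0 := hd.2.2.2.1
    have h1 := hd.2.2.1 0 (Nat.zero_le _)
    omega

theorem mem_sp_iff {p : ℕ × ℕ} :
    p ∈ SP P ↔ p ∈ P ∧ ((∀ y' < p.2, (p.1, y') ∉ P) ∨ (∀ x' < p.1, (x', p.2) ∉ P)) :=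
  Finset.mem_filter

theorem sp_subset {p : ℕ × ℕ} (hp : p ∈ SP P) : p ∈ P := (Finset.mem_filter.1 hp).1

theorem rowfirst_mem_sp (hd : Good P h l r) {x y : ℕ} (hm : (x, y) ∈ P) (hy : y = l x) :
    (x, y) ∈ SP P := by
  refine mem_sp_iff.2 ⟨hm, Or.inl ?_⟩
  intro y' hy' hmem
  have hmem' : (x, y') ∈ P := hmem
  have := ((mem_iff hd).1 hmem').2.1
  omega

theorem fc_mem_sp {x y : ℕ} (hm : (x, y) ∈ P) (hfc : ∀ x' < x, (x', y) ∉ P) :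
    (x, y) ∈ SP P :=
  mem_sp_iff.2 ⟨hm, Or.inr hfc⟩

theorem root_sp (hd : Good P h l r) : ((0, 0) : ℕ × ℕ) ∈ SP P :=
  fc_mem_sp (root_mem hd) (fun x' hx' => absurd hx' (Nat.not_lt_zero _))

theorem sp_cases (hd : Good P h l r) {x y : ℕ} (hsp : (x, y) ∈ SP P) :
    y = l x ∨ (∀ x' < x, (x', y) ∉ P) := by
  obtain ⟨hm, hor⟩ := mem_sp_iff.1 hsp
  rcases hor with hfirst | hfc
  · left
    obtain ⟨hx, hl, hr⟩ := (mem_iff hd).1 hm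
    rcases Nat.lt_or_ge (l x) y with hlt | hge
    · exfalso
      exact hfirst (l x) hlt ((mem_iff hd).2 ⟨hx, le_refl _, hd.2.2.1 x hx⟩)
    · omega
  · right; exact hfc

theorem fc_l_lt (hd : Good P h l r) {x y : ℕ} (hm : (x, y) ∈ P)
    (hfc : ∀ x' < x, (x', y) ∉ P) (hy : 1 ≤ y) : l x < y := by
  obtain ⟨hx, hl, hr⟩ := (mem_iff hd).1 hm
  rcases Nat.lt_or_ge (l x) y with hlt | hge
  · exact hlt
  · exfalso
    have hlx : l x = y := by omega
    match x, hfc with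
    | 0, hfc => have := hd.2.2.2.1; omega
    | (n+1), hfc =>
      apply hfc n (by omega)
      rw [mem_iff hd]
      refine ⟨by omega, ?_, ?_⟩
      · have := (hd.2.2.2.2 n (by omega)).1; omega
      · have := (hd.2.2.2.2 n (by omega)).2.2; omega

theorem col_convex (hd : Good P h l r) {x t u v : ℕ} (h1 : (x, t) ∈ P) (h2 : (x, v) ∈ P)
    (h3 : t ≤ u) (h4 : u ≤ v) : (x, u) ∈ P := by
  obtain ⟨ha, hb, hc⟩ := (mem_iff hd).1 h1
  obtain ⟨hd1, he, hf⟩ := (mem_iff hd).1 h2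
  exact (mem_iff hd).2 ⟨ha, by omega, by omega⟩

theorem row_convex (hd : Good P h l r) {t u v y : ℕ} (h1 : (t, y) ∈ P) (h2 : (v, y) ∈ P)
    (h3 : t ≤ u) (h4 : u ≤ v) : (u, y) ∈ P := by
  obtain ⟨ha, hb, hc⟩ := (mem_iff hd).1 h1
  obtain ⟨hd1, he, hf⟩ := (mem_iff hd).1 h2
  have hu : u ≤ h := le_trans h4 hd1
  refine (mem_iff hd).2 ⟨hu, ?_, ?_⟩
  · exact le_trans (l_mono hd h4 hd1) he
  · exact le_trans hc (r_mono hd h3 hu)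

theorem exists_left_parent {A : Finset (ℕ × ℕ)} {p e0 : ℕ × ℕ} (hp : p ∈ A) (he0 : e0 ∈ A)
    (h2 : e0.2 = p.2) (h1 : e0.1 < p.1) : ∃ q, LeftParent A p q := by
  classical
  obtain ⟨b, hb, hmax⟩ := Finset.exists_max_image
    (A.filter fun t => t.2 = p.2 ∧ t.1 < p.1) Prod.fst
    ⟨e0, Finset.mem_filter.2 ⟨he0, h2, h1⟩⟩
  obtain ⟨hbA, hb2, hb1⟩ := Finset.mem_filter.1 hb
  exact ⟨b, hp, hbA, hb2, hb1, fun t ht ht2 ht1 => hmax t (Finset.mem_filter.2 ⟨ht, ht2, ht1⟩)⟩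

theorem exists_right_parent {A : Finset (ℕ × ℕ)} {p e0 : ℕ × ℕ} (hp : p ∈ A) (he0 : e0 ∈ A)
    (h1 : e0.1 = p.1) (h2 : e0.2 < p.2) : ∃ q, RightParent A p q := by
  classical
  obtain ⟨b, hb, hmax⟩ := Finset.exists_max_image
    (A.filter fun t => t.1 = p.1 ∧ t.2 < p.2) Prod.snd
    ⟨e0, Finset.mem_filter.2 ⟨he0, h1, h2⟩⟩
  obtain ⟨hbA, hb1, hb2⟩ := Finset.mem_filter.1 hb
  exact ⟨b, hp, hbA, hb1, hb2, fun t ht ht1 ht2 => hmax t (Finset.mem_filter.2 ⟨ht, ht1, ht2⟩)⟩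

theorem left_parent_imp (hd : Good P h l r) {x y : ℕ} {e : ℕ × ℕ} (hsp : (x, y) ∈ SP P)
    (hlp : LeftParent (SP P) (x, y) e) : y = l x := by
  rcases sp_cases hd hsp with h1 | hfc
  · exact h1
  · exfalso
    obtain ⟨_, heA, he2, he1, _⟩ := hlp
    have he2' : e.2 = y := he2
    have : (e.1, y) ∈ P := by
      have h3 := sp_subset heA
      rwa [show ((e.1 : ℕ), y) = e by rw [← he2']]
    exact hfc e.1 he1 this

theorem right_parent_imp (hd : Good P h l r) {x y : ℕ} {e : ℕ × ℕ}
    (hrp : RightParent (SP P) (x, y) e) : l x < y := by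
  obtain ⟨_, heA, he1, he2, _⟩ := hrp
  have he1' : e.1 = x := he1
  have he2' : e.2 < y := he2
  have : (x, e.2) ∈ P := by
    have h3 := sp_subset heA
    rwa [show ((x : ℕ), e.2) = e by rw [← he1']]
  have := ((mem_iff hd).1 this).2.1
  omega

theorem lowest_root_or_left (hd : Good P h l r) {x y : ℕ} (hsp : (x, y) ∈ SP P)
    (hy : y = l x) : (x = 0 ∧ y = 0) ∨ ∃ e, LeftParent (SP P) (x, y) e := by
  cases x with
  | zero => left; have := hd.2.2.2.1; omega
  | succ n =>
    right
    have hm : (n + 1, y) ∈ P := sp_subset hsp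
    have hx : n + 1 ≤ h := ((mem_iff hd).1 hm).1
    have hnP : (n, y) ∈ P := by
      rw [mem_iff hd]
      refine ⟨by omega, ?_, ?_⟩
      · have := (hd.2.2.2.2 n (by omega)).1; omega
      · have := (hd.2.2.2.2 n (by omega)).2.2; omega
    have hex : ∃ m, (m, y) ∈ P := ⟨n, hnP⟩
    have hmP : (Nat.find hex, y) ∈ P := Nat.find_spec hex
    have hmSP : (Nat.find hex, y) ∈ SP P :=
      fc_mem_sp hmP (fun x' hx' => Nat.find_min hex hx')
    have hmle : Nat.find hex ≤ n := Nat.find_min' hex hnP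
    exact exists_left_parent hsp hmSP rfl (show Nat.find hex < n + 1 by omega)

theorem lt_imp_right (hd : Good P h l r) {x y : ℕ} (hsp : (x, y) ∈ SP P)
    (hlt : l x < y) : ∃ e, RightParent (SP P) (x, y) e := by
  have hm : (x, y) ∈ P := sp_subset hsp
  have hx : x ≤ h := ((mem_iff hd).1 hm).1
  have hlP : (x, l x) ∈ P := (mem_iff hd).2 ⟨hx, le_refl _, hd.2.2.1 x hx⟩
  have hlSP : (x, l x) ∈ SP P := rowfirst_mem_sp hd hlP rfl
  exact exists_right_parent hsp hlSP rfl hlt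

theorem recon (hd : Good P h l r) (z : ℕ × ℕ) :
    z ∈ P ↔ (∃ y' ≤ z.2, (z.1, y') ∈ SP P) ∧ (∃ x' ≤ z.1, (x', z.2) ∈ SP P) := by
  obtain ⟨x, y⟩ := z
  constructor
  · intro hm
    obtain ⟨hx, hl, hr⟩ := (mem_iff hd).1 hm
    constructor
    · exact ⟨l x, hl, rowfirst_mem_sp hd ((mem_iff hd).2 ⟨hx, le_refl _, hd.2.2.1 x hx⟩) rfl⟩
    · have hex : ∃ m, (m, y) ∈ P := ⟨x, hm⟩
      exact ⟨Nat.find hex, Nat.find_min' hex hm,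
        fc_mem_sp (Nat.find_spec hex) (fun x' hx' => Nat.find_min hex hx')⟩
  · rintro ⟨⟨y', hy', hspy⟩, ⟨x', hx', hspx⟩⟩
    have h1 : x ≤ h ∧ l x ≤ y' ∧ y' ≤ r x := (mem_iff hd).1 (sp_subset hspy)
    have h2 : x' ≤ h ∧ l x' ≤ y ∧ y ≤ r x' := (mem_iff hd).1 (sp_subset hspx)
    refine (mem_iff hd).2 ⟨h1.1, by omega, ?_⟩
    have h3 : r x' ≤ r x := r_mono hd hx' h1.1
    omega


theorem key {P Q : Finset (ℕ × ℕ)} {h h' : ℕ} {l r l' r' : ℕ → ℕ}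
    (hd : Good P h l r) (hd' : Good Q h' l' r')
    {f g : ℕ × ℕ → ℕ × ℕ}
    (hmf : ∀ p ∈ SP P, f p ∈ SP Q)
    (hmg : ∀ p ∈ SP Q, g p ∈ SP P)
    (hgf : ∀ p ∈ SP P, g (f p) = p)
    (hfg : ∀ p ∈ SP Q, f (g p) = p)
    (hLf : ∀ p ∈ SP P, ∀ q ∈ SP P, LeftParent (SP P) p q → LeftParent (SP Q) (f p) (f q))
    (hRf : ∀ p ∈ SP P, ∀ q ∈ SP P, RightParent (SP P) p q → RightParent (SP Q) (f p) (f q))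
    (hLg : ∀ p ∈ SP Q, ∀ q ∈ SP Q, LeftParent (SP Q) p q → LeftParent (SP P) (g p) (g q))
    (hRg : ∀ p ∈ SP Q, ∀ q ∈ SP Q, RightParent (SP Q) p q → RightParent (SP P) (g p) (g q))
    (hf0 : f (0, 0) = (0, 0))
    (y x : ℕ)
    (IH1 : ∀ y' < y, ∀ x' : ℕ,
      ((x', y') ∈ SP P → f (x', y') = (x', y')) ∧ ((x', y') ∈ SP Q → g (x', y') = (x', y')))
    (IH2 : ∀ x' < x,
      ((x', y) ∈ SP P → f (x', y) = (x', y)) ∧ ((x', y) ∈ SP Q → g (x', y) = (x', y)))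
    (hc : (x, y) ∈ SP P) :
    f (x, y) = (x, y) := by
  classical
  have hcP : (x, y) ∈ P := sp_subset hc
  by_cases hFC : ∀ x' < x, (x', y) ∉ P
  · -- column-first case
    rcases Nat.eq_zero_or_pos y with hy0 | hy1
    · subst hy0
      have hx0 : x = 0 := by
        by_contra hne
        exact hFC 0 (Nat.pos_of_ne_zero hne) (root_mem hd)
      subst hx0
      exact hf0
    · have hlx : l x < y := fc_l_lt hd hcP hFC hy1
      obtain ⟨⟨qx, qy⟩, hq⟩ := lt_imp_right hd hc hlx
      have hq1 : qx = x := hq.2.2.1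
      subst hq1
      have hq2 : qy < y := hq.2.2.2.1
      have hqA : (qx, qy) ∈ SP P := hq.2.1
      have hfq : f (qx, qy) = (qx, qy) := (IH1 qy hq2 qx).1 hqA
      have hrp' : RightParent (SP Q) (f (qx, y)) (qx, qy) := by
        have := hRf _ hc _ hqA hq
        rwa [hfq] at this
      rcases hF : f (qx, y) with ⟨a, w⟩
      rw [hF] at hrp'
      have ha : qx = a := hrp'.2.2.1
      subst ha
      have hw1 : qy < w := hrp'.2.2.2.1
      have hfcA' : (qx, w) ∈ SP Q := by
        have := hmf _ hc; rwa [hF] at this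
      rcases lt_trichotomy w y with hlt | heq | hgt
      · exfalso
        have hgc : g (qx, w) = (qx, w) := (IH1 w hlt qx).2 hfcA'
        have h4 := hgf _ hc
        rw [hF, hgc] at h4
        have h5 : w = y := congrArg Prod.snd h4
        omega
      · rw [heq]
      · exfalso
        have hqQ : (qx, qy) ∈ Q := by
          have := hmf _ hqA; rw [hfq] at this; exact sp_subset this
        have hwQ : (qx, w) ∈ Q := sp_subset hfcA'
        have hxyQ : (qx, y) ∈ Q := col_convex hd' hqQ hwQ (le_of_lt hq2) (le_of_lt hgt)
        have hex : ∃ m0, (m0, y) ∈ Q := ⟨qx, hxyQ⟩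
        obtain ⟨m, hmQ, hmmin, hmx⟩ :
            ∃ m, (m, y) ∈ Q ∧ (∀ x'' < m, (x'', y) ∉ Q) ∧ m ≤ qx :=
          ⟨Nat.find hex, Nat.find_spec hex, fun _ hh => Nat.find_min hex hh,
            Nat.find_min' hex hxyQ⟩
        have hmSP : (m, y) ∈ SP Q := fc_mem_sp hmQ hmmin
        have hlm : l' m < y := fc_l_lt hd' hmQ hmmin hy1
        obtain ⟨⟨q'x, q'y⟩, hq'⟩ := lt_imp_right hd' hmSP hlm
        have hq'1 : q'x = m := hq'.2.2.1
        subst hq'1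
        have hq'2 : q'y < y := hq'.2.2.2.1
        have hq'A : (q'x, q'y) ∈ SP Q := hq'.2.1
        have hgq' : g (q'x, q'y) = (q'x, q'y) := (IH1 q'y hq'2 q'x).2 hq'A
        have hsrp : RightParent (SP P) (g (q'x, y)) (q'x, q'y) := by
          have := hRg _ hmSP _ hq'A hq'
          rwa [hgq'] at this
        rcases hS : g (q'x, y) with ⟨b, v⟩
        rw [hS] at hsrp
        have hb : q'x = b := hsrp.2.2.1
        subst hb
        have hv1 : q'y < v := hsrp.2.2.2.1
        have hsA : (q'x, v) ∈ SP P := by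
          have := hmg _ hmSP; rwa [hS] at this
        rcases lt_trichotomy v y with h1 | h2 | h3
        · have hfs : f (q'x, v) = (q'x, v) := (IH1 v h1 q'x).1 hsA
          have h7 := hfg _ hmSP
          rw [hS, hfs] at h7
          have h8 : v = y := congrArg Prod.snd h7
          omega
        · subst h2
          have hsP : (q'x, v) ∈ P := sp_subset hsA
          have hmx2 : q'x = qx := by
            by_contra hne
            exact hFC q'x (by omega) hsP
          have h8 := hfg _ hmSP
          rw [hS] at h8
          rw [hmx2] at h8
          rw [hF] at h8
          have h9 : w = v := congrArg Prod.snd h8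
          omega
        · have hq'P : (q'x, q'y) ∈ P := by
            have h10 : (q'x, q'y) ∈ SP P := by rw [← hgq']; exact hmg _ hq'A
            exact sp_subset h10
          have hsP : (q'x, v) ∈ P := sp_subset hsA
          have hmyP : (q'x, y) ∈ P := col_convex hd hq'P hsP (le_of_lt hq'2) (le_of_lt h3)
          have hmx2 : q'x = qx := by
            by_contra hne
            exact hFC q'x (by omega) hmyP
          have h9 : y ≤ q'y := hsrp.2.2.2.2 (qx, y) hc (show qx = q'x by omega) (show y < v from h3)
          omega
  · -- row-first case
    push_neg at hFC
    obtain ⟨x0, hx0lt, hx0P⟩ := hFC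
    have hly : y = l x := by
      rcases sp_cases hd hc with h1 | h2
      · exact h1
      · exact absurd hx0P (h2 x0 hx0lt)
    have hex : ∃ m0, (m0, y) ∈ P := ⟨x0, hx0P⟩
    obtain ⟨m, hmP, hmmin, hmx⟩ :
        ∃ m, (m, y) ∈ P ∧ (∀ x'' < m, (x'', y) ∉ P) ∧ m ≤ x0 :=
      ⟨Nat.find hex, Nat.find_spec hex, fun _ hh => Nat.find_min hex hh,
        Nat.find_min' hex hx0P⟩
    have hmSP : (m, y) ∈ SP P := fc_mem_sp hmP hmmin
    obtain ⟨⟨dx, dy⟩, hdlp⟩ := exists_left_parent hc hmSP rfl (show m < x by omega)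
    have hd2 : dy = y := hdlp.2.2.1
    subst hd2
    have hd1 : dx < x := hdlp.2.2.2.1
    have hdA : (dx, dy) ∈ SP P := hdlp.2.1
    have hdmax : ∀ t ∈ SP P, t.2 = dy → t.1 < x → t.1 ≤ dx :=
      fun t ht h1 h2 => hdlp.2.2.2.2 t ht h1 h2
    have hfd : f (dx, dy) = (dx, dy) := (IH2 dx hd1).1 hdA
    have hlp' : LeftParent (SP Q) (f (x, dy)) (dx, dy) := by
      have := hLf _ hc _ hdA hdlp
      rwa [hfd] at this
    rcases hF : f (x, dy) with ⟨X, Y⟩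
    rw [hF] at hlp'
    have hY : dy = Y := hlp'.2.2.1
    subst hY
    have hXgt : dx < X := hlp'.2.2.2.1
    have hfcA' : (X, dy) ∈ SP Q := by
      have := hmf _ hc; rwa [hF] at this
    have hXQ : (X, dy) ∈ Q := sp_subset hfcA'
    have hdP : (dx, dy) ∈ P := sp_subset hdA
    have hdQ : (dx, dy) ∈ Q := by
      have := hmf _ hdA; rw [hfd] at this; exact sp_subset this
    have hcmax' : ∀ t ∈ SP Q, t.2 = dy → t.1 < X → t.1 ≤ dx :=
      fun t ht h1 h2 => hlp'.2.2.2.2 t ht h1 h2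
    have hxh : x ≤ h := (mem_iff hd).1 hcP |>.1
    have hXh' : X ≤ h' := (mem_iff hd').1 hXQ |>.1
    have hdxh : dx ≤ h := (mem_iff hd).1 hdP |>.1
    have hdxh' : dx ≤ h' := (mem_iff hd').1 hdQ |>.1
    have hldle : l dx ≤ dy := ((mem_iff hd).1 hdP).2.1
    by_cases hdl : l dx = dy
    · -- subcase α
      have hll : l (dx + 1) ≤ l x := l_mono hd (by omega) hxh
      have hll2 : l dx ≤ l (dx + 1) := l_mono hd (by omega) (by omega)
      have hstepl : l (dx + 1) = dy := by omega
      have hstep : (dx + 1, dy) ∈ P := by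
        rw [mem_iff hd]
        refine ⟨by omega, by omega, ?_⟩
        have h6 := l_le_r hd (dx + 1) (by omega)
        omega
      have hstepSP : (dx + 1, dy) ∈ SP P := rowfirst_mem_sp hd hstep hstepl.symm
      have hxe : x = dx + 1 := by
        by_contra hne
        have h7 : dx + 1 ≤ dx := hdmax _ hstepSP rfl (by omega)
        omega
      have hdl' : l' dx = dy := by
        rcases lowest_root_or_left hd hdA hdl.symm with ⟨hz1, hz2⟩ | ⟨e, he⟩
        · rw [hz1, l_zero hd']; omega
        · have h8 := hLf _ hdA _ he.2.1 he
          rw [hfd] at h8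
          exact (left_parent_imp hd' (by rw [← hfd]; exact hmf _ hdA) h8).symm
      have hXe : X = dx + 1 := by
        by_contra hne
        have h9 : dx + 1 < X := by omega
        have hstep' : (dx + 1, dy) ∈ Q := row_convex hd' hdQ hXQ (by omega) (by omega)
        have hstepl' : l' (dx + 1) = dy := by
          have h4 : l' (dx + 1) ≤ dy := ((mem_iff hd').1 hstep').2.1
          have h5 : l' dx ≤ l' (dx + 1) := l_mono hd' (by omega) (by omega)
          omega
        have h10 : dx + 1 ≤ dx := hcmax' _ (rowfirst_mem_sp hd' hstep' hstepl'.symm) rfl h9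
        omega
      rw [hxe, hXe]
    · -- subcase β
      have hldlt : l dx < dy := lt_of_le_of_ne hldle hdl
      obtain ⟨e, he⟩ := lt_imp_right hd hdA hldlt
      have hrp'd : RightParent (SP Q) (dx, dy) (f e) := by
        have := hRf _ hdA _ he.2.1 he
        rwa [hfd] at this
      have hl'd : l' dx < dy := right_parent_imp hd' hrp'd
      have hXrf : dy = l' X := by
        rcases sp_cases hd' hfcA' with h1 | h2
        · exact h1
        · exact absurd hdQ (h2 dx hXgt)
      have hxchar : ∀ u, u < x ↔ (u ≤ h ∧ l u < dy) := by
        intro u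
        constructor
        · intro hu
          refine ⟨by omega, ?_⟩
          rcases le_or_gt u dx with h1 | h2
          · have := l_mono hd h1 hdxh; omega
          · have hup : (u, dy) ∈ P := row_convex hd hdP hcP (by omega) (by omega)
            have hluy : l u ≤ dy := ((mem_iff hd).1 hup).2.1
            rcases Nat.lt_or_ge (l u) dy with h3 | h4
            · exact h3
            · exfalso
              have hlu : l u = dy := by omega
              have h11 : u ≤ dx := hdmax _ (rowfirst_mem_sp hd hup hlu.symm) rfl hu
              omega
        · rintro ⟨hu1, hu2⟩
          by_contra hcon
          have : l x ≤ l u := l_mono hd (by omega) hu1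
          omega
      have hXchar : ∀ u, u < X ↔ (u ≤ h' ∧ l' u < dy) := by
        intro u
        constructor
        · intro hu
          refine ⟨by omega, ?_⟩
          rcases le_or_gt u dx with h1 | h2
          · have := l_mono hd' h1 hdxh'; omega
          · have hup : (u, dy) ∈ Q := row_convex hd' hdQ hXQ (by omega) (by omega)
            have hluy : l' u ≤ dy := ((mem_iff hd').1 hup).2.1
            rcases Nat.lt_or_ge (l' u) dy with h3 | h4
            · exact h3
            · exfalso
              have hlu : l' u = dy := by omega
              have h11 : u ≤ dx := hcmax' _ (rowfirst_mem_sp hd' hup hlu.symm) rfl hu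
              omega
        · rintro ⟨hu1, hu2⟩
          by_contra hcon
          have : l' X ≤ l' u := l_mono hd' (by omega) hu1
          omega
      have htrans : ∀ u, (u ≤ h ∧ l u < dy) ↔ (u ≤ h' ∧ l' u < dy) := by
        intro u
        constructor
        · rintro ⟨hu1, hu2⟩
          have hbP : (u, l u) ∈ P := (mem_iff hd).2 ⟨hu1, le_refl _, l_le_r hd u hu1⟩
          have hbA : (u, l u) ∈ SP P := rowfirst_mem_sp hd hbP rfl
          have hfb : f (u, l u) = (u, l u) := (IH1 (l u) hu2 u).1 hbA
          have hbA' : (u, l u) ∈ SP Q := by rw [← hfb]; exact hmf _ hbA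
          have hbQ : (u, l u) ∈ Q := sp_subset hbA'
          have hl'u : l' u = l u := by
            rcases lowest_root_or_left hd hbA rfl with ⟨hz1, hz2⟩ | ⟨e', he'⟩
            · rw [hz1, l_zero hd', l_zero hd]
            · have h8 := hLf _ hbA _ he'.2.1 he'
              rw [hfb] at h8
              exact (left_parent_imp hd' hbA' h8).symm
          have hu1' : u ≤ h' := ((mem_iff hd').1 hbQ).1
          exact ⟨hu1', by omega⟩
        · rintro ⟨hu1, hu2⟩
          have hbQ : (u, l' u) ∈ Q := (mem_iff hd').2 ⟨hu1, le_refl _, l_le_r hd' u hu1⟩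
          have hbA' : (u, l' u) ∈ SP Q := rowfirst_mem_sp hd' hbQ rfl
          have hgb : g (u, l' u) = (u, l' u) := (IH1 (l' u) hu2 u).2 hbA'
          have hbA : (u, l' u) ∈ SP P := by rw [← hgb]; exact hmg _ hbA'
          have hbP : (u, l' u) ∈ P := sp_subset hbA
          have hlu : l u = l' u := by
            rcases lowest_root_or_left hd' hbA' rfl with ⟨hz1, hz2⟩ | ⟨e', he'⟩
            · rw [hz1, l_zero hd, l_zero hd']
            · have h8 := hLg _ hbA' _ he'.2.1 he'
              rw [hgb] at h8
              exact (left_parent_imp hd hbA h8).symm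
          have hu1' : u ≤ h := ((mem_iff hd).1 hbP).1
          exact ⟨hu1', by omega⟩
      have hxX : x = X := by
        have e1 := ((hxchar x).trans ((htrans x).trans (hXchar x).symm))
        have e2 := ((hxchar X).trans ((htrans X).trans (hXchar X).symm))
        omega
      rw [hxX]


theorem all_fixed {P Q : Finset (ℕ × ℕ)} {h h' : ℕ} {l r l' r' : ℕ → ℕ}
    (hd : Good P h l r) (hd' : Good Q h' l' r')
    {f g : ℕ × ℕ → ℕ × ℕ}
    (hmf : ∀ p ∈ SP P, f p ∈ SP Q)
    (hmg : ∀ p ∈ SP Q, g p ∈ SP P)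
    (hgf : ∀ p ∈ SP P, g (f p) = p)
    (hfg : ∀ p ∈ SP Q, f (g p) = p)
    (hLf : ∀ p ∈ SP P, ∀ q ∈ SP P, LeftParent (SP P) p q → LeftParent (SP Q) (f p) (f q))
    (hRf : ∀ p ∈ SP P, ∀ q ∈ SP P, RightParent (SP P) p q → RightParent (SP Q) (f p) (f q))
    (hLg : ∀ p ∈ SP Q, ∀ q ∈ SP Q, LeftParent (SP Q) p q → LeftParent (SP P) (g p) (g q))
    (hRg : ∀ p ∈ SP Q, ∀ q ∈ SP Q, RightParent (SP Q) p q → RightParent (SP P) (g p) (g q))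
    (hf0 : f (0, 0) = (0, 0)) (hg0 : g (0, 0) = (0, 0)) :
    ∀ y x : ℕ,
      ((x, y) ∈ SP P → f (x, y) = (x, y)) ∧ ((x, y) ∈ SP Q → g (x, y) = (x, y)) := by
  intro y
  induction y using Nat.strong_induction_on with
  | _ y IHy =>
    intro x
    induction x using Nat.strong_induction_on with
    | _ x IHx =>
      constructor
      · intro hc
        exact key hd hd' hmf hmg hgf hfg hLf hRf hLg hRg hf0 y x
          (fun y' hy' x' => IHy y' hy' x') (fun x' hx' => IHx x' hx') hc
      · intro hc
        refine key hd' hd hmg hmf hfg hgf hLg hRg hLf hRf hg0 y x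
          (fun y' hy' x' => ⟨(IHy y' hy' x').2, (IHy y' hy' x').1⟩)
          (fun x' hx' => ⟨(IHx x' hx').2, (IHx x' hx').1⟩) hc


end NATAux

theorem pp_injective_on_trees (P P' : Finset (ℕ × ℕ)) (hP : IsPP P) (hP' : IsPP P')
    (h : NATIso (SP P) (SP P')) : P = P' := by
  have hiso := h
  clear h
  classical
  obtain ⟨hh, l, r, hd1, hd2, hd3, hd4, hd5⟩ := hP
  have hd : NATAux.Good P hh l r := ⟨hd1, hd2, hd3, hd4, hd5⟩
  obtain ⟨hh', l', r', hd1', hd2', hd3', hd4', hd5'⟩ := hP'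
  have hd' : NATAux.Good P' hh' l' r' := ⟨hd1', hd2', hd3', hd4', hd5'⟩
  obtain ⟨f, hbij, hf0, hiso2⟩ := hiso
  set g := Function.invFunOn f (↑(SP P)) with hg_def
  have hmf : ∀ p ∈ SP P, f p ∈ SP P' := by
    intro p hp
    have := hbij.1 (Finset.mem_coe.2 hp)
    exact Finset.mem_coe.1 this
  have hgf : ∀ p ∈ SP P, g (f p) = p := by
    intro p hp
    exact hbij.injOn.leftInvOn_invFunOn (Finset.mem_coe.2 hp)
  have hfg : ∀ p ∈ SP P', f (g p) = p := by
    intro p hp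
    exact hbij.surjOn.rightInvOn_invFunOn (Finset.mem_coe.2 hp)
  have hmg : ∀ p ∈ SP P', g p ∈ SP P := by
    intro p hp
    exact Finset.mem_coe.1 (hbij.surjOn.mapsTo_invFunOn (Finset.mem_coe.2 hp))
  have hrootA : ((0, 0) : ℕ × ℕ) ∈ SP P := NATAux.root_sp hd
  have hg0 : g (0, 0) = (0, 0) := by
    conv_lhs => rw [← hf0]
    exact hgf _ hrootA
  have hLf : ∀ p ∈ SP P, ∀ q ∈ SP P, LeftParent (SP P) p q → LeftParent (SP P') (f p) (f q) :=
    fun p hp q hq hlp => ((hiso2 p hp q hq).1).1 hlp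
  have hRf : ∀ p ∈ SP P, ∀ q ∈ SP P, RightParent (SP P) p q → RightParent (SP P') (f p) (f q) :=
    fun p hp q hq hlp => ((hiso2 p hp q hq).2).1 hlp
  have hLg : ∀ p ∈ SP P', ∀ q ∈ SP P', LeftParent (SP P') p q → LeftParent (SP P) (g p) (g q) := by
    intro p hp q hq hlp
    have h1 := (hiso2 (g p) (hmg p hp) (g q) (hmg q hq)).1
    rw [hfg p hp, hfg q hq] at h1
    exact h1.2 hlp
  have hRg : ∀ p ∈ SP P', ∀ q ∈ SP P', RightParent (SP P') p q → RightParent (SP P) (g p) (g q) := by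
    intro p hp q hq hlp
    have h1 := (hiso2 (g p) (hmg p hp) (g q) (hmg q hq)).2
    rw [hfg p hp, hfg q hq] at h1
    exact h1.2 hlp
  have hfix := NATAux.all_fixed hd hd' hmf hmg hgf hfg hLf hRf hLg hRg hf0 hg0
  have hAA : SP P = SP P' := by
    ext p
    constructor
    · intro hp
      have h1 : f (p.1, p.2) = (p.1, p.2) := (hfix p.2 p.1).1 (by rw [Prod.mk.eta]; exact hp)
      rw [Prod.mk.eta] at h1
      rw [← h1]
      exact hmf _ hp
    · intro hp
      have h1 : g (p.1, p.2) = (p.1, p.2) := (hfix p.2 p.1).2 (by rw [Prod.mk.eta]; exact hp)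
      rw [Prod.mk.eta] at h1
      rw [← h1]
      exact hmg _ hp
  ext z
  rw [NATAux.recon hd z, NATAux.recon hd' z, hAA]
end
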